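/- arXiv:1606.08432 — 10 statements merged into one kernel-verified Lean document; each statement's English description precedes it below -/
import Mathlib

section
/- Let p ≥ 5 be a prime, let r be a non-negative integer, and let k be an integer with 0 ≤ k ≤ p-1. Then C(2rp+2k, rp+k) ≡ C(2r,r)·C(2k,k)·(1 + 2rp·(H_{2k} - H_k)) (mod p²), as a congruence of rational numbers. -/
/-- Congruence of rational numbers modulo `p^m`: `a ≡ b (mod p^m)` means
`a - b = p^m · (s/t)` with `p` not dividing `t`. -/
def ratCongr (p m : ℕ) (a b : ℚ) : Prop :=
  ∃ s t : ℤ, ¬ ((p : ℤ) ∣ t) ∧ (a - b) * (t : ℚ) = (p : ℚ) ^ m * (s : ℚ)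

/-- The `n`-th harmonic number `H_n = ∑_{j=1}^n 1/j`, with `H_0 = 0`. -/
def H (n : ℕ) : ℚ := ∑ j ∈ Finset.range n, 1 / (j + 1 : ℚ)


namespace CBS
open Finset

variable {p : ℕ}
open Finset


/-- product of non-multiples of `p` up to `n` -/
def FN (p n : ℕ) : ℕ := ∏ i ∈ range n, if p ∣ (i + 1) then 1 else (i + 1)

/-- partial block product -/
def BN (p a j : ℕ) : ℕ := ∏ i ∈ range j, (a * p + i + 1)

theorem fact_eq (hp : 0 < p) (n : ℕ) :
    (Nat.factorial n : ℚ) = (p : ℚ) ^ (n / p) * (Nat.factorial (n / p) : ℚ) * (FN p n : ℚ) := by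
  induction n with
  | zero => simp [FN]
  | succ n ih =>
    rw [Nat.factorial_succ, Nat.succ_div, FN, Finset.prod_range_succ, ← FN]
    by_cases h : p ∣ (n + 1)
    · have hq : (n+1)/p = n/p + 1 := by rw [Nat.succ_div, if_pos h]
      have h2 : p * ((n+1)/p) = n + 1 := Nat.mul_div_cancel' h
      rw [hq] at h2
      simp only [if_pos h]
      rw [Nat.factorial_succ]
      push_cast [ih]
      rw [show ((n:ℚ)+1) = (p:ℚ)*((n/p : ℕ)+1) from by exact_mod_cast h2.symm]
      push_cast
      ring
    · simp only [if_neg h]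
      push_cast [ih]
      ring

theorem FN_not_dvd (hp : p.Prime) (n : ℕ) : ¬ p ∣ FN p n := by
  intro h
  rw [FN, hp.prime.dvd_finset_prod_iff] at h
  obtain ⟨i, _, hi⟩ := h
  by_cases hd : p ∣ (i+1)
  · rw [if_pos hd] at hi
    have := Nat.le_of_dvd one_pos hi
    have := hp.two_le
    omega
  · rw [if_neg hd] at hi; exact hd hi

theorem not_dvd_of_le (hp : 1 < p) {j : ℕ} (hj0 : 0 < j) (hj : j ≤ p - 1) : ¬ p ∣ j := by
  intro h
  have := Nat.le_of_dvd hj0 h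
  omega

theorem FN_block (n j : ℕ) (hj : j ≤ p - 1) (hp : 1 < p) :
    FN p (n * p + j) = FN p (n * p) * BN p n j := by
  rw [FN, Finset.prod_range_add, ← FN, BN]
  congr 1
  apply Finset.prod_congr rfl
  intro i hi
  rw [Finset.mem_range] at hi
  have hnd : ¬ p ∣ (n * p + i + 1) := by
    intro hd
    have : p ∣ (i + 1) := by
      have he : n * p + i + 1 = p * n + (i + 1) := by ring
      rw [he] at hd
      exact (Nat.dvd_add_right ⟨n, rfl⟩).mp hd
    have := Nat.le_of_dvd (by omega) this
    omega
  rw [if_neg hnd]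

theorem FN_mul_succ (n : ℕ) (hp : 1 < p) :
    FN p ((n+1) * p) = FN p (n * p) * BN p n (p - 1) := by
  have h1 : (n+1) * p = (n * p + (p-1)) + 1 := by
    have h2 : (n+1) * p = n * p + p := by ring
    omega
  rw [h1, FN, Finset.prod_range_succ, ← FN, if_pos, mul_one]
  · exact FN_block n (p-1) le_rfl hp
  · have : n * p + (p - 1) + 1 = (n+1) * p := by omega
    rw [this]; exact dvd_mul_left p (n+1)

theorem fact_eq_FN (hp : 1 < p) {j : ℕ} (hj : j ≤ p - 1) : FN p j = Nat.factorial j := by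
  induction j with
  | zero => simp [FN]
  | succ n ih =>
    rw [FN, Finset.prod_range_succ, ← FN, if_neg (not_dvd_of_le hp (by omega) hj),
      ih (by omega), Nat.factorial_succ]
    ring


/-- `x` is `p`-integral. -/
def PI (p : ℕ) (x : ℚ) : Prop := ∃ s t : ℤ, ¬ ((p : ℤ) ∣ t) ∧ x * (t : ℚ) = (s : ℚ)

/-- congruence mod `p^m` for p-integral difference quotients -/
def Cong (p m : ℕ) (a b : ℚ) : Prop := ∃ z : ℚ, PI p z ∧ a - b = (p : ℚ) ^ m * z

section basic
variable (hp : p.Prime)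
include hp

theorem not_dvd_one : ¬ ((p : ℤ) ∣ (1:ℤ)) := by
  intro h
  have := Int.le_of_dvd one_pos h
  have := hp.two_le
  omega

theorem PI.intCast (n : ℤ) : PI p (n : ℚ) :=
  ⟨n, 1, not_dvd_one hp, by push_cast; ring⟩

theorem PI.natCast (n : ℕ) : PI p (n : ℚ) := PI.intCast hp n

theorem PI.zero : PI p 0 := by simpa using PI.intCast hp 0

theorem PI.one : PI p 1 := by simpa using PI.intCast hp 1

theorem int_prime : Prime (p : ℤ) := by rw [Int.prime_iff_natAbs_prime]; simpa using hp

theorem PI.add {x y : ℚ} (hx : PI p x) (hy : PI p y) : PI p (x + y) := by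
  obtain ⟨s, t, ht, hxt⟩ := hx
  obtain ⟨u, v, hv, hyv⟩ := hy
  refine ⟨s * v + u * t, t * v, ?_, ?_⟩
  · intro h
    rcases (int_prime hp).dvd_mul.mp h with h | h <;> [exact ht h; exact hv h]
  · push_cast
    calc (x + y) * (t * v) = (x * t) * v + (y * v) * t := by ring
    _ = (s:ℚ) * v + u * t := by rw [hxt, hyv]

theorem PI.mul {x y : ℚ} (hx : PI p x) (hy : PI p y) : PI p (x * y) := by
  obtain ⟨s, t, ht, hxt⟩ := hx
  obtain ⟨u, v, hv, hyv⟩ := hy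
  refine ⟨s * u, t * v, ?_, ?_⟩
  · intro h
    rcases (int_prime hp).dvd_mul.mp h with h | h <;> [exact ht h; exact hv h]
  · push_cast
    calc x * y * (t * v) = (x * t) * (y * v) := by ring
    _ = (s:ℚ) * u := by rw [hxt, hyv]

theorem PI.pow {x : ℚ} (hx : PI p x) (n : ℕ) : PI p (x ^ n) := by
  induction n with
  | zero => simpa using PI.one hp
  | succ n ih => rw [pow_succ]; exact ih.mul hp hx

theorem PI.neg {x : ℚ} (hx : PI p x) : PI p (-x) := by
  obtain ⟨s, t, ht, hxt⟩ := hx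
  exact ⟨-s, t, ht, by push_cast; rw [← hxt]; ring⟩

theorem PI.sub {x y : ℚ} (hx : PI p x) (hy : PI p y) : PI p (x - y) := by
  simpa [sub_eq_add_neg] using hx.add hp (hy.neg hp)

theorem PI.sum {α : Type*} (s : Finset α) (f : α → ℚ) (h : ∀ a ∈ s, PI p (f a)) :
    PI p (∑ a ∈ s, f a) := by
  classical
  induction s using Finset.induction with
  | empty => simpa using PI.zero hp
  | insert _ _ hni ih =>
    rw [Finset.sum_insert hni]
    exact (h _ (Finset.mem_insert_self _ _)).add hp
      (ih fun a ha => h a (Finset.mem_insert_of_mem ha))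

theorem PI.prod {α : Type*} (s : Finset α) (f : α → ℚ) (h : ∀ a ∈ s, PI p (f a)) :
    PI p (∏ a ∈ s, f a) := by
  classical
  induction s using Finset.induction with
  | empty => simpa using PI.one hp
  | insert _ _ hni ih =>
    rw [Finset.prod_insert hni]
    exact (h _ (Finset.mem_insert_self _ _)).mul hp
      (ih fun a ha => h a (Finset.mem_insert_of_mem ha))

theorem PI.one_div_nat {j : ℕ} (h : ¬ p ∣ j) : PI p (1 / (j : ℚ)) := by
  have hj : j ≠ 0 := by rintro rfl; exact h (dvd_zero p)
  refine ⟨1, (j : ℤ), ?_, ?_⟩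
  · exact_mod_cast fun hd => h (Int.ofNat_dvd.mp hd)
  · push_cast
    field_simp

theorem PI.div_nat {x : ℚ} (hx : PI p x) {j : ℕ} (h : ¬ p ∣ j) : PI p (x / j) := by
  have := hx.mul hp (PI.one_div_nat hp h)
  simpa [div_eq_mul_inv, one_div] using this

-- Cong lemmas

theorem Cong.refl (m : ℕ) (a : ℚ) : Cong p m a a :=
  ⟨0, PI.zero hp, by ring⟩

theorem Cong.of_eq {m : ℕ} {a b : ℚ} (h : a = b) : Cong p m a b :=
  h ▸ Cong.refl hp m a

theorem Cong.symm {m : ℕ} {a b : ℚ} (h : Cong p m a b) : Cong p m b a := by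
  obtain ⟨z, hz, he⟩ := h
  exact ⟨-z, hz.neg hp, by rw [← neg_sub, he]; ring⟩

theorem Cong.trans {m : ℕ} {a b c : ℚ} (h1 : Cong p m a b) (h2 : Cong p m b c) :
    Cong p m a c := by
  obtain ⟨z, hz, he⟩ := h1
  obtain ⟨w, hw, he'⟩ := h2
  exact ⟨z + w, hz.add hp hw, by rw [mul_add, ← he, ← he']; ring⟩

theorem Cong.add {m : ℕ} {a b c d : ℚ} (h1 : Cong p m a b) (h2 : Cong p m c d) :
    Cong p m (a + c) (b + d) := by
  obtain ⟨z, hz, he⟩ := h1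
  obtain ⟨w, hw, he'⟩ := h2
  exact ⟨z + w, hz.add hp hw, by rw [mul_add, ← he, ← he']; ring⟩

theorem Cong.mul {m : ℕ} {a b c d : ℚ} (h1 : Cong p m a b) (h2 : Cong p m c d)
    (hb : PI p b) (hc : PI p c) : Cong p m (a * c) (b * d) := by
  obtain ⟨z, hz, he⟩ := h1
  obtain ⟨w, hw, he'⟩ := h2
  refine ⟨z * c + b * w, (hz.mul hp hc).add hp (hb.mul hp hw), ?_⟩
  have : a * c - b * d = (a - b) * c + b * (c - d) := by ring
  rw [this, he, he']; ring

theorem Cong.scale {m : ℕ} {a b : ℚ} (c : ℚ) (hc : PI p c) (h : Cong p m a b) :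
    Cong p m (c * a) (c * b) := by
  obtain ⟨z, hz, he⟩ := h
  exact ⟨c * z, hc.mul hp hz, by rw [← mul_sub, he]; ring⟩

theorem Cong.weaken {a b : ℚ} (h : Cong p 2 a b) : Cong p 1 a b := by
  obtain ⟨z, hz, he⟩ := h
  exact ⟨(p:ℚ) * z, (PI.natCast hp p).mul hp hz, by rw [he]; ring⟩

/-- strip a `p` multiple mod `p` -/
theorem Cong.strip {x w : ℚ} (hw : PI p w) : Cong p 1 (x + (p:ℚ) * w) x :=
  ⟨w, hw, by ring⟩

theorem Cong.cancel_nat {m : ℕ} {a b : ℚ} (u : ℕ) (hu : ¬ p ∣ u)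
    (h : Cong p m (a * u) (b * u)) : Cong p m a b := by
  obtain ⟨z, hz, he⟩ := h
  have hu0' : u ≠ 0 := by rintro rfl; exact hu (dvd_zero p)
  have hu0 : (u : ℚ) ≠ 0 := Nat.cast_ne_zero.mpr hu0'
  refine ⟨z / u, PI.div_nat hp hz hu, ?_⟩
  have : (a - b) * u = (p:ℚ)^m * z := by rw [← he]; ring
  field_simp at this ⊢
  linear_combination this

theorem Cong.p_scale {x y : ℚ} (c : ℚ) (hc : PI p c) (h : Cong p 1 x y) :
    Cong p 2 ((p:ℚ) * c * x) ((p:ℚ) * c * y) := by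
  obtain ⟨z, hz, he⟩ := h
  refine ⟨c * z, hc.mul hp hz, ?_⟩
  have : (p:ℚ) * c * x - (p:ℚ) * c * y = (p:ℚ) * c * (x - y) := by ring
  rw [this, he]; ring

end basic

section main
variable (hp : p.Prime) (hp5 : 5 ≤ p)
include hp

theorem PI_H {j : ℕ} (hj : j ≤ p - 1) : PI p (H j) := by
  have h2 := hp.two_le
  rw [H]
  refine PI.sum hp _ _ ?_
  intro i hi
  rw [Finset.mem_range] at hi
  have hc : ((i:ℚ)+1) = ((i+1 : ℕ):ℚ) := by push_cast; ring
  rw [one_div, hc, ← one_div]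
  exact PI.one_div_nat hp (not_dvd_of_le hp.one_lt (by omega) (by omega))

include hp5 in
theorem H_pred_cong : Cong p 1 (H (p-1)) 0 := by
  have h2 := hp.two_le
  set g : ℕ → ℚ := fun j => (1/((j+1 : ℕ):ℚ)) * (1/((p-1-1-j+1 : ℕ):ℚ)) with hg
  have key : 2 * H (p-1) = (p:ℚ) * ∑ j ∈ range (p-1), g j := by
    have refl := Finset.sum_range_reflect (fun j => 1 / ((j:ℚ) + 1)) (p-1)
    rw [H, two_mul]
    nth_rewrite 1 [← refl]
    rw [← Finset.sum_add_distrib, Finset.mul_sum]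
    refine Finset.sum_congr rfl ?_
    intro j hj
    rw [Finset.mem_range] at hj
    have hle : (j+1) + (p-1-1-j+1) = p := by omega
    have hx : ((j:ℚ)+1) = ((j+1:ℕ):ℚ) := by push_cast; ring
    have hy : (((p-1-1-j:ℕ):ℚ)+1) = ((p-1-1-j+1:ℕ):ℚ) := by push_cast; ring
    have hxne : ((j+1:ℕ):ℚ) ≠ 0 := by positivity
    have hyne : ((p-1-1-j+1:ℕ):ℚ) ≠ 0 := by positivity
    have hpq : ((j+1:ℕ):ℚ) + ((p-1-1-j+1:ℕ):ℚ) = (p:ℚ) := by exact_mod_cast hle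
    rw [hy, hx, hg]
    simp only
    rw [← hpq]
    field_simp
  have hPIg : PI p (∑ j ∈ range (p-1), g j) := by
    refine PI.sum hp _ _ ?_
    intro j hj
    rw [Finset.mem_range] at hj
    exact (PI.one_div_nat hp (not_dvd_of_le hp.one_lt (by omega) (by omega))).mul hp
      (PI.one_div_nat hp (not_dvd_of_le hp.one_lt (by omega) (by omega)))
  refine ⟨(∑ j ∈ range (p-1), g j) / 2, hPIg.div_nat hp (fun hd => by have := Nat.le_of_dvd two_pos hd; omega), ?_⟩
  rw [sub_zero, pow_one]
  have h2ne : (2:ℚ) ≠ 0 := two_ne_zero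
  field_simp
  linear_combination key

theorem BN_cong (a : ℕ) {j : ℕ} (hj : j ≤ p - 1) :
    Cong p 2 ((BN p a j : ℕ) : ℚ) ((Nat.factorial j : ℚ) * (1 + (a:ℚ) * p * H j)) := by
  have h2 := hp.two_le
  induction j with
  | zero =>
    refine Cong.of_eq hp ?_
    simp [BN, H, Nat.factorial]
  | succ n ih =>
    have hn : n ≤ p - 1 := by omega
    have hPIb : PI p ((Nat.factorial n : ℚ) * (1 + (a:ℚ) * p * H n)) :=
      (PI.natCast hp _).mul hp ((PI.one hp).add hp
        (((PI.natCast hp a).mul hp (PI.natCast hp p)).mul hp (PI_H hp hn)))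
    have hcast : ((BN p a (n+1) : ℕ) : ℚ) = ((BN p a n : ℕ) : ℚ) * ((a:ℚ)*p + n + 1) := by
      rw [BN, Finset.prod_range_succ, ← BN]
      push_cast
      ring
    have step1 : Cong p 2 ((BN p a (n+1) : ℕ) : ℚ)
        (((Nat.factorial n : ℚ) * (1 + (a:ℚ) * p * H n)) * ((a:ℚ)*p + n + 1)) := by
      rw [hcast]
      refine Cong.mul hp (ih hn) (Cong.refl hp 2 _) hPIb ?_
      have : ((a:ℚ)*p + n + 1) = ((a*p + n + 1 : ℕ) : ℚ) := by push_cast; ring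
      rw [this]; exact PI.natCast hp _
    refine step1.trans hp ?_
    refine ⟨(a:ℚ)^2 * (Nat.factorial n : ℚ) * H n,
      (((PI.natCast hp a).pow hp 2).mul hp (PI.natCast hp _)).mul hp (PI_H hp hn), ?_⟩
    have hH : H (n+1) = H n + 1/((n:ℚ)+1) := by
      rw [H, H, Finset.sum_range_succ]
    have hne : ((n:ℚ)+1) ≠ 0 := by positivity
    rw [hH, Nat.factorial_succ]
    push_cast
    field_simp
    ring

include hp5 in
theorem BN_full (a : ℕ) :
    Cong p 2 ((BN p a (p-1) : ℕ) : ℚ) ((Nat.factorial (p-1) : ℚ)) := by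
  refine (BN_cong hp a le_rfl).trans hp ?_
  obtain ⟨z, hz, he⟩ := H_pred_cong hp hp5
  rw [sub_zero, pow_one] at he
  refine ⟨(Nat.factorial (p-1) : ℚ) * a * z,
    ((PI.natCast hp _).mul hp (PI.natCast hp a)).mul hp hz, ?_⟩
  rw [he]
  ring

include hp5 in
theorem FN_mul_cong (n : ℕ) :
    Cong p 2 ((FN p (n*p) : ℕ) : ℚ) ((Nat.factorial (p-1) : ℚ)^n) := by
  induction n with
  | zero => refine Cong.of_eq hp ?_; simp [FN]
  | succ n ih =>
    have hcast : ((FN p ((n+1)*p) : ℕ) : ℚ) = ((FN p (n*p) : ℕ) : ℚ) * ((BN p n (p-1) : ℕ) : ℚ) := by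
      rw [FN_mul_succ n hp.one_lt]; push_cast; ring
    rw [hcast, pow_succ]
    exact Cong.mul hp ih (BN_full hp hp5 n) ((PI.natCast hp _).pow hp n) (PI.natCast hp _)

include hp5 in
theorem FN_main (n : ℕ) {j : ℕ} (hj : j ≤ p - 1) :
    Cong p 2 ((FN p (n*p+j) : ℕ) : ℚ)
      ((Nat.factorial (p-1) : ℚ)^n * (Nat.factorial j : ℚ) * (1 + (n:ℚ) * p * H j)) := by
  have hcast : ((FN p (n*p+j) : ℕ) : ℚ) = ((FN p (n*p) : ℕ) : ℚ) * ((BN p n j : ℕ) : ℚ) := by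
    rw [FN_block n j hj hp.one_lt]; push_cast; ring
  rw [hcast]
  refine (Cong.mul hp (FN_mul_cong hp hp5 n) (BN_cong hp n hj)
    ((PI.natCast hp _).pow hp n) (PI.natCast hp _)).trans hp (Cong.of_eq hp (by ring))

include hp5 in
theorem H_split {k : ℕ} (hk1 : p ≤ 2*k) (hk : k ≤ p - 1) :
    ∃ G : ℚ, PI p G ∧ H (2*k) = 1/(p:ℚ) + G := by
  have h2 := hp.two_le
  have hmem : p - 1 ∈ range (2*k) := by rw [Finset.mem_range]; omega
  refine ⟨∑ j ∈ (range (2*k)).erase (p-1), 1 / ((j:ℚ) + 1), ?_, ?_⟩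
  · refine PI.sum hp _ _ ?_
    intro j hj
    rw [Finset.mem_erase, Finset.mem_range] at hj
    have hc : ((j:ℚ)+1) = ((j+1 : ℕ):ℚ) := by push_cast; ring
    rw [one_div, hc, ← one_div]
    refine PI.one_div_nat hp ?_
    intro hd
    obtain ⟨c, hcc⟩ := hd
    rcases Nat.lt_or_ge c 2 with hc2 | hc2
    · interval_cases c <;> omega
    · have : p * 2 ≤ p * c := Nat.mul_le_mul_left p hc2
      omega
  · rw [H, ← Finset.add_sum_erase _ _ hmem]
    congr 1
    have : ((p-1:ℕ):ℚ) + 1 = (p:ℚ) := by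
      push_cast [Nat.cast_sub (by omega : 1 ≤ p)]
      ring
    rw [this]

end main

theorem main_theorem (p r k : ℕ) (hp : p.Prime) (hp5 : 5 ≤ p) (hk : k ≤ p - 1) :
    Cong p 2 ((2 * r * p + 2 * k).choose (r * p + k) : ℚ)
      (((2 * r).choose r : ℚ) * ((2 * k).choose k : ℚ) *
        (1 + 2 * r * p * (H (2 * k) - H k))) := by
  have h2 := hp.two_le
  have hppos : 0 < p := hp.pos
  have hpne : (p:ℚ) ≠ 0 := Nat.cast_ne_zero.mpr (by omega)
  have hkp : k < p := by omega
  -- abbreviations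
  set a : ℚ := ((2 * r * p + 2 * k).choose (r * p + k) : ℚ) with ha
  set T : ℚ := (1 + 2 * r * p * (H (2 * k) - H k)) with hT
  set W : ℚ := (Nat.factorial (p-1) : ℚ) with hW
  set C : ℚ := ((2 * r).choose r : ℚ) with hC
  set Ck : ℚ := ((2 * k).choose k : ℚ) with hCk0
  -- linear helper
  have e1 : 2*r*p = r*p + r*p := by ring
  -- derived choose/factorial identities over ℚ
  have hle1 : r*p+k ≤ 2*r*p+2*k := by omega
  have hsub1 : (2*r*p+2*k) - (r*p+k) = r*p+k := by omega
  have hA : a * (Nat.factorial (r*p+k) : ℚ)^2 = (Nat.factorial (2*r*p+2*k) : ℚ) := by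
    have := Nat.choose_mul_factorial_mul_factorial hle1
    rw [hsub1] at this
    have := congrArg (fun x : ℕ => (x : ℚ)) this
    push_cast at this
    rw [ha]
    push_cast
    linear_combination this
  have hCr : C * (Nat.factorial r : ℚ)^2 = (Nat.factorial (2*r) : ℚ) := by
    have := Nat.choose_mul_factorial_mul_factorial (by omega : r ≤ 2*r)
    rw [(by omega : 2*r - r = r)] at this
    have := congrArg (fun x : ℕ => (x : ℚ)) this
    push_cast at this
    rw [hC]; push_cast; linear_combination this
  have hCkk : Ck * (Nat.factorial k : ℚ)^2 = (Nat.factorial (2*k) : ℚ) := by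
    have := Nat.choose_mul_factorial_mul_factorial (by omega : k ≤ 2*k)
    rw [(by omega : 2*k - k = k)] at this
    have := congrArg (fun x : ℕ => (x : ℚ)) this
    push_cast at this
    rw [hCk0]; push_cast; linear_combination this
  -- factorial decompositions
  have hdiv_nn : (r*p+k)/p = r := by
    rw [(by ring : r*p+k = k + p*r), Nat.add_mul_div_left _ _ hppos,
      Nat.div_eq_of_lt hkp, Nat.zero_add]
  have E2 : (Nat.factorial (r*p+k) : ℚ)
      = (p:ℚ)^r * (Nat.factorial r : ℚ) * (FN p (r*p+k) : ℚ) := by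
    have := fact_eq hppos (r*p+k)
    rwa [hdiv_nn] at this
  have hFk : FN p k = Nat.factorial k := fact_eq_FN hp.one_lt hk
  have hndFNr : ¬ p ∣ FN p (r*p+k) := FN_not_dvd hp _
  have hndk : ¬ p ∣ Nat.factorial k := by
    intro hd
    have := (Nat.Prime.dvd_factorial hp).mp hd
    omega
  have hndu : ¬ p ∣ (FN p (r*p+k))^2 * (Nat.factorial k)^2 := by
    intro hd
    rcases (Nat.Prime.dvd_mul hp).mp hd with hd | hd
    · exact hndFNr (hp.dvd_of_dvd_pow hd)
    · exact hndk (hp.dvd_of_dvd_pow hd)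
  -- p-integrality helpers
  have piW : PI p W := PI.natCast hp _
  have piHk : PI p (H k) := PI_H hp hk
  have pin : ∀ n : ℕ, PI p ((n:ℚ)) := PI.natCast hp
  -- cancel common unit
  refine Cong.cancel_nat hp ((FN p (r*p+k))^2 * (Nat.factorial k)^2) hndu ?_
  rcases Nat.lt_or_ge (2*k) p with hcase | hcase
  -- ================== CASE A : 2k < p ==================
  · have h2kle : 2*k ≤ p - 1 := by omega
    have hdiv1 : (2*r*p+2*k)/p = 2*r := by
      rw [(by ring : 2*r*p+2*k = 2*k + p*(2*r)), Nat.add_mul_div_left _ _ hppos,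
        Nat.div_eq_of_lt hcase, Nat.zero_add]
    have E1 : (Nat.factorial (2*r*p+2*k) : ℚ)
        = (p:ℚ)^(2*r) * (Nat.factorial (2*r) : ℚ) * (FN p (2*r*p+2*k) : ℚ) := by
      have := fact_eq hppos (2*r*p+2*k)
      rwa [hdiv1] at this
    -- key identity
    have key : a * (FN p (r*p+k) : ℚ)^2 = C * (FN p (2*r*p+2*k) : ℚ) := by
      have hne : ((p:ℚ)^r * (Nat.factorial r : ℚ))^2 ≠ 0 := by positivity
      apply mul_left_cancel₀ hne
      rw [E2] at hA
      rw [E1] at hA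
      linear_combination hA - (p:ℚ)^(2*r) * (FN p (2*r*p+2*k) : ℚ) * hCr
    -- congruences
    have cF1 : Cong p 2 ((FN p (2*r*p+2*k) : ℕ) : ℚ)
        (W^(2*r) * (Nat.factorial (2*k) : ℚ) * (1 + ((2*r:ℕ):ℚ) * p * H (2*k))) :=
      FN_main hp hp5 (2*r) h2kle
    have cFr : Cong p 2 ((FN p (r*p+k) : ℕ) : ℚ)
        (W^r * (Nat.factorial k : ℚ) * (1 + (r:ℚ) * p * H k)) := FN_main hp hp5 r hk
    have piH2 : PI p (H (2*k)) := PI_H hp h2kle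
    have piT : PI p T := by
      rw [hT]
      refine (PI.one hp).add hp (PI.mul hp ?_ (piH2.sub hp piHk))
      have : (2 * (r:ℚ) * p) = ((2*r*p : ℕ):ℚ) := by push_cast; ring
      rw [this]; exact pin _
    have pib1 : PI p (W^(2*r) * (Nat.factorial (2*k) : ℚ) * (1 + ((2*r:ℕ):ℚ) * p * H (2*k))) :=
      ((piW.pow hp _).mul hp (pin _)).mul hp ((PI.one hp).add hp
        (((pin _).mul hp (pin _)).mul hp piH2))
    have pibr : PI p (W^r * (Nat.factorial k : ℚ) * (1 + (r:ℚ) * p * H k)) :=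
      ((piW.pow hp _).mul hp (pin _)).mul hp ((PI.one hp).add hp
        (((pin _).mul hp (pin _)).mul hp piHk))
    have cFr2 : Cong p 2 (((FN p (r*p+k) : ℕ) : ℚ)^2)
        ((W^r * (Nat.factorial k : ℚ) * (1 + (r:ℚ) * p * H k))^2) := by
      rw [sq, sq]
      exact Cong.mul hp cFr cFr pibr (pin _)
    -- left chain
    have left1 : Cong p 2 (a * (((FN p (r*p+k))^2 * (Nat.factorial k)^2 : ℕ) : ℚ))
        (C * (W^(2*r) * (Nat.factorial (2*k) : ℚ) * (1 + ((2*r:ℕ):ℚ) * p * H (2*k))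
          * (Nat.factorial k : ℚ)^2)) := by
      have : a * (((FN p (r*p+k))^2 * (Nat.factorial k)^2 : ℕ) : ℚ)
          = C * (((FN p (2*r*p+2*k) : ℕ):ℚ) * (Nat.factorial k : ℚ)^2) := by
        push_cast
        linear_combination (Nat.factorial k : ℚ)^2 * key
      rw [this]
      refine Cong.scale hp C (pin _) ?_
      refine Cong.mul hp cF1 (Cong.refl hp 2 _) pib1 ((pin _).pow hp 2)
    -- right chain
    have right1 : Cong p 2
        ((C * Ck * T) * (((FN p (r*p+k))^2 * (Nat.factorial k)^2 : ℕ) : ℚ))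
        (C * ((Nat.factorial (2*k) : ℚ) * T *
          (W^r * (Nat.factorial k : ℚ) * (1 + (r:ℚ) * p * H k))^2)) := by
      have : (C * Ck * T) * (((FN p (r*p+k))^2 * (Nat.factorial k)^2 : ℕ) : ℚ)
          = C * ((Nat.factorial (2*k) : ℚ) * T * (((FN p (r*p+k) : ℕ) : ℚ))^2) := by
        push_cast
        linear_combination C * T * ((FN p (r*p+k) :ℕ):ℚ)^2 * hCkk
      rw [this]
      refine Cong.scale hp C (pin _) ?_
      refine Cong.scale hp _ ((pin _).mul hp piT) cFr2
    -- bridge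
    have bridge : Cong p 2
        (C * (W^(2*r) * (Nat.factorial (2*k) : ℚ) * (1 + ((2*r:ℕ):ℚ) * p * H (2*k))
          * (Nat.factorial k : ℚ)^2))
        (C * ((Nat.factorial (2*k) : ℚ) * T *
          (W^r * (Nat.factorial k : ℚ) * (1 + (r:ℚ) * p * H k))^2)) := by
      refine ⟨- (C * W^(2*r) * (Nat.factorial (2*k) : ℚ) * (Nat.factorial k : ℚ)^2 * (r:ℚ)^2 *
        (4 * H k * H (2*k) - 3 * (H k)^2 + 2 * (r:ℚ) * p * ((H k)^2 * H (2*k) - (H k)^3))), ?_, ?_⟩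
      · refine PI.neg hp ?_
        refine (((((pin _).mul hp (piW.pow hp _)).mul hp (pin _)).mul hp
          ((pin _).pow hp 2)).mul hp ((pin _).pow hp 2)).mul hp ?_
        refine PI.add hp (PI.sub hp ?_ ?_) ?_
        · exact ((pin 4).mul hp piHk).mul hp piH2
        · exact (pin 3).mul hp (piHk.pow hp 2)
        · exact (((pin 2).mul hp (pin r)).mul hp (pin p)).mul hp
            (((piHk.pow hp 2).mul hp piH2).sub hp (piHk.pow hp 3))
      · rw [hT]
        push_cast
        ring
    exact (left1.trans hp (bridge.trans hp (right1.symm hp)))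
  -- ================== CASE B : p ≤ 2k ==================
  · set mm := 2*k - p with hmm
    have hm : mm ≤ p - 1 := by omega
    have hmp : mm < p := by omega
    have hidx1 : (2*r+1)*p + mm = 2*r*p+2*k := by
      have hx : (2*r+1)*p = 2*r*p + p := by ring
      omega
    have hidx2 : 1*p + mm = 2*k := by omega
    have hdiv1 : (2*r*p+2*k)/p = 2*r+1 := by
      have e2 : 2*r*p+2*k = mm + p*(2*r+1) := by
        have hx : p*(2*r+1) = 2*r*p + p := by ring
        omega
      rw [e2, Nat.add_mul_div_left _ _ hppos, Nat.div_eq_of_lt hmp, Nat.zero_add]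
    have hdiv2 : (2*k)/p = 1 := by
      have e2 : 2*k = mm + p*1 := by omega
      rw [e2, Nat.add_mul_div_left _ _ hppos, Nat.div_eq_of_lt hmp, Nat.zero_add]
    have E1 : (Nat.factorial (2*r*p+2*k) : ℚ)
        = (p:ℚ)^(2*r+1) * (Nat.factorial (2*r+1) : ℚ) * (FN p (2*r*p+2*k) : ℚ) := by
      have := fact_eq hppos (2*r*p+2*k)
      rwa [hdiv1] at this
    have E3 : (Nat.factorial (2*k) : ℚ) = (p:ℚ) * (FN p (2*k) : ℚ) := by
      have := fact_eq hppos (2*k)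
      rw [hdiv2] at this
      simpa [Nat.factorial] using this
    have hfs : (Nat.factorial (2*r+1) : ℚ) = ((2*r+1 : ℕ):ℚ) * (Nat.factorial (2*r):ℚ) := by
      rw [Nat.factorial_succ]
      push_cast
      ring
    have key : a * (FN p (r*p+k) : ℚ)^2
        = (p:ℚ) * (((2*r+1:ℕ):ℚ) * C * (FN p (2*r*p+2*k) : ℚ)) := by
      have hne : ((p:ℚ)^r * (Nat.factorial r : ℚ))^2 ≠ 0 := by positivity
      apply mul_left_cancel₀ hne
      rw [E2] at hA
      rw [E1, hfs] at hA
      push_cast at hA ⊢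
      linear_combination hA - (p:ℚ)^(2*r+1) * ((2*r:ℚ)+1) * (FN p (2*r*p+2*k) : ℚ) * hCr
    -- split H(2k)
    obtain ⟨G, piG, hG⟩ := H_split hp hp5 hcase hk
    have piHm : PI p (H mm) := PI_H hp hm
    have piT : PI p T := by
      rw [hT, hG]
      have hrw : 1 + 2 * (r:ℚ) * p * (1/(p:ℚ) + G - H k)
          = 1 + 2*(r:ℚ) + ((2*r*p:ℕ):ℚ) * (G - H k) := by
        push_cast
        field_simp
        ring
      rw [hrw]
      exact ((PI.one hp).add hp ((pin 2).mul hp (pin r))).add hp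
        ((pin _).mul hp (piG.sub hp piHk))
    -- mod p congruences
    have cT : Cong p 1 T (1 + 2*(r:ℚ)) := by
      refine ⟨2*(r:ℚ)*(G - H k), ((pin 2).mul hp (pin r)).mul hp (piG.sub hp piHk), ?_⟩
      rw [hT, hG]
      field_simp
      ring
    have cF1 : Cong p 1 ((FN p (2*r*p+2*k) : ℕ) : ℚ) (W^(2*r+1) * (Nat.factorial mm : ℚ)) := by
      have c0 := (FN_main hp hp5 (2*r+1) hm).weaken hp
      rw [hidx1] at c0
      refine c0.trans hp ?_
      refine ⟨W^(2*r+1) * (Nat.factorial mm : ℚ) * ((2*r+1:ℕ):ℚ) * H mm,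
        (((piW.pow hp _).mul hp (pin _)).mul hp (pin _)).mul hp piHm, ?_⟩
      push_cast
      ring
    have cF2k : Cong p 1 ((FN p (2*k) : ℕ) : ℚ) (W * (Nat.factorial mm : ℚ)) := by
      have c0 := (FN_main hp hp5 1 hm).weaken hp
      rw [hidx2] at c0
      refine c0.trans hp ?_
      refine ⟨W^1 * (Nat.factorial mm : ℚ) * ((1:ℕ):ℚ) * H mm,
        (((piW.pow hp _).mul hp (pin _)).mul hp (pin _)).mul hp piHm, ?_⟩
      push_cast
      ring
    have cFr1 : Cong p 1 ((FN p (r*p+k) : ℕ) : ℚ) (W^r * (Nat.factorial k : ℚ)) := by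
      have c0 := (FN_main hp hp5 r hk).weaken hp
      refine c0.trans hp ?_
      refine ⟨W^r * (Nat.factorial k : ℚ) * (r:ℚ) * H k,
        (((piW.pow hp _).mul hp (pin _)).mul hp (pin _)).mul hp piHk, ?_⟩
      push_cast
      ring
    have cFr2 : Cong p 1 (((FN p (r*p+k) : ℕ) : ℚ)^2) ((W^r * (Nat.factorial k : ℚ))^2) := by
      rw [sq, sq]
      exact Cong.mul hp cFr1 cFr1 ((piW.pow hp _).mul hp (pin _)) (pin _)
    -- assemble core
    have left : Cong p 1 ((((2*r+1:ℕ):ℚ) * ((FN p (2*r*p+2*k) : ℕ) : ℚ)) * (Nat.factorial k : ℚ)^2)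
        ((((2*r+1:ℕ):ℚ) * (W^(2*r+1) * (Nat.factorial mm : ℚ))) * (Nat.factorial k : ℚ)^2) := by
      refine Cong.mul hp (Cong.scale hp _ (pin _) cF1) (Cong.refl hp 1 _) ?_ ((pin _).pow hp 2)
      exact (pin _).mul hp ((piW.pow hp _).mul hp (pin _))
    have right : Cong p 1 ((((FN p (2*k) : ℕ) : ℚ) * T) * (((FN p (r*p+k) : ℕ) : ℚ))^2)
        (((W * (Nat.factorial mm : ℚ)) * (1 + 2*(r:ℚ))) * (W^r * (Nat.factorial k : ℚ))^2) := by
      refine Cong.mul hp (Cong.mul hp cF2k cT (piW.mul hp (pin _)) piT) cFr2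
        ((piW.mul hp (pin _)).mul hp ((PI.one hp).add hp ((pin 2).mul hp (pin r))))
        ((pin _).pow hp 2)
    have bridge : ((((2*r+1:ℕ):ℚ) * (W^(2*r+1) * (Nat.factorial mm : ℚ))) * (Nat.factorial k : ℚ)^2)
        = (((W * (Nat.factorial mm : ℚ)) * (1 + 2*(r:ℚ))) * (W^r * (Nat.factorial k : ℚ))^2) := by
      push_cast
      ring
    have core1 : Cong p 1 ((((2*r+1:ℕ):ℚ) * ((FN p (2*r*p+2*k) : ℕ) : ℚ)) * (Nat.factorial k : ℚ)^2)
        ((((FN p (2*k) : ℕ) : ℚ) * T) * (((FN p (r*p+k) : ℕ) : ℚ))^2) :=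
      left.trans hp ((Cong.of_eq hp bridge).trans hp (right.symm hp))
    -- glue
    have hL : a * (((FN p (r*p+k))^2 * (Nat.factorial k)^2 : ℕ) : ℚ)
        = (p:ℚ) * C * ((((2*r+1:ℕ):ℚ) * ((FN p (2*r*p+2*k) : ℕ) : ℚ)) * (Nat.factorial k : ℚ)^2) := by
      push_cast at key ⊢
      linear_combination (Nat.factorial k : ℚ)^2 * key
    have hR : (C * Ck * T) * (((FN p (r*p+k))^2 * (Nat.factorial k)^2 : ℕ) : ℚ)
        = (p:ℚ) * C * ((((FN p (2*k) : ℕ) : ℚ) * T) * (((FN p (r*p+k) : ℕ) : ℚ))^2) := by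
      push_cast
      linear_combination C * T * ((FN p (r*p+k) : ℕ) : ℚ)^2 * hCkk
        + C * T * ((FN p (r*p+k) : ℕ) : ℚ)^2 * E3
    rw [hL, hR]
    exact Cong.p_scale hp C (pin _) core1

end CBS

theorem central_binom_shift (p r k : ℕ) (hp : p.Prime) (hp5 : 5 ≤ p) (hk : k ≤ p - 1) :
    ratCongr p 2 ((2 * r * p + 2 * k).choose (r * p + k) : ℚ)
      (((2 * r).choose r : ℚ) * ((2 * k).choose k : ℚ) *
        (1 + 2 * r * p * (H (2 * k) - H k))) := by
  obtain ⟨z, ⟨s, t, ht, hzt⟩, he⟩ := CBS.main_theorem p r k hp hp5 hk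
  exact ⟨s, t, ht, by rw [he, ← hzt]; ring⟩
end

section
/- Let n be an odd positive integer. Then ∑_{k=0}^{n-1} C(2k,k)·( C(n-1,2k) - (-1)^k·C(n-1,k) ) = 0. -/
open Polynomial Finset

/-- Expansion 1: coeff m of (1+X+X^2)^m equals ∑ C(2k,k) C(m,2k). -/
lemma coeff_trinomial_eq_sum1 (m : ℕ) :
    (((1 + X + X ^ 2 : ℤ[X])) ^ m).coeff m =
      ∑ k ∈ range (m + 1), ((2 * k).choose k : ℤ) * (m.choose (2 * k) : ℤ) := by
  have h : (1 + X + X ^ 2 : ℤ[X]) = X ^ 2 + (1 + X) := by ring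
  rw [h, add_pow, finset_sum_coeff]
  refine Finset.sum_congr rfl fun k hk => ?_
  rw [Finset.mem_range, Nat.lt_succ_iff] at hk
  have : ((X ^ 2) ^ k * (1 + X) ^ (m - k) * ((m.choose k : ℤ[X]))) =
      X ^ (2 * k) * ((1 + X) ^ (m - k) * C ((m.choose k : ℤ))) := by
    rw [← pow_mul, mul_assoc, C_eq_natCast]
  rw [this, coeff_X_pow_mul', ]
  by_cases h2 : 2 * k ≤ m
  · rw [if_pos h2, coeff_mul_C, coeff_one_add_X_pow]
    have hsymm : (m - k).choose (m - 2 * k) = (m - k).choose k := by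
      have h1 : m - 2 * k = (m - k) - k := by omega
      have h2' : k ≤ m - k := by omega
      rw [h1, Nat.choose_symm h2']
    rw [hsymm]
    have hcm := Nat.choose_mul (n := m) (k := 2 * k) (s := k) (by omega)
    have h2k : (2 * k) - k = k := by omega
    rw [h2k] at hcm
    have hnat : (m - k).choose k * m.choose k = (2 * k).choose k * m.choose (2 * k) := by
      rw [mul_comm ((m - k).choose k), ← hcm]; ring
    exact_mod_cast hnat
  · rw [if_neg h2]
    have hz : m.choose (2 * k) = 0 := Nat.choose_eq_zero_of_lt (by omega)
    rw [hz, Nat.cast_zero, mul_zero]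

/-- Expansion 2: coeff m of (1+X+X^2)^m equals ∑ (-1)^k C(m,k) C(2(m-k), m-k). -/
lemma coeff_trinomial_eq_sum2 (m : ℕ) :
    (((1 + X + X ^ 2 : ℤ[X])) ^ m).coeff m =
      ∑ k ∈ range (m + 1),
        (-1 : ℤ) ^ k * (m.choose k : ℤ) * ((2 * (m - k)).choose (m - k) : ℤ) := by
  have h : (1 + X + X ^ 2 : ℤ[X]) = (-X) + (1 + X) ^ 2 := by ring
  rw [h, add_pow, finset_sum_coeff]
  refine Finset.sum_congr rfl fun k hk => ?_
  rw [Finset.mem_range, Nat.lt_succ_iff] at hk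
  have : ((-X) ^ k * ((1 + X) ^ 2) ^ (m - k) * ((m.choose k : ℤ[X]))) =
      C ((-1 : ℤ) ^ k) * (X ^ k * ((1 + X) ^ (2 * (m - k)) * C ((m.choose k : ℤ)))) := by
    rw [neg_pow, ← pow_mul, C_eq_natCast, map_pow, map_neg, map_one]
    ring
  rw [this, coeff_C_mul, coeff_X_pow_mul', if_pos hk, coeff_mul_C, coeff_one_add_X_pow]
  ring

theorem sum_central_binom_identity (n : ℕ) (hn : 0 < n) (hodd : Odd n) :
    ∑ k ∈ Finset.range n, ((2 * k).choose k : ℤ) *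
      (((n - 1).choose (2 * k) : ℤ) - (-1) ^ k * ((n - 1).choose k : ℤ)) = 0 := by
  obtain ⟨m, rfl⟩ : ∃ m, n = m + 1 := ⟨n - 1, (Nat.succ_pred_eq_of_pos hn).symm⟩
  have hm : Even m := Nat.Odd.sub_odd hodd odd_one
  simp only [Nat.add_sub_cancel]
  have key : ∑ k ∈ range (m + 1), ((2 * k).choose k : ℤ) * (m.choose (2 * k) : ℤ) =
      ∑ k ∈ range (m + 1), (-1 : ℤ) ^ k * ((2 * k).choose k : ℤ) * (m.choose k : ℤ) := by
    rw [← coeff_trinomial_eq_sum1, coeff_trinomial_eq_sum2]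
    rw [← Finset.sum_range_reflect
      (fun k => (-1 : ℤ) ^ k * (m.choose k : ℤ) * ((2 * (m - k)).choose (m - k) : ℤ)) (m + 1)]
    refine Finset.sum_congr rfl fun k hk => ?_
    rw [Finset.mem_range, Nat.lt_succ_iff] at hk
    have h1 : m + 1 - 1 - k = m - k := by omega
    have h2 : m - (m - k) = k := by omega
    have h3 : m.choose (m - k) = m.choose k := Nat.choose_symm hk
    have h4 : (-1 : ℤ) ^ (m - k) = (-1) ^ k := by
      have : (-1 : ℤ) ^ (m - k) * (-1) ^ k = 1 := by
        rw [← pow_add, Nat.sub_add_cancel hk, hm.neg_one_pow]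
      calc (-1 : ℤ) ^ (m - k) = (-1) ^ (m - k) * ((-1) ^ k * (-1) ^ k) := by
            rw [← pow_add, ← two_mul, pow_mul]; norm_num
        _ = (-1) ^ k := by rw [← mul_assoc, this, one_mul]
    rw [h1, h2, h3, h4]
    ring
  simp only [mul_sub]
  rw [Finset.sum_sub_distrib, key]
  apply sub_eq_zero_of_eq
  exact Finset.sum_congr rfl fun k _ => by ring
end

section
/- Let n be an odd positive integer. Then ∑_{k=0}^{n-1} (C(2k,k)/(k+1))·( C(n-1,2k) - (-1)^k·C(n-1,k) ) = (1/(n+1))·∑_{k=0}^{n} (-1)^k·C(n+1,k)·C(2n-2k,n-k). -/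
open Finset

/-- ∑_j C(m,j)C(j,i) = C(m,i)·2^(m−i). -/
lemma vand_pow (m i : ℕ) :
    ∑ j ∈ range (m + 1), m.choose j * j.choose i = m.choose i * 2 ^ (m - i) := by
  by_cases him : i ≤ m
  · have h1 : ∀ j ∈ range (m + 1), m.choose j * j.choose i
        = m.choose i * (if i ≤ j then (m - i).choose (j - i) else 0) := by
      intro j hj
      by_cases hij : i ≤ j
      · rw [if_pos hij, Nat.choose_mul hij]
      · rw [if_neg hij, Nat.choose_eq_zero_of_lt (show j < i by omega), mul_zero, mul_zero]
    rw [Finset.sum_congr rfl h1, ← Finset.mul_sum]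
    congr 1
    rw [← Nat.sum_range_choose (m - i)]
    rw [show m + 1 = i + (m - i + 1) by omega]
    rw [Finset.sum_range_add]
    simp only [Nat.add_sub_cancel_left]
    rw [Finset.sum_eq_zero (fun x hx => by rw [if_neg (by simp at hx; omega)]), zero_add]
    refine Finset.sum_congr rfl fun t ht => ?_
    rw [if_pos (Nat.le_add_right _ _)]
  · have : ∀ j ∈ range (m + 1), m.choose j * j.choose i = 0 := by
      intro j hj
      rw [Nat.choose_eq_zero_of_lt (show j < i by simp [Nat.lt_succ_iff] at hj; omega), mul_zero]
    rw [Finset.sum_congr rfl this, Finset.sum_const_zero,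
      Nat.choose_eq_zero_of_lt (by omega), zero_mul]

lemma sum_choose_pow_succ (m N : ℕ) (c h : ℕ → ℕ) :
    ∑ k ∈ range N, m.choose (c k + 1) * 2 ^ (m - c k) * h k
      = 2 * ∑ k ∈ range N, m.choose (c k + 1) * 2 ^ (m - (c k + 1)) * h k := by
  rw [Finset.mul_sum]
  refine Finset.sum_congr rfl fun k _ => ?_
  by_cases hc : c k + 1 ≤ m
  · rw [show m - c k = (m - (c k + 1)) + 1 by omega, pow_succ]; ring
  · rw [Nat.choose_eq_zero_of_lt (by omega)]; ring

lemma symm_mid (k : ℕ) : (2 * k + 1).choose k = (2 * k + 1).choose (k + 1) := by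
  rw [← Nat.choose_symm (show k + 1 ≤ 2 * k + 1 by omega)]
  congr 1
  omega

lemma pascal_two (N j : ℕ) :
    (N + 2).choose (j + 2) = N.choose j + 2 * N.choose (j + 1) + N.choose (j + 2) := by
  rw [Nat.choose_succ_succ (N + 1) (j + 1), Nat.choose_succ_succ N j,
    Nat.choose_succ_succ N (j + 1)]
  ring

lemma FG (m : ℕ) :
    (∀ r, ∑ k ∈ range (m + 1),
        m.choose (2 * k) * 2 ^ (m - 2 * k) * (2 * k).choose (k + r)
      = (2 * m).choose (m + 2 * r))
    ∧ (∑ k ∈ range (m + 1),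
        m.choose (2 * k + 1) * 2 ^ (m - (2 * k + 1)) * (2 * k + 2).choose (k + 1)
      = 2 * (2 * m).choose (m + 1))
    ∧ (∀ r, ∑ k ∈ range (m + 1),
        m.choose (2 * k + 1) * 2 ^ (m - (2 * k + 1)) * (2 * k + 2).choose (k + 2 + r)
      = (2 * m).choose (m + 1 + 2 * r) + (2 * m).choose (m + 3 + 2 * r)) := by
  induction m with
  | zero =>
    refine ⟨fun r => ?_, by simp, fun r => ?_⟩
    · cases r with
      | zero => simp
      | succ t => simp [Nat.choose_eq_zero_of_lt (show (0:ℕ) < 2 * (t+1) by omega)]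
    · simp [Nat.choose_eq_zero_of_lt (show (0:ℕ) < 1 + 2*r by omega),
        Nat.choose_eq_zero_of_lt (show (0:ℕ) < 3 + 2*r by omega)]
  | succ m ih =>
    obtain ⟨hF, hG0, hGr⟩ := ih
    -- F at m+1 equals G-sum + 2 * F-value
    have hFnew : ∀ r, ∑ k ∈ range (m + 1 + 1),
        (m + 1).choose (2 * k) * 2 ^ (m + 1 - 2 * k) * (2 * k).choose (k + r)
        = (∑ k ∈ range (m + 1),
            m.choose (2 * k + 1) * 2 ^ (m - (2 * k + 1)) * (2 * k + 2).choose (k + 1 + r))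
          + 2 * (2 * m).choose (m + 2 * r) := by
      intro r
      rw [Finset.sum_range_succ']
      have e1 : ∀ k ∈ range (m + 1),
          (m + 1).choose (2 * (k + 1)) * 2 ^ (m + 1 - 2 * (k + 1)) * (2 * (k + 1)).choose (k + 1 + r)
          = m.choose (2 * k + 1) * 2 ^ (m - (2 * k + 1)) * (2 * k + 2).choose (k + 1 + r)
            + m.choose (2 * k + 2) * 2 ^ (m - (2 * k + 1)) * (2 * k + 2).choose (k + 1 + r) := by
        intro k _
        rw [show 2 * (k + 1) = (2 * k + 1) + 1 by ring, Nat.choose_succ_succ,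
          show m + 1 - (2 * k + 1 + 1) = m - (2 * k + 1) by omega]
        ring
      rw [Finset.sum_congr rfl e1, Finset.sum_add_distrib]
      have e2 : ∑ k ∈ range (m + 1),
          m.choose (2 * k + 2) * 2 ^ (m - (2 * k + 1)) * (2 * k + 2).choose (k + 1 + r)
          = 2 * ∑ k ∈ range (m + 1),
            m.choose (2 * k + 2) * 2 ^ (m - (2 * k + 2)) * (2 * k + 2).choose (k + 1 + r) := by
        have := sum_choose_pow_succ m (m + 1) (fun k => 2 * k + 1)
          (fun k => (2 * k + 2).choose (k + 1 + r))
        simpa using this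
      rw [e2]
      have e3 : (∑ k ∈ range (m + 1),
            m.choose (2 * k + 2) * 2 ^ (m - (2 * k + 2)) * (2 * k + 2).choose (k + 1 + r))
          + m.choose (2 * 0) * 2 ^ (m - 2 * 0) * (2 * 0).choose (0 + r)
          = (2 * m).choose (m + 2 * r) := by
        have e4 : ∑ k ∈ range (m + 1),
            m.choose (2 * k + 2) * 2 ^ (m - (2 * k + 2)) * (2 * k + 2).choose (k + 1 + r)
            = ∑ k ∈ range (m + 1), (fun k => m.choose (2 * k) * 2 ^ (m - 2 * k)
                * (2 * k).choose (k + r)) (k + 1) := by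
          refine Finset.sum_congr rfl fun k _ => ?_
          simp only []
          rw [show 2 * (k + 1) = 2 * k + 2 by ring]
        rw [e4, ← Finset.sum_range_succ'
          (fun k => m.choose (2 * k) * 2 ^ (m - 2 * k) * (2 * k).choose (k + r)) (m + 1)]
        rw [Finset.sum_range_succ, hF r]
        rw [Nat.choose_eq_zero_of_lt (show m < 2 * (m + 1) by omega), zero_mul, zero_mul, add_zero]
      have h0 : (m + 1).choose (2 * 0) * 2 ^ (m + 1 - 2 * 0) * (2 * 0).choose (0 + r)
          = 2 * (m.choose (2 * 0) * 2 ^ (m - 2 * 0) * (2 * 0).choose (0 + r)) := by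
        simp [pow_succ]
        ring
      rw [h0]
      omega
    -- G at m+1 pre-processing
    have hGnew : ∀ r, ∑ k ∈ range (m + 1 + 1),
        (m + 1).choose (2 * k + 1) * 2 ^ (m + 1 - (2 * k + 1)) * (2 * k + 2).choose (k + 1 + r)
        = 2 * (∑ k ∈ range (m + 1),
            m.choose (2 * k + 1) * 2 ^ (m - (2 * k + 1)) * (2 * k + 2).choose (k + 1 + r))
          + ∑ k ∈ range (m + 1),
            m.choose (2 * k) * 2 ^ (m - 2 * k) * (2 * k + 2).choose (k + 1 + r) := by
      intro r
      rw [Finset.sum_range_succ]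
      rw [Nat.choose_eq_zero_of_lt (show m + 1 < 2 * (m + 1) + 1 by omega), zero_mul, zero_mul,
        add_zero]
      have e1 : ∀ k ∈ range (m + 1),
          (m + 1).choose (2 * k + 1) * 2 ^ (m + 1 - (2 * k + 1)) * (2 * k + 2).choose (k + 1 + r)
          = m.choose (2 * k + 1) * 2 ^ (m - 2 * k) * (2 * k + 2).choose (k + 1 + r)
            + m.choose (2 * k) * 2 ^ (m - 2 * k) * (2 * k + 2).choose (k + 1 + r) := by
        intro k _
        rw [Nat.choose_succ_succ m (2 * k), show m + 1 - (2 * k + 1) = m - 2 * k by omega]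
        ring
      rw [Finset.sum_congr rfl e1, Finset.sum_add_distrib]
      congr 1
      have := sum_choose_pow_succ m (m + 1) (fun k => 2 * k)
        (fun k => (2 * k + 2).choose (k + 1 + r))
      simpa using this
    refine ⟨fun r => ?_, ?_, fun r => ?_⟩
    · -- F claim at m+1
      rw [hFnew r]
      cases r with
      | zero =>
        have h1 : ∑ k ∈ range (m + 1),
            m.choose (2 * k + 1) * 2 ^ (m - (2 * k + 1)) * (2 * k + 2).choose (k + 1 + 0)
            = 2 * (2 * m).choose (m + 1) := by
          rw [← hG0]
        rw [h1]
        have h2 : (2 * (m + 1)).choose (m + 1 + 2 * 0) = 2 * ((2 * m).choose m + (2 * m).choose (m + 1)) := by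
          rw [show 2 * (m + 1) = (2 * m + 1) + 1 by ring, show m + 1 + 2 * 0 = m + 1 by ring,
            Nat.choose_succ_succ (2 * m + 1) m, ← symm_mid m, symm_mid m,
            Nat.choose_succ_succ (2 * m) m]
          ring
        rw [h2, show m + 2 * 0 = m by ring]
        ring
      | succ t =>
        have h1 : ∑ k ∈ range (m + 1),
            m.choose (2 * k + 1) * 2 ^ (m - (2 * k + 1)) * (2 * k + 2).choose (k + 1 + (t + 1))
            = (2 * m).choose (m + 1 + 2 * t) + (2 * m).choose (m + 3 + 2 * t) := by
          rw [← hGr t]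
          exact Finset.sum_congr rfl fun k _ => by
            rw [show k + 1 + (t + 1) = k + 2 + t by ring]
        rw [h1, show m + 2 * (t + 1) = (m + 2 * t) + 2 by ring,
          show m + 1 + 2 * (t + 1) = (m + 1 + 2 * t) + 2 by ring,
          show 2 * (m + 1) = 2 * m + 2 by ring, pascal_two,
          show (m + 1 + 2 * t) + 1 = (m + 2 * t) + 2 by ring,
          show m + 3 + 2 * t = (m + 1 + 2 * t) + 2 by ring]
        ring
    · -- G0 claim at m+1
      have h0 := hGnew 0
      simp only [add_zero] at h0
      rw [h0, hG0]
      have hSB : ∑ k ∈ range (m + 1),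
          m.choose (2 * k) * 2 ^ (m - 2 * k) * (2 * k + 2).choose (k + 1)
          = 2 * ((2 * m).choose m + (2 * m).choose (m + 2)) := by
        have e : ∀ k ∈ range (m + 1),
            m.choose (2 * k) * 2 ^ (m - 2 * k) * (2 * k + 2).choose (k + 1)
            = 2 * (m.choose (2 * k) * 2 ^ (m - 2 * k) * (2 * k).choose (k + 0))
              + 2 * (m.choose (2 * k) * 2 ^ (m - 2 * k) * (2 * k).choose (k + 1)) := by
          intro k _
          rw [show 2 * k + 2 = (2 * k + 1) + 1 by ring, Nat.choose_succ_succ (2 * k + 1) k,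
            ← symm_mid k, symm_mid k, Nat.choose_succ_succ (2 * k) k, show k + 0 = k by ring]
          ring
        rw [Finset.sum_congr rfl e, Finset.sum_add_distrib, ← Finset.mul_sum, ← Finset.mul_sum,
          hF 0, hF 1, show m + 2 * 0 = m by ring, show m + 2 * 1 = m + 2 by ring]
        ring
      rw [hSB, show 2 * (m + 1) = 2 * m + 2 by ring, show m + 1 + 1 = m + 2 by ring,
        pascal_two 
          (2 * m) m]
      ring
    · -- Gr claim at m+1
      have h0 := hGnew (r + 1)
      simp only [show ∀ k, k + 1 + (r + 1) = k + 2 + r from fun k => by ring] at h0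
      rw [h0, hGr r]
      have hSB : ∑ k ∈ range (m + 1),
          m.choose (2 * k) * 2 ^ (m - 2 * k) * (2 * k + 2).choose (k + 2 + r)
          = (2 * m).choose (m + 2 * r) + 2 * (2 * m).choose (m + 2 * (r + 1))
            + (2 * m).choose (m + 2 * (r + 2)) := by
        have e : ∀ k ∈ range (m + 1),
            m.choose (2 * k) * 2 ^ (m - 2 * k) * (2 * k + 2).choose (k + 2 + r)
            = m.choose (2 * k) * 2 ^ (m - 2 * k) * (2 * k).choose (k + r)
              + 2 * (m.choose (2 * k) * 2 ^ (m - 2 * k) * (2 * k).choose (k + (r + 1)))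
              + m.choose (2 * k) * 2 ^ (m - 2 * k) * (2 * k).choose (k + (r + 2)) := by
          intro k _
          rw [show k + 2 + r = (k + r) + 2 by ring, pascal_two (2 * k) (k + r),
            show (k + r) + 1 = k + (r + 1) by ring, show (k + r) + 2 = k + (r + 2) by ring]
          ring
        rw [Finset.sum_congr rfl e, Finset.sum_add_distrib, Finset.sum_add_distrib,
          ← Finset.mul_sum, hF r, hF (r + 1), hF (r + 2)]
      rw [hSB, show m + 2 * (r + 1) = (m + 2 * r) + 2 by ring,
        show m + 2 * (r + 2) = (m + 2 * r) + 4 by ring,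
        show 2 * (m + 1) = 2 * m + 2 by ring,
        show m + 1 + 1 + 2 * r = (m + 2 * r) + 2 by ring,
        show m + 1 + 3 + 2 * r = (m + 2 * r) + 4 by ring,
        show (m + 2 * r) + 2 = (m + 2 * r) + 2 by rfl,
        show (m + 2 * r) + 4 = ((m + 2 * r) + 2) + 2 by ring,
        pascal_two (2 * m) (m + 2 * r), pascal_two (2 * m) ((m + 2 * r) + 2),
        show m + 1 + 2 * r = (m + 2 * r) + 1 by ring,
        show m + 3 + 2 * r = (m + 2 * r) + 3 by ring,
        show ((m + 2 * r) + 2) + 1 = (m + 2 * r) + 3 by ring,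
        show ((m + 2 * r) + 2) + 2 = (m + 2 * r) + 4 by ring]
      ring

/-- Catalan number as difference of binomials, over ℚ. -/
lemma cat_sub_q (k : ℕ) :
    (catalan k : ℚ) = ((2 * k).choose k : ℚ) - ((2 * k).choose (k + 1) : ℚ) := by
  have h1 : ((k : ℚ) + 1) * (catalan k : ℚ) = ((2 * k).choose k : ℚ) := by
    have h := succ_mul_catalan_eq_centralBinom k
    rw [Nat.centralBinom_eq_two_mul_choose] at h
    exact_mod_cast h
  have h2 : ((2 * k).choose (k + 1) : ℚ) * ((k : ℚ) + 1) = ((2 * k).choose k : ℚ) * k := by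
    have h := Nat.choose_succ_right_eq (2 * k) k
    rw [show 2 * k - k = k by omega] at h
    exact_mod_cast h
  have hne : ((k : ℚ) + 1) ≠ 0 := by positivity
  have h3 : ((k : ℚ) + 1) * (((2 * k).choose k : ℚ) - ((2 * k).choose (k + 1) : ℚ))
      = ((k : ℚ) + 1) * (catalan k : ℚ) := by linear_combination -h1 - h2
  exact (mul_left_cancel₀ hne h3).symm

lemma cat_final (m : ℕ) :
    ((2 * m).choose m : ℚ) - ((2 * m).choose (m + 2) : ℚ) = (catalan (m + 1) : ℚ) := by
  rcases m with _ | s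
  · norm_num [catalan_one]
  · have h1 : ((2 * (s + 1)).choose (s + 2) : ℚ) * ((s : ℚ) + 2)
        = ((2 * (s + 1)).choose (s + 1) : ℚ) * ((s : ℚ) + 1) := by
      have h := Nat.choose_succ_right_eq (2 * (s + 1)) (s + 1)
      rw [show 2 * (s + 1) - (s + 1) = s + 1 by omega] at h
      exact_mod_cast h
    have h2 : ((2 * (s + 1)).choose (s + 3) : ℚ) * ((s : ℚ) + 3)
        = ((2 * (s + 1)).choose (s + 2) : ℚ) * (s : ℚ) := by
      have h := Nat.choose_succ_right_eq (2 * (s + 1)) (s + 2)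
      rw [show 2 * (s + 1) - (s + 2) = s by omega,
        show (s + 2) + 1 = s + 3 by ring] at h
      exact_mod_cast h
    have h3 : ((s : ℚ) + 3) * (catalan (s + 2) : ℚ) = ((2 * (s + 2)).choose (s + 2) : ℚ) := by
      have h := succ_mul_catalan_eq_centralBinom (s + 2)
      rw [Nat.centralBinom_eq_two_mul_choose] at h
      exact_mod_cast h
    have h4 : ((s : ℚ) + 2) * ((2 * (s + 2)).choose (s + 2) : ℚ)
        = 2 * (2 * (s : ℚ) + 3) * ((2 * (s + 1)).choose (s + 1) : ℚ) := by
      have h := Nat.succ_mul_centralBinom_succ (s + 1)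
      rw [Nat.centralBinom_eq_two_mul_choose, Nat.centralBinom_eq_two_mul_choose] at h
      have h' := congrArg (Nat.cast : ℕ → ℚ) h
      push_cast at h'
      linear_combination h'
    show ((2 * (s + 1)).choose (s + 1) : ℚ) - ((2 * (s + 1)).choose (s + 1 + 2) : ℚ)
        = (catalan (s + 1 + 1) : ℚ)
    rw [show s + 1 + 2 = s + 3 by ring, show s + 1 + 1 = s + 2 by ring]
    have hne : (((s : ℚ) + 2) * ((s : ℚ) + 3)) ≠ 0 := by positivity
    have key : (((s : ℚ) + 2) * ((s : ℚ) + 3))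
          * (((2 * (s + 1)).choose (s + 1) : ℚ) - ((2 * (s + 1)).choose (s + 3) : ℚ))
        = (((s : ℚ) + 2) * ((s : ℚ) + 3)) * (catalan (s + 2) : ℚ) := by
      linear_combination (-(s : ℚ)) * h1 - ((s : ℚ) + 2) * h2 - ((s : ℚ) + 2) * h3 - h4
    exact mul_left_cancel₀ hne key

/-- Touchard-type: ∑ C(m,2k) 2^(m-2k) catalan k = catalan (m+1), over ℚ. -/
lemma touchard_q (m : ℕ) :
    ∑ k ∈ range (m + 1), ((m.choose (2 * k) * 2 ^ (m - 2 * k) : ℕ) : ℚ) * (catalan k : ℚ)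
      = (catalan (m + 1) : ℚ) := by
  have hsplit : ∑ k ∈ range (m + 1), ((m.choose (2 * k) * 2 ^ (m - 2 * k) : ℕ) : ℚ) * (catalan k : ℚ)
      = ((∑ k ∈ range (m + 1), m.choose (2 * k) * 2 ^ (m - 2 * k) * (2 * k).choose (k + 0) : ℕ) : ℚ)
        - ((∑ k ∈ range (m + 1), m.choose (2 * k) * 2 ^ (m - 2 * k) * (2 * k).choose (k + 1) : ℕ) : ℚ) := by
    push_cast
    rw [← Finset.sum_sub_distrib]
    refine Finset.sum_congr rfl fun k _ => ?_
    rw [cat_sub_q k, show k + 0 = k by ring]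
    ring
  rw [hsplit, (FG m).1 0, (FG m).1 1, show m + 2 * 0 = m by ring, show m + 2 * 1 = m + 2 by ring]
  exact cat_final m

noncomputable def Msum (m : ℕ) : ℚ := ∑ k ∈ range (m + 1), ((m.choose (2 * k)) : ℚ) * (catalan k : ℚ)

lemma lemD (m : ℕ) :
    ∑ j ∈ range (m + 1), ((m.choose j) : ℚ) * Msum j = (catalan (m + 1) : ℚ) := by
  have hM : ∀ j ∈ range (m + 1), ((m.choose j) : ℚ) * Msum j
      = ∑ k ∈ range (m + 1), ((m.choose j) : ℚ) * (((j.choose (2 * k)) : ℚ) * (catalan k : ℚ)) := by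
    intro j hj
    have hj' : j + 1 ≤ m + 1 := by simp only [Finset.mem_range] at hj; omega
    unfold Msum
    rw [Finset.sum_subset (Finset.range_subset_range.mpr hj')
      (fun k _ hk => by
        rw [Nat.choose_eq_zero_of_lt (show j < 2 * k by simp only [Finset.mem_range] at hk ⊢; omega)]
        simp)]
    rw [Finset.mul_sum]
  rw [Finset.sum_congr rfl hM, Finset.sum_comm]
  have h2 : ∀ k ∈ range (m + 1),
      ∑ j ∈ range (m + 1), ((m.choose j) : ℚ) * (((j.choose (2 * k)) : ℚ) * (catalan k : ℚ))
      = ((m.choose (2 * k) * 2 ^ (m - 2 * k) : ℕ) : ℚ) * (catalan k : ℚ) := by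
    intro k _
    have hv := vand_pow m (2 * k)
    calc ∑ j ∈ range (m + 1), ((m.choose j) : ℚ) * (((j.choose (2 * k)) : ℚ) * (catalan k : ℚ))
        = ((∑ j ∈ range (m + 1), m.choose j * j.choose (2 * k) : ℕ) : ℚ) * (catalan k : ℚ) := by
          push_cast
          rw [Finset.sum_mul]
          exact Finset.sum_congr rfl fun j _ => by ring
      _ = _ := by rw [hv]
  rw [Finset.sum_congr rfl h2]
  exact touchard_q m

lemma alt_inner (m i : ℕ) (him : i ≤ m) :
    ∑ j ∈ range (m + 1), (-1 : ℚ) ^ j * (m.choose j) * (j.choose i)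
      = (-1 : ℚ) ^ m * (if i = m then 1 else 0) := by
  have h1 : ∀ j ∈ range (m + 1), (-1 : ℚ) ^ j * (m.choose j) * (j.choose i)
      = (if i ≤ j then (-1 : ℚ) ^ j * (m.choose i) * ((m - i).choose (j - i)) else 0) := by
    intro j hj
    have hjm : j ≤ m := by simp only [Finset.mem_range] at hj; omega
    by_cases hij : i ≤ j
    · rw [if_pos hij]
      have : m.choose j * j.choose i = m.choose i * (m - i).choose (j - i) :=
        Nat.choose_mul hij
      have h' := congrArg (Nat.cast : ℕ → ℚ) this
      push_cast at h'
      rw [mul_assoc, h', mul_assoc]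
    · rw [if_neg hij, Nat.choose_eq_zero_of_lt (show j < i by omega)]
      simp
  rw [Finset.sum_congr rfl h1]
  rw [show m + 1 = i + (m - i + 1) by omega, Finset.sum_range_add]
  rw [Finset.sum_eq_zero (fun x hx => by rw [if_neg (by simp only [Finset.mem_range] at hx; omega)]),
    zero_add]
  have h3 : ∀ t ∈ range (m - i + 1), (if i ≤ i + t then (-1 : ℚ) ^ (i + t) * (m.choose i)
      * ((m - i).choose (i + t - i)) else 0)
      = ((-1 : ℚ) ^ i * (m.choose i)) * ((-1 : ℚ) ^ t * ((m - i).choose t)) := by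
    intro t _
    rw [if_pos (Nat.le_add_right _ _), show i + t - i = t by omega, pow_add]
    ring
  rw [Finset.sum_congr rfl h3, ← Finset.mul_sum]
  have halt : ∑ t ∈ range (m - i + 1), (-1 : ℚ) ^ t * ((m - i).choose t)
      = (if m - i = 0 then 1 else 0) := by
    have h := Int.alternating_sum_range_choose (n := m - i)
    have h' := congrArg (Int.cast : ℤ → ℚ) h
    push_cast at h'
    rw [h']
  rw [halt]
  by_cases him' : i = m
  · subst him'
    simp
  · rw [if_neg (by omega), if_neg him']
    simp

lemma lemE (m : ℕ) :
    ∑ j ∈ range (m + 1), (-1 : ℚ) ^ j * (m.choose j) * (catalan (j + 1) : ℚ)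
      = (-1 : ℚ) ^ m * Msum m := by
  have h1 : ∀ j ∈ range (m + 1), (-1 : ℚ) ^ j * (m.choose j) * (catalan (j + 1) : ℚ)
      = ∑ i ∈ range (m + 1), (-1 : ℚ) ^ j * (m.choose j) * (((j.choose i) : ℚ) * Msum i) := by
    intro j hj
    have hj' : j + 1 ≤ m + 1 := by simp only [Finset.mem_range] at hj; omega
    rw [← lemD j]
    rw [Finset.sum_subset (Finset.range_subset_range.mpr hj')
      (fun i _ hi => by
        rw [Nat.choose_eq_zero_of_lt (show j < i by simp only [Finset.mem_range] at hi ⊢; omega)]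
        simp)]
    rw [Finset.mul_sum]
  rw [Finset.sum_congr rfl h1, Finset.sum_comm]
  have h2 : ∀ i ∈ range (m + 1),
      ∑ j ∈ range (m + 1), (-1 : ℚ) ^ j * (m.choose j) * (((j.choose i) : ℚ) * Msum i)
      = ((-1 : ℚ) ^ m * (if i = m then 1 else 0)) * Msum i := by
    intro i hi
    rw [← alt_inner m i (by simp only [Finset.mem_range] at hi; omega), Finset.sum_mul]
    exact Finset.sum_congr rfl fun j _ => by ring
  rw [Finset.sum_congr rfl h2]
  rw [Finset.sum_eq_single m]
  · simp
  · intro i _ hne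
    rw [if_neg hne]
    ring
  · intro h
    exact absurd (Finset.self_mem_range_succ m) h

lemma wsum (m : ℕ) :
    (-1 : ℚ) ^ (m + 1) * ∑ j ∈ range (m + 2), (-1 : ℚ) ^ j * ((m + 1).choose j) * (catalan j : ℚ)
      = Msum m - (-1 : ℚ) ^ m * ∑ j ∈ range (m + 1), (-1 : ℚ) ^ j * (m.choose j) * (catalan j : ℚ) := by
  have hpeel := Finset.sum_range_succ'
    (fun j => (-1 : ℚ) ^ j * ((m + 1).choose j) * (catalan j : ℚ)) (m + 1)
  rw [hpeel]
  have hsplit : ∀ j ∈ range (m + 1),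
      (-1 : ℚ) ^ (j + 1) * ((m + 1).choose (j + 1)) * (catalan (j + 1) : ℚ)
      = -((-1 : ℚ) ^ j * (m.choose j) * (catalan (j + 1) : ℚ))
        + (-1 : ℚ) ^ (j + 1) * (m.choose (j + 1)) * (catalan (j + 1) : ℚ) := by
    intro j _
    rw [Nat.choose_succ_succ m j]
    push_cast
    ring
  rw [Finset.sum_congr rfl hsplit, Finset.sum_add_distrib]
  rw [Finset.sum_neg_distrib]
  rw [lemE m]
  have hT2 : (∑ j ∈ range (m + 1), (-1 : ℚ) ^ (j + 1) * (m.choose (j + 1)) * (catalan (j + 1) : ℚ))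
        + (-1 : ℚ) ^ 0 * ((m + 1).choose 0) * (catalan 0 : ℚ)
      = ∑ j ∈ range (m + 1), (-1 : ℚ) ^ j * (m.choose j) * (catalan j : ℚ) := by
    have h0 : (-1 : ℚ) ^ 0 * ((m + 1).choose 0) * (catalan 0 : ℚ)
        = (-1 : ℚ) ^ 0 * ((m).choose 0) * (catalan 0 : ℚ) := by simp
    rw [h0, ← Finset.sum_range_succ' (fun j => (-1 : ℚ) ^ j * (m.choose j) * (catalan j : ℚ)) (m + 1)]
    rw [Finset.sum_range_succ, Nat.choose_eq_zero_of_lt (by omega)]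
    simp
  rw [add_assoc, hT2]
  have hu : ((-1 : ℚ) ^ m) ^ 2 = 1 := by
    rw [← pow_mul, mul_comm, pow_mul]
    norm_num
  rw [pow_succ]
  linear_combination (Msum m) * hu

lemma cat_div (k : ℕ) : ((2 * k).choose k : ℚ) / ((k : ℚ) + 1) = (catalan k : ℚ) := by
  have h1 : ((k : ℚ) + 1) * (catalan k : ℚ) = ((2 * k).choose k : ℚ) := by
    have h := succ_mul_catalan_eq_centralBinom k
    rw [Nat.centralBinom_eq_two_mul_choose] at h
    exact_mod_cast h
  have hne : ((k : ℚ) + 1) ≠ 0 := by positivity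
  rw [eq_comm, eq_div_iff hne]
  linear_combination h1

theorem sum_catalan_identity (n : ℕ) (hn : 0 < n) (hodd : Odd n) :
    ∑ k ∈ Finset.range n, ((2 * k).choose k : ℚ) / (k + 1) *
        (((n - 1).choose (2 * k) : ℚ) - (-1) ^ k * ((n - 1).choose k : ℚ)) =
      (1 / (n + 1 : ℚ)) * ∑ k ∈ Finset.range (n + 1),
        (-1 : ℚ) ^ k * ((n + 1).choose k : ℚ) * ((2 * n - 2 * k).choose (n - k) : ℚ) := by
  obtain ⟨m, rfl⟩ : ∃ m, n = m + 1 := ⟨n - 1, by omega⟩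
  have hEven : Even m := by
    rcases hodd with ⟨t, ht⟩
    exact ⟨t, by omega⟩
  simp only [Nat.add_sub_cancel]
  -- transform the right-hand side sum
  have hR : ∑ k ∈ Finset.range (m + 1 + 1),
      (-1 : ℚ) ^ k * ((m + 1 + 1).choose k : ℚ) * ((2 * (m + 1) - 2 * k).choose (m + 1 - k) : ℚ)
      = (((m + 1 : ℕ) : ℚ) + 1) * ((-1 : ℚ) ^ (m + 1)
          * ∑ j ∈ range (m + 2), (-1 : ℚ) ^ j * ((m + 1).choose j) * (catalan j : ℚ)) := by
    rw [← Finset.sum_range_reflect]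
    have hterm : ∀ j ∈ range (m + 2),
        (-1 : ℚ) ^ (m + 1 + 1 - 1 - j) * ((m + 1 + 1).choose (m + 1 + 1 - 1 - j) : ℚ)
          * ((2 * (m + 1) - 2 * (m + 1 + 1 - 1 - j)).choose (m + 1 - (m + 1 + 1 - 1 - j)) : ℚ)
        = (((m + 1 : ℕ) : ℚ) + 1) * ((-1 : ℚ) ^ (m + 1)
            * ((-1 : ℚ) ^ j * ((m + 1).choose j) * (catalan j : ℚ))) := by
      intro j hj
      have hjm : j ≤ m + 1 := by simp only [Finset.mem_range] at hj; omega
      rw [show m + 1 + 1 - 1 - j = m + 1 - j by omega]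
      rw [show 2 * (m + 1) - 2 * (m + 1 - j) = 2 * j by omega,
        show m + 1 - (m + 1 - j) = j by omega]
      have hsym : (m + 1 + 1).choose (m + 1 - j) = (m + 1 + 1).choose (j + 1) := by
        rw [← Nat.choose_symm (show j + 1 ≤ m + 1 + 1 by omega)]
        congr 1
        omega
      rw [hsym]
      have hsgn : (-1 : ℚ) ^ (m + 1 - j) = (-1 : ℚ) ^ (m + 1) * (-1 : ℚ) ^ j := by
        rw [← pow_add, show m + 1 + j = (m + 1 - j) + 2 * j by omega, pow_add, pow_mul]
        norm_num
      rw [hsgn]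
      have hcat : ((2 * j).choose j : ℚ) = ((j : ℚ) + 1) * (catalan j : ℚ) := by
        have h := succ_mul_catalan_eq_centralBinom j
        rw [Nat.centralBinom_eq_two_mul_choose] at h
        exact_mod_cast h.symm
      rw [hcat]
      have hch : ((m + 1 + 1).choose (j + 1) : ℚ) * ((j : ℚ) + 1)
          = (((m + 1 : ℕ) : ℚ) + 1) * ((m + 1).choose j : ℚ) := by
        have h := Nat.add_one_mul_choose_eq (m + 1) j
        exact_mod_cast congrArg (Nat.cast : ℕ → ℚ) h.symm
      linear_combination ((-1 : ℚ) ^ (m + 1) * (-1 : ℚ) ^ j * (catalan j : ℚ)) * hch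
    rw [Finset.sum_congr rfl hterm, ← Finset.mul_sum, ← Finset.mul_sum]
  rw [hR]
  have hne : (((m + 1 : ℕ) : ℚ) + 1) ≠ 0 := by positivity
  rw [← mul_assoc, one_div, inv_mul_cancel₀ hne, one_mul]
  rw [wsum m, Even.neg_one_pow hEven, one_mul]
  -- transform the left-hand side
  have hL : ∀ k ∈ range (m + 1),
      ((2 * k).choose k : ℚ) / ((k : ℚ) + 1) *
        ((m.choose (2 * k) : ℚ) - (-1) ^ k * (m.choose k : ℚ))
      = (m.choose (2 * k) : ℚ) * (catalan k : ℚ)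
        - (-1 : ℚ) ^ k * (m.choose k) * (catalan k : ℚ) := by
    intro k _
    rw [cat_div k]
    ring
  rw [Finset.sum_congr rfl hL, Finset.sum_sub_distrib]
  rfl
end

section
/- Let p ≥ 5 be a prime. Then ∑_{k=0}^{p-1} C(2k,k)·(H_{2k} - H_k) ≡ 0 (mod p), as a congruence of rational numbers. -/
open Finset Polynomial

private lemma prod_range_eq_ascFactorial (m k : ℕ) :
    ∏ j ∈ Finset.range k, (m + j) = m.ascFactorial k := by
  induction k with
  | zero => simp
  | succ n ih => rw [Finset.prod_range_succ, ih, Nat.ascFactorial_succ, mul_comm]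

private lemma prod_range_choose (m k : ℕ) :
    ∏ j ∈ Finset.range k, (m + 1 + j) = Nat.factorial k * (m + k).choose k := by
  have := prod_range_eq_ascFactorial (m+1) k
  rw [Nat.ascFactorial_eq_factorial_mul_choose] at this
  exact this

private lemma castL {p : ℕ} (hp : p.Prime) {m : ℕ} (hm : m < p) (n : ℕ) :
    (((n + p).choose m : ℕ) : ZMod p) = ((n.choose m : ℕ) : ZMod p) := by
  rw [Nat.add_choose_eq, Nat.cast_sum, Finset.sum_eq_single ((m, 0) : ℕ × ℕ)]
  · simp
  · rintro ⟨i, j⟩ hb hne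
    have hij : i + j = m := by simpa using hb
    have hj : j ≠ 0 := by rintro rfl; exact hne (by simp [← hij])
    have hd : p ∣ p.choose j := hp.dvd_choose_self hj (lt_of_le_of_lt (by omega) hm)
    push_cast
    rw [(ZMod.natCast_eq_zero_iff _ _).2 hd, mul_zero]
  · intro h; exact absurd (by simp) h

private lemma rec_nat (n t : ℕ) :
    (∑ k ∈ range (n+1), (2*k+(t+2)).choose k) + (∑ k ∈ range (n+1), (2*k+t).choose k)
      = (∑ k ∈ range (n+1), (2*k+(t+1)).choose k) + (2*n+t+2).choose n := by
  induction n with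
  | zero => simp
  | succ n ih =>
    rw [sum_range_succ, sum_range_succ (f := fun k => (2*k+t).choose k),
      sum_range_succ (f := fun k => (2*k+(t+1)).choose k)]
    have pas : (2*n+t+3).choose (n+1) = (2*n+t+2).choose n + (2*n+t+2).choose (n+1) :=
      Nat.choose_succ_succ' (2*n+t+2) n
    have e1 : 2*(n+1)+(t+2) = (2*n+t+3)+1 := by ring
    have e2 : 2*(n+1)+t = 2*n+t+2 := by ring
    have e3 : 2*(n+1)+(t+1) = 2*n+t+3 := by ring
    have e4 : 2*(n+1)+t+2 = (2*n+t+3)+1 := by ring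
    have e5 : 2*n+t+2+2 = 2*n+t+3+1 := by ring
    rw [e1, e2, e3, e5]
    omega

private def gp (p t : ℕ) : ℕ := ∑ k ∈ Finset.range p, (2*k+t).choose k

private lemma recK {p : ℕ} (hp : p.Prime) {t : ℕ} (ht : t + 2 ≤ p) :
    ((gp p (t+2) : ℕ) : ZMod p) = (gp p (t+1) : ℕ) - (gp p t : ℕ) := by
  obtain ⟨n, rfl⟩ : ∃ n, p = n + 1 := ⟨p - 1, (Nat.succ_pred_eq_of_pos hp.pos).symm⟩
  have h := rec_nat n t
  have hb : (((2*n+t+2).choose n : ℕ) : ZMod (n+1)) = 0 := by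
    have e : 2*n+t+2 = (n + t + 1) + (n + 1) := by ring
    rw [e, castL hp (by omega)]
    have e2 : n + t + 1 = t + (n + 1) := by ring
    rw [e2, castL hp (by omega)]
    rw [Nat.choose_eq_zero_of_lt (by omega)]
    simp
  have hcast := congrArg (fun x : ℕ => (x : ZMod (n+1))) h
  simp only [Nat.cast_add] at hcast
  rw [hb, add_zero] at hcast
  unfold gp
  rw [eq_sub_iff_add_eq]
  exact hcast

private lemma center {p q : ℕ} (hp : p.Prime) (hq : p = 2*q+1) :
    ((gp p (q+1) : ℕ) : ZMod p) = (gp p q : ℕ) := by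
  have hsplit1 : gp p (q+1) = (∑ k ∈ range q, (2*k+(q+1)).choose k)
      + ∑ i ∈ range (q+1), (2*(q+i)+(q+1)).choose (q+i) := by
    unfold gp
    rw [hq, show 2*q+1 = q + (q+1) by ring, Finset.sum_range_add]
  have hsplit2 : gp p q = (∑ k ∈ range (q+1), (2*k+q).choose k)
      + ∑ i ∈ range q, (2*((q+1)+i)+q).choose ((q+1)+i) := by
    unfold gp
    rw [hq, show 2*q+1 = (q+1) + q by ring, Finset.sum_range_add]
  rw [hsplit1, hsplit2]
  push_cast
  rw [add_comm ((∑ k ∈ range (q+1), ((2*k+q).choose k : ZMod p)))]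
  congr 1
  · -- ∑_{k<q} v k = ∑_{i<q} u (q+1+i)
    refine Finset.sum_congr rfl fun k hk => ?_
    have hk' : k < q := Finset.mem_range.1 hk
    have e : 2*((q+1)+k)+q = (2*k+q+1) + p := by rw [hq]; ring
    rw [e, castL hp (show (q+1)+k < p by omega)]
    have hsymm : (2*k+q+1).choose ((q+1)+k) = (2*k+q+1).choose k := by
      have := Nat.choose_symm (show k ≤ 2*k+q+1 by omega)
      rw [show 2*k+q+1-k = (q+1)+k by omega] at this
      exact this
    rw [hsymm, show 2*k+(q+1) = 2*k+q+1 by ring]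
  · -- ∑_{i<q+1} v (q+i) = ∑_{i<q+1} u i
    refine Finset.sum_congr rfl fun i hi => ?_
    have hi' : i < q + 1 := Finset.mem_range.1 hi
    have e : 2*(q+i)+(q+1) = (2*i+q) + p := by rw [hq]; ring
    rw [e, castL hp (show q+i < p by omega)]
    have hsymm : (2*i+q).choose (q+i) = (2*i+q).choose i := by
      have := Nat.choose_symm (show i ≤ 2*i+q by omega)
      rw [show 2*i+q-i = q+i by omega] at this
      exact this
    rw [hsymm]

private lemma symW {p q : ℕ} (hp : p.Prime) (hq : p = 2*q+1) :
    ∀ j, j ≤ q → ((gp p (q+1-j) : ℕ) : ZMod p) = (gp p (q+j) : ℕ) := by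
  intro j
  induction j using Nat.strong_induction_on with
  | _ j ih =>
    match j with
    | 0 => intro _; simpa using center hp hq
    | 1 => intro _; simpa using (center hp hq).symm
    | (j+2) =>
      intro hjq
      set t := q - 1 - j with hts
      have h1 : q + 1 - (j+2) = t := by omega
      have h2 : q + 1 - (j+1) = t + 1 := by omega
      have h3 : q + 1 - j = t + 2 := by omega
      have hL : ((gp p (t+2) : ℕ) : ZMod p) = (gp p (t+1) : ℕ) - (gp p t : ℕ) :=
        recK hp (by omega)
      have hR : ((gp p (q+j+2) : ℕ) : ZMod p) = (gp p (q+j+1) : ℕ) - (gp p (q+j) : ℕ) :=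
        recK hp (by omega)
      have w1 := ih (j+1) (by omega) (by omega)
      have w0 := ih j (by omega) (by omega)
      rw [h2] at w1
      rw [h3] at w0
      rw [h1]
      have : ((gp p t : ℕ) : ZMod p) = (gp p (t+1) : ℕ) - (gp p (t+2) : ℕ) := by
        rw [hL]; ring
      rw [this, w1, w0, show q+(j+2) = q+j+2 by ring, hR,
        show q+(j+1) = q+j+1 by ring]

private lemma symFull {p q : ℕ} (hp : p.Prime) (hq : p = 2*q+1) {n : ℕ}
    (h1 : 1 ≤ n) (h2 : n ≤ 2*q) :
    ((gp p n : ℕ) : ZMod p) = (gp p (p - n) : ℕ) := by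
  rcases le_or_gt n (q+1) with h | h
  · have := symW hp hq (q+1-n) (by omega)
    rw [show q+1-(q+1-n) = n by omega, show q+(q+1-n) = p - n by omega] at this
    exact this
  · have := symW hp hq (q+1-(p-n)) (by omega)
    rw [show q+1-(q+1-(p-n)) = p - n by omega,
      show q+(q+1-(p-n)) = n by omega] at this
    exact this.symm

noncomputable def Pz (p : ℕ) : Polynomial ℤ :=
  ∑ k ∈ Finset.range p, Polynomial.C ((Nat.factorial (p-1) / Nat.factorial k : ℕ) : ℤ)
    * ∏ j ∈ Finset.range k, (Polynomial.X + Polynomial.C ((k+1+j : ℕ) : ℤ))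

private lemma Pz_eval (p : ℕ) (t : ℕ) :
    (Pz p).eval (t : ℤ) = ((Nat.factorial (p-1) * gp p t : ℕ) : ℤ) := by
  unfold Pz gp
  rw [Polynomial.eval_finset_sum, Finset.mul_sum, Nat.cast_sum]
  refine Finset.sum_congr rfl fun k hk => ?_
  have hk' : k < p := Finset.mem_range.1 hk
  rw [Polynomial.eval_mul, Polynomial.eval_C, Polynomial.eval_prod]
  have h1 : ∀ j ∈ Finset.range k,
      (Polynomial.X + Polynomial.C ((k+1+j : ℕ) : ℤ)).eval (t:ℤ) = (((k+t)+1+j : ℕ) : ℤ) :=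
    fun j _ => by
      rw [Polynomial.eval_add, Polynomial.eval_X, Polynomial.eval_C]; push_cast; ring
  rw [Finset.prod_congr rfl h1, ← Nat.cast_prod, prod_range_choose, ← Nat.cast_mul]
  congr 1
  rw [← mul_assoc, Nat.div_mul_cancel (Nat.factorial_dvd_factorial (by omega)),
    show k+t+k = 2*k+t by ring]

private lemma derivEval (k : ℕ) (b : ℕ → ℚ) (hb : ∀ j, j < k → b j ≠ 0) :
    (Polynomial.derivative (∏ j ∈ Finset.range k, (Polynomial.X + Polynomial.C (b j)))).eval 0
      = (∏ j ∈ Finset.range k, b j) * ∑ j ∈ Finset.range k, (b j)⁻¹ := by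
  induction k with
  | zero => simp
  | succ n ih =>
    rw [Finset.prod_range_succ, Polynomial.derivative_mul, Polynomial.eval_add,
      Polynomial.eval_mul, Polynomial.eval_mul, ih (fun j hj => hb j (by omega))]
    rw [Polynomial.derivative_add, Polynomial.derivative_X, Polynomial.derivative_C]
    simp only [Polynomial.eval_add, Polynomial.eval_X, Polynomial.eval_C, add_zero,
      Polynomial.eval_prod, Polynomial.eval_one, mul_one]
    rw [Finset.prod_range_succ, Finset.sum_range_succ]
    have hbn : b n ≠ 0 := hb n (by omega)
    simp only [zero_add]
    field_simp

private lemma H_diff (k : ℕ) :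
    H (2*k) - H k = ∑ j ∈ Finset.range k, (((k+1+j : ℕ) : ℚ))⁻¹ := by
  unfold H
  rw [two_mul, Finset.sum_range_add, add_sub_cancel_left]
  refine Finset.sum_congr rfl fun j _ => ?_
  rw [one_div]
  congr 1
  push_cast
  ring

private lemma Q_identity (p : ℕ) :
    ((Nat.factorial (p-1) : ℚ)) * ∑ k ∈ Finset.range p, ((2*k).choose k : ℚ) * (H (2*k) - H k)
      = (((Polynomial.derivative (Pz p)).eval 0 : ℤ) : ℚ) := by
  have hmap : (((Polynomial.derivative (Pz p)).eval 0 : ℤ) : ℚ)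
      = (Polynomial.derivative ((Pz p).map (Int.castRingHom ℚ))).eval 0 := by
    rw [Polynomial.derivative_map, Polynomial.eval_map,
      show (0 : ℚ) = (Int.castRingHom ℚ) 0 by simp, Polynomial.eval₂_at_apply]
    simp
  rw [hmap]
  unfold Pz
  rw [Polynomial.map_sum, Polynomial.derivative_sum, Polynomial.eval_finset_sum,
    Finset.mul_sum]
  refine Finset.sum_congr rfl fun k hk => ?_
  have hk' : k < p := Finset.mem_range.1 hk
  rw [Polynomial.map_mul, Polynomial.map_C, Polynomial.map_prod]
  simp only [Polynomial.map_add, Polynomial.map_X, Polynomial.map_C, Int.coe_castRingHom,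
    Int.cast_natCast]
  rw [Polynomial.derivative_C_mul, Polynomial.eval_mul, Polynomial.eval_C]
  rw [derivEval k (fun j => ((k+1+j : ℕ) : ℚ)) (fun j hj => by positivity)]
  rw [← H_diff, ← Nat.cast_prod, prod_range_choose]
  have hN : (p-1).factorial / k.factorial * (k.factorial * ((k+k).choose k))
      = (p-1).factorial * ((2*k).choose k) := by
    rw [← mul_assoc, Nat.div_mul_cancel (Nat.factorial_dvd_factorial (by omega : k ≤ p - 1)),
      show k+k = 2*k by ring]
  rw [show ((p-1).factorial : ℚ) * (((2*k).choose k : ℚ) * (H (2*k) - H k))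
      = (((p-1).factorial * ((2*k).choose k) : ℕ) : ℚ) * (H (2*k) - H k) by push_cast; ring,
    ← hN, Nat.cast_mul]
  ring

private lemma Nbar_zero {p q : ℕ} (hp : p.Prime) (hq : p = 2*q+1) (hq2 : 2 ≤ q) :
    (((Polynomial.derivative (Pz p)).eval 0 : ℤ) : ZMod p) = 0 := by
  haveI : Fact p.Prime := ⟨hp⟩
  set f : ℤ →+* ZMod p := Int.castRingHom (ZMod p) with hf
  set Pk : Polynomial (ZMod p) := (Pz p).map f with hPk
  have hcast0 : (((Polynomial.derivative (Pz p)).eval 0 : ℤ) : ZMod p)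
      = (Polynomial.derivative Pk).eval 0 := by
    rw [hPk, Polynomial.derivative_map, Polynomial.eval_map,
      show (0 : ZMod p) = f 0 by simp, Polynomial.eval₂_at_apply]
    simp [hf]
  have heval : ∀ t : ℕ, Pk.eval ((t : ℕ) : ZMod p)
      = ((Nat.factorial (p-1) * gp p t : ℕ) : ZMod p) := by
    intro t
    have h0 : ((t : ℕ) : ZMod p) = f ((t : ℕ) : ℤ) := by simp [hf]
    rw [hPk, h0, Polynomial.eval_map, Polynomial.eval₂_at_apply, Pz_eval]
    simp [hf]
  have heven : ∀ x : ZMod p, Pk.eval (-x) = Pk.eval x := by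
    intro x
    rcases eq_or_ne x 0 with rfl | hx
    · rw [neg_zero]
    · have hval : ((x.val : ℕ) : ZMod p) = x := ZMod.natCast_zmod_val x
      have hv1 : 1 ≤ x.val := by
        rcases Nat.eq_zero_or_pos x.val with h | h
        · exact absurd ((ZMod.val_eq_zero x).1 h) hx
        · exact h
      have hv2 : x.val < p := ZMod.val_lt x
      have hneg : -x = ((p - x.val : ℕ) : ZMod p) := by
        rw [Nat.cast_sub (le_of_lt hv2), ZMod.natCast_self, hval, zero_sub]
      rw [hneg, ← hval, heval, heval, ZMod.val_cast_of_lt hv2,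
        Nat.cast_mul, Nat.cast_mul, symFull hp hq hv1 (by omega)]
  have hdeg : Pk.natDegree < p := by
    have h1 : (Pz p).natDegree ≤ p - 1 := by
      unfold Pz
      apply Polynomial.natDegree_sum_le_of_forall_le
      intro k hk
      have hk' : k < p := Finset.mem_range.1 hk
      refine le_trans (Polynomial.natDegree_C_mul_le _ _) ?_
      refine le_trans (Polynomial.natDegree_prod_le _ _) ?_
      refine le_trans (Finset.sum_le_sum (g := fun _ => 1)
        (fun j _ => le_of_eq (Polynomial.natDegree_X_add_C _))) ?_
      rw [Finset.sum_const, smul_eq_mul, mul_one, Finset.card_range]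
      omega
    have h2 : Pk.natDegree ≤ (Pz p).natDegree := by
      rw [hPk]; exact Polynomial.natDegree_map_le
    omega
  have hlag : Pk = ∑ t : ZMod p,
      Polynomial.C (Pk.eval t) * (1 - (Polynomial.X - Polynomial.C t)^(p-1)) := by
    have hdiff : Pk - (∑ t : ZMod p,
        Polynomial.C (Pk.eval t) * (1 - (Polynomial.X - Polynomial.C t)^(p-1))) = 0 := by
      apply Polynomial.eq_zero_of_natDegree_lt_card_of_eval_eq_zero' _ Finset.univ
      · intro s _
        rw [Polynomial.eval_sub, Polynomial.eval_finset_sum,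
          Finset.sum_eq_single_of_mem s (Finset.mem_univ s)]
        · simp only [Polynomial.eval_mul, Polynomial.eval_C, Polynomial.eval_sub,
            Polynomial.eval_one, Polynomial.eval_pow, Polynomial.eval_X]
          rw [sub_self, zero_pow (by omega : p - 1 ≠ 0)]
          ring
        · intro t _ hts
          simp only [Polynomial.eval_mul, Polynomial.eval_C, Polynomial.eval_sub,
            Polynomial.eval_one, Polynomial.eval_pow, Polynomial.eval_X]
          rw [ZMod.pow_card_sub_one_eq_one (sub_ne_zero_of_ne (Ne.symm hts))]
          ring
      · have hb : (∑ t : ZMod p, Polynomial.C (Pk.eval t)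
            * (1 - (Polynomial.X - Polynomial.C t)^(p-1))).natDegree ≤ p - 1 := by
          apply Polynomial.natDegree_sum_le_of_forall_le
          intro t _
          refine le_trans (Polynomial.natDegree_C_mul_le _ _) ?_
          refine le_trans (Polynomial.natDegree_sub_le _ _) ?_
          rw [Polynomial.natDegree_one]
          refine max_le (by omega) (le_trans Polynomial.natDegree_pow_le ?_)
          rw [Polynomial.natDegree_X_sub_C]
          omega
        have hcard : (Finset.univ : Finset (ZMod p)).card = p := by
          rw [Finset.card_univ, ZMod.card]
        rw [hcard]
        have := Polynomial.natDegree_sub_le Pk (∑ t : ZMod p,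
          Polynomial.C (Pk.eval t) * (1 - (Polynomial.X - Polynomial.C t)^(p-1)))
        have hdeg' : Pk.natDegree ≤ p - 1 := by omega
        omega
    exact eq_of_sub_eq_zero hdiff
  have hm1 : ((p - 1 : ℕ) : ZMod p) = -1 := by
    rw [Nat.cast_sub hp.one_le, ZMod.natCast_self, zero_sub, Nat.cast_one]
  have hderiv : (Polynomial.derivative Pk).eval 0
      = ∑ t : ZMod p, Pk.eval t * (-t)^(p-2) := by
    conv_lhs => rw [hlag]
    rw [Polynomial.derivative_sum, Polynomial.eval_finset_sum]
    refine Finset.sum_congr rfl fun t _ => ?_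
    rw [Polynomial.derivative_C_mul, Polynomial.derivative_sub, Polynomial.derivative_one,
      Polynomial.derivative_pow, Polynomial.derivative_X_sub_C, zero_sub]
    simp only [mul_one, Polynomial.eval_mul, Polynomial.eval_neg, Polynomial.eval_C,
      Polynomial.eval_pow, Polynomial.eval_sub, Polynomial.eval_X, Polynomial.eval_natCast]
    rw [show p - 1 - 1 = p - 2 by omega, hm1]
    ring
  set T := ∑ t : ZMod p, Pk.eval t * t^(p-2) with hT
  have hodd : Odd (p - 2) := ⟨q - 1, by omega⟩
  have h1 : (Polynomial.derivative Pk).eval 0 = -T := by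
    rw [hderiv, hT, ← Finset.sum_neg_distrib]
    refine Finset.sum_congr rfl fun t _ => ?_
    rw [hodd.neg_pow]
    ring
  have h2 : (Polynomial.derivative Pk).eval 0 = T := by
    rw [hderiv, hT]
    refine Fintype.sum_equiv (Equiv.neg (ZMod p)) _ _ fun t => ?_
    simp only [Equiv.neg_apply, neg_neg]
    rw [heven t]
  have h2T : (2 : ZMod p) * T = 0 := by
    have := h1.symm.trans h2
    linear_combination -this
  have h2ne : (2 : ZMod p) ≠ 0 := by
    intro h
    have hd : p ∣ 2 := (ZMod.natCast_eq_zero_iff 2 p).1 (by exact_mod_cast h)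
    have := Nat.le_of_dvd (by norm_num) hd
    omega
  have hT0 : T = 0 := by
    rcases mul_eq_zero.1 h2T with h | h
    · exact absurd h h2ne
    · exact h
  rw [hcast0, h2, hT0]

theorem sum_central_binom_harmonic (p : ℕ) (hp : p.Prime) (hp5 : 5 ≤ p) :
    ratCongr p 1 (∑ k ∈ Finset.range p, ((2 * k).choose k : ℚ) * (H (2 * k) - H k)) 0 := by
  obtain ⟨q, hq⟩ : ∃ q, p = 2*q+1 := by
    obtain ⟨q, hq⟩ := hp.odd_of_ne_two (by omega)
    exact ⟨q, by omega⟩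
  have hq2 : 2 ≤ q := by omega
  set N : ℤ := (Polynomial.derivative (Pz p)).eval 0 with hN
  have hdvd : (p : ℤ) ∣ N := by
    rw [← ZMod.intCast_zmod_eq_zero_iff_dvd]
    exact Nbar_zero hp hq hq2
  obtain ⟨M, hM⟩ := hdvd
  refine ⟨M, (Nat.factorial (p-1) : ℤ), ?_, ?_⟩
  · intro hdvd'
    have h1 : p ∣ Nat.factorial (p-1) := by exact_mod_cast hdvd'
    have := (Nat.Prime.dvd_factorial hp).1 h1
    omega
  · rw [sub_zero, pow_one]
    have hQ := Q_identity p
    rw [← hN] at hQ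
    push_cast [hM] at hQ ⊢
    linear_combination hQ
end

section
/- Let p ≥ 5 be a prime and r a non-negative integer. Then ∑_{k=rp}^{(r+1)p-1} C(2k,k) ≡ (p/3)·C(2r,r) (mod p²), where (p/3) denotes the Legendre symbol of p modulo 3. -/
/-- The Legendre symbol `(p/3)`: `1` if `p ≡ 1 (mod 3)` and `-1` if `p ≡ 2 (mod 3)`. -/
def leg3 (p : ℕ) : ℤ := if p % 3 = 1 then 1 else -1

namespace BSCB
open Polynomial
noncomputable section

def m : ℤ[X] := X^2 + X + 1

lemma m_monic : m.Monic := by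
  unfold m
  rw [add_assoc]
  exact (monic_X_pow 2).add_of_left (by
    have : degree (X + 1 : ℤ[X]) ≤ 1 := by
      simpa using degree_X_add_C (1:ℤ) |>.le
    calc degree (X + 1 : ℤ[X]) ≤ 1 := this
      _ < 2 := by norm_num
      _ = degree (X^2 : ℤ[X]) := by simp [degree_X_pow])

lemma m_ne_zero : m ≠ 0 := m_monic.ne_zero

lemma m_natDegree : m.natDegree = 2 := by
  unfold m; compute_degree!

/-- partial sums of central binomial coefficients -/
def S (n : ℕ) : ℤ := ∑ k ∈ Finset.range n, ((2 * k).choose k : ℤ)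

/-- the geometric-sum polynomial -/
def P : ℕ → ℤ[X]
  | 0 => 0
  | n+1 => (X+1)^(2*n) + X * P n

lemma m_mul_P : ∀ n, m * P n = (X+1)^(2*n) - X^n
  | 0 => by simp [P]
  | n+1 => by
    have ih := m_mul_P n
    show m * ((X+1)^(2*n) + X * P n) = _
    rw [mul_add, mul_comm X (P n), ← mul_assoc, ih]
    unfold m
    ring

lemma coeff_P : ∀ n, (P (n+1)).coeff n = S (n+1)
  | 0 => by simp [P, S]
  | n+1 => by
    have ih := coeff_P n
    show ((X+1)^(2*(n+1)) + X * P (n+1)).coeff (n+1) = _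
    have h1 : ((X+1:ℤ[X])^(2*(n+1))).coeff (n+1) = ((2*(n+1)).choose (n+1) : ℤ) := by
      rw [coeff_X_add_one_pow]
    rw [coeff_add, coeff_X_mul, ih, h1]
    rw [show S (n+1+1) = S (n+1) + ((2*(n+1)).choose (n+1) : ℤ) from Finset.sum_range_succ _ _]
    ring

abbrev ω : AdjoinRoot m := AdjoinRoot.root m

lemma omega_rel : ω^2 + ω + 1 = 0 := by
  have h : AdjoinRoot.mk m m = 0 := AdjoinRoot.mk_self
  rw [show m = X^2 + X + 1 from rfl] at h
  simp only [map_add, map_pow, map_one, AdjoinRoot.mk_X] at h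
  exact h

lemma omega_cube : ω^3 = 1 := by
  have h : ω^3 - 1 = (ω - 1) * (ω^2 + ω + 1) := by ring
  rw [omega_rel, mul_zero, sub_eq_zero] at h
  exact h

lemma omega_pow (t s : ℕ) : ω^(3*t+s) = ω^s := by
  rw [pow_add, pow_mul, omega_cube, one_pow, one_mul]

lemma dvd_of_omega_zero (g : ℤ[X]) (h : AdjoinRoot.mk m g = 0) : m ∣ g :=
  AdjoinRoot.mk_eq_zero.mp h

section
variable (p : ℕ) (hp : p.Prime) (hp5 : 5 ≤ p)
include hp hp5

lemma p_mod3 : p % 3 = 1 ∨ p % 3 = 2 := by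
  have h3 : ¬ (3 ∣ p) := by
    intro h
    have := (Nat.prime_dvd_prime_iff_eq (by norm_num) hp).mp h
    omega
  omega

lemma p_odd : Odd p := hp.odd_of_ne_two (by omega)

lemma omega_p_aux : 1 + ω^p + (ω^p)^2 = 0 := by
  have hd := p_mod3 p hp hp5
  have e : ω ^ p = ω ^ (p % 3) := by
    conv_lhs => rw [show p = 3 * (p / 3) + p % 3 by omega]
    exact omega_pow _ _
  rcases hd with h | h <;> rw [e, h] <;>
    [skip; rw [show ((ω^2)^2 : AdjoinRoot m) = ω^3 * ω by ring, omega_cube, one_mul]] <;>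
    linear_combination omega_rel

lemma m_dvd_frob : m ∣ ((X+1)^p - 1 - X^p : ℤ[X]) := by
  apply dvd_of_omega_zero
  have hmk : AdjoinRoot.mk m ((X+1)^p - 1 - X^p : ℤ[X]) = (ω+1)^p - 1 - ω^p := by
    simp only [map_sub, map_pow, map_add, map_one, AdjoinRoot.mk_X]
  rw [hmk]
  have h1 : ω + 1 = -ω^2 := by linear_combination omega_rel
  have h2 : (ω+1)^p = -(ω^p)^2 := by
    rw [h1, (p_odd p hp hp5).neg_pow, ← pow_mul, show 2*p = p*2 by ring, pow_mul]
  rw [h2]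
  linear_combination -(omega_p_aux p hp hp5)

lemma m_dvd_cyc : m ∣ ((X^p)^2 + X^p + 1 : ℤ[X]) := by
  apply dvd_of_omega_zero
  have hmk : AdjoinRoot.mk m (((X^p)^2 + X^p + 1 : ℤ[X])) = (ω^p)^2 + ω^p + 1 := by
    simp only [map_add, map_pow, map_one, AdjoinRoot.mk_X]
  rw [hmk]
  linear_combination omega_p_aux p hp hp5


end

section
variable (p : ℕ) (hp : p.Prime) (hp5 : 5 ≤ p)
include hp hp5

lemma frob_coeff_dvd : C (p:ℤ) ∣ ((X+1)^p - 1 - X^p : ℤ[X]) := by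
  rw [C_dvd_iff_dvd_coeff]
  intro i
  simp only [coeff_sub, coeff_X_add_one_pow, coeff_one, coeff_X_pow]
  rcases eq_or_ne i 0 with h0 | h0
  · subst h0
    rw [if_pos rfl, if_neg (by omega)]
    simp
  rcases eq_or_ne i p with hip | hip
  · subst hip
    rw [if_neg h0, if_pos rfl]
    simp
  rw [if_neg h0, if_neg hip]
  rcases lt_or_ge i p with hlt | hge
  · have : (p:ℕ) ∣ p.choose i := hp.dvd_choose_self h0 hlt
    simpa using Int.natCast_dvd_natCast.mpr this
  · have hgt : p < i := lt_of_le_of_ne hge (Ne.symm hip)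
    simp [Nat.choose_eq_zero_of_lt hgt]

lemma exists_F : ∃ F : ℤ[X], (X+1:ℤ[X])^p = 1 + X^p + C (p:ℤ) * (m * F) ∧
    ∀ i, p - 2 ≤ i → F.coeff i = 0 := by
  obtain ⟨E, hE⟩ := frob_coeff_dvd p hp hp5
  have hp0 : (p:ℤ) ≠ 0 := by exact_mod_cast hp.ne_zero
  have hCp : (C (p:ℤ)) ≠ 0 := by simpa using hp0
  have hdm : m.degree = (2:ℕ) := by
    rw [degree_eq_natDegree m_ne_zero, m_natDegree]
  have hmG := m_dvd_frob p hp hp5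
  rw [hE] at hmG
  have hrem : E %ₘ m = 0 := by
    have hdecomp := modByMonic_add_div E m
    have h2 : m ∣ C (p:ℤ) * (E %ₘ m) := by
      obtain ⟨W, hW⟩ := hmG
      refine ⟨W - C (p:ℤ) * (E /ₘ m), ?_⟩
      have : C (p:ℤ) * (E %ₘ m + m * (E /ₘ m)) = m * W := by rw [hdecomp, ← hW]
      linear_combination this
    have hdeg : degree (C (p:ℤ) * (E %ₘ m)) < degree m := by
      calc degree (C (p:ℤ) * (E %ₘ m)) ≤ degree (C (p:ℤ)) + degree (E %ₘ m) := degree_mul_le _ _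
        _ = degree (E %ₘ m) := by rw [degree_C hp0, zero_add]
        _ < degree m := degree_modByMonic_lt E m_monic
    have := eq_zero_of_dvd_of_degree_lt h2 hdeg
    rcases mul_eq_zero.mp this with h | h
    · exact absurd h hCp
    · exact h
  obtain ⟨F, hF⟩ := (modByMonic_eq_zero_iff_dvd m_monic).mp hrem
  have hGdeg : ((X+1:ℤ[X])^p - 1 - X^p).natDegree ≤ p - 1 := by
    rw [natDegree_le_iff_coeff_eq_zero]
    intro i hi
    have h0 : i ≠ 0 := by omega
    simp only [coeff_sub, coeff_X_add_one_pow, coeff_one, coeff_X_pow, if_neg h0]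
    rcases eq_or_ne i p with hip | hip
    · subst hip; simp
    · have hgt : p < i := by omega
      simp [Nat.choose_eq_zero_of_lt hgt, hip]
  have hEdeg : E.natDegree ≤ p - 1 := by
    have h := natDegree_C_mul (p := E) hp0
    rw [← hE] at h
    rw [← h]; exact hGdeg
  have hFcoeff : ∀ i, p - 2 ≤ i → F.coeff i = 0 := by
    intro i hi
    rcases eq_or_ne F 0 with h | h
    · simp [h]
    · have : E.natDegree = 2 + F.natDegree := by
        rw [hF, natDegree_mul m_ne_zero h, m_natDegree]
      apply coeff_eq_zero_of_natDegree_lt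
      omega
  exact ⟨F, by rw [← hF]; linear_combination hE, hFcoeff⟩


end

/-- periodic coefficients of 1/(X²+X+1) -/
def c (t : ℕ) : ℤ := if t % 3 = 0 then 1 else if t % 3 = 1 then -1 else 0

lemma c_step (s : ℕ) : c s + c (s+1) + c (s+2) = 0 := by
  have h : s % 3 = 0 ∨ s % 3 = 1 ∨ s % 3 = 2 := by omega
  rcases h with h | h | h <;>
    · have h1 : (s+1) % 3 = (s%3+1) % 3 := by omega
      have h2 : (s+2) % 3 = (s%3+2) % 3 := by omega
      simp [c, h, h1, h2]

lemma m_mul_split (A : ℤ[X]) : m * A = A + X * A + X^2 * A := by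
  unfold m; ring

lemma coeff_mA_zero (A : ℤ[X]) : (m * A).coeff 0 = A.coeff 0 := by
  rw [m_mul_split, coeff_add, coeff_add]
  rw [mul_coeff_zero, mul_coeff_zero]
  simp

lemma coeff_mA_one (A : ℤ[X]) : (m * A).coeff 1 = A.coeff 1 + A.coeff 0 := by
  rw [m_mul_split, coeff_add, coeff_add]
  rw [show (X^2 * A : ℤ[X]) = X * (X * A) by ring]
  rw [show (1:ℕ) = 0 + 1 from rfl, coeff_X_mul, coeff_X_mul]
  rw [mul_coeff_zero]
  simp

lemma coeff_mA_rec (A : ℤ[X]) (s : ℕ) :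
    (m * A).coeff (s+2) = A.coeff (s+2) + A.coeff (s+1) + A.coeff s := by
  rw [m_mul_split, coeff_add, coeff_add]
  rw [show s + 2 = (s + 1) + 1 from rfl, coeff_X_mul]
  rw [show s + 1 + 1 = s + 2 from rfl, coeff_X_pow_mul A 2 s]


section
variable (p : ℕ) (hp : p.Prime) (hp5 : 5 ≤ p)
include hp hp5

lemma cyc_coeff_small (i : ℕ) (h0 : i ≠ 0) (hip : i < p) :
    ((X^p)^2 + X^p + 1 : ℤ[X]).coeff i = 0 := by
  rw [← pow_mul]
  simp only [coeff_add, coeff_one, coeff_X_pow]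
  rw [if_neg (by omega), if_neg (by omega), if_neg h0]
  ring

lemma exists_A : ∃ A : ℤ[X], ((X^p)^2 + X^p + 1 : ℤ[X]) = m * A ∧
    A.coeff (p-1) = leg3 p ∧ A.natDegree ≤ 2*p - 2 := by
  obtain ⟨A, hA⟩ := m_dvd_cyc p hp hp5
  have hAne : A ≠ 0 := by
    intro h
    rw [h, mul_zero] at hA
    have := coeff_mA_zero (0 : ℤ[X])
    have h0 : ((X^p)^2 + X^p + 1 : ℤ[X]).coeff 0 = 1 := by
      rw [← pow_mul]
      simp only [coeff_add, coeff_one, coeff_X_pow]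
      rw [if_neg (by omega), if_neg (by omega)]
      norm_num
    rw [hA] at h0
    simp at h0
  have hdegLHS : ((X^p)^2 + X^p + 1 : ℤ[X]).natDegree ≤ 2*p := by
    rw [natDegree_le_iff_coeff_eq_zero]
    intro i hi
    rw [← pow_mul]
    simp only [coeff_add, coeff_one, coeff_X_pow]
    rw [if_neg (by omega), if_neg (by omega), if_neg (by omega)]
    ring
  have hdegA : A.natDegree ≤ 2*p - 2 := by
    rw [hA, natDegree_mul m_ne_zero hAne, m_natDegree] at hdegLHS
    omega
  -- coefficient pattern
  have Hc : ∀ s : ℕ, s + 2 ≤ p → (A.coeff s = c s ∧ A.coeff (s+1) = c (s+1)) := by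
    intro s
    induction s with
    | zero =>
      intro _
      have h0 : A.coeff 0 = 1 := by
        have := coeff_mA_zero A
        rw [← hA] at this
        rw [← this]
        rw [← pow_mul]
        simp only [coeff_add, coeff_one, coeff_X_pow]
        rw [if_neg (by omega), if_neg (by omega)]
        norm_num
      have h1 : A.coeff 1 = -1 := by
        have := coeff_mA_one A
        rw [← hA, cyc_coeff_small p hp hp5 1 (by omega) (by omega)] at this
        rw [h0] at this
        linarith
      exact ⟨by simp [h0, c], by simp [h1, c]⟩
    | succ s ih =>
      intro hs
      obtain ⟨ih0, ih1⟩ := ih (by omega)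
      refine ⟨ih1, ?_⟩
      have hrec := coeff_mA_rec A s
      rw [← hA, cyc_coeff_small p hp hp5 (s+2) (by omega) (by omega)] at hrec
      rw [ih0, ih1] at hrec
      have := c_step s
      linarith
  have hcoeffA : A.coeff (p-1) = c (p-1) := by
    have h := (Hc (p-2) (by omega)).2
    rwa [show p - 2 + 1 = p - 1 by omega] at h
  refine ⟨A, hA, ?_, hdegA⟩
  rw [hcoeffA]
  rcases p_mod3 p hp hp5 with h | h
  · rw [show c (p-1) = 1 by unfold c; rw [if_pos (by omega)], leg3, if_pos h]
  · rw [show c (p-1) = -1 by unfold c; rw [if_neg (by omega), if_pos (by omega)],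
      leg3, if_neg (by omega)]


end

lemma pow_add_linear {R : Type*} [CommRing R] (a b : R) :
    ∀ M : ℕ, 1 ≤ M → ∃ d, (a+b)^M = a^M + (M:R) * a^(M-1) * b + b^2 * d := by
  intro M
  induction M with
  | zero => omega
  | succ M ih =>
    intro _
    rcases Nat.eq_zero_or_pos M with h | hM
    · subst h
      refine ⟨0, ?_⟩
      push_cast
      simp only [pow_one, pow_zero]
      ring
    obtain ⟨d, hd⟩ := ih hM
    refine ⟨(M:R) * a^(M-1) + (a+b)*d, ?_⟩
    have h1 : a^M = a^(M-1) * a := by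
      conv_lhs => rw [show M = (M-1)+1 by omega]
      rw [pow_succ]
    have h2 : a^(M+1) = a^(M-1) * a * a := by
      rw [← h1, pow_succ]
    rw [pow_succ, hd, show M + 1 - 1 = M from rfl, h1, h2]
    push_cast
    ring


section
variable (p : ℕ) (hp : p.Prime) (hp5 : 5 ≤ p)
include hp hp5

lemma main_step (K : ℕ) : ∃ c : ℤ, S (K*p + p) = leg3 p * S (K+1) + (p:ℤ)^2 * c := by
  have hppos : 0 < p := by omega
  obtain ⟨F, hFrob, hFcoeff⟩ := exists_F p hp hp5
  obtain ⟨A, hA, hAcoeff, hAdeg⟩ := exists_A p hp hp5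
  obtain ⟨d, hbin⟩ := pow_add_linear (X^p + 1 : ℤ[X]) (C (p:ℤ) * (m * F)) (2*K+2) (by omega)
  rw [show 2*K+2-1 = 2*K+1 from rfl] at hbin
  have hexpand : (m * A) * expand ℤ p (P (K+1)) = (X^p+1)^(2*K+2) - (X^p)^(K+1) := by
    have h1 : expand ℤ p (m * P (K+1)) = (m * A) * expand ℤ p (P (K+1)) := by
      rw [map_mul]
      congr 1
      rw [← hA]
      unfold m
      rw [map_add, map_add, map_pow, expand_X, map_one]
    have h2 : expand ℤ p (m * P (K+1)) = (X^p+1)^(2*K+2) - (X^p)^(K+1) := by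
      rw [m_mul_P (K+1), map_sub, map_pow, map_pow, expand_X, map_add, expand_X, map_one]
      rw [show 2*(K+1) = 2*K+2 by ring]
    rw [← h1, h2]
  have key : m * P (K*p + p) = m * (A * expand ℤ p (P (K+1))
      + (↑(2*K+2) : ℤ[X]) * ((X^p+1)^(2*K+1) * (C (p:ℤ) * F))
      + C (p:ℤ)^2 * (m * (F^2 * d))) := by
    rw [m_mul_P (K*p + p)]
    rw [show 2*(K*p+p) = p*(2*K+2) by ring, pow_mul]
    rw [show K*p + p = p*(K+1) by ring, pow_mul]
    rw [hFrob]
    rw [show (1 + X^p + C (p:ℤ) * (m * F) : ℤ[X]) = (X^p + 1) + C (p:ℤ) * (m*F) by ring]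
    rw [hbin]
    linear_combination -hexpand
  have hcancel := mul_left_cancel₀ m_ne_zero key
  set n₀ := K*p + p - 1 with hn₀
  have hsucc : K*p + p = n₀ + 1 := by omega
  -- coefficient of the main term
  have hmain : (A * expand ℤ p (P (K+1))).coeff n₀ = leg3 p * S (K+1) := by
    rw [coeff_mul]
    rw [Finset.sum_eq_single ((p-1 : ℕ), K*p)]
    · dsimp only
      rw [coeff_expand hppos, if_pos (dvd_mul_left p K), Nat.mul_div_cancel K hppos]
      rw [coeff_P K, hAcoeff]
    · rintro ⟨i, j⟩ hb hne
      rw [Finset.HasAntidiagonal.mem_antidiagonal] at hb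
      dsimp only at hb hne ⊢
      rw [coeff_expand hppos]
      by_cases hdvd : p ∣ j
      · rw [if_pos hdvd]
        obtain ⟨b', rfl⟩ := hdvd
        have hcomm : p * b' = b' * p := by ring
        have hb' : b' ≤ K := by
          have h3 : p * b' < p * (K+1) := by
            have h4 : p * (K+1) = K*p+p := by ring
            omega
          exact Nat.lt_succ_iff.mp (Nat.lt_of_mul_lt_mul_left h3)
        rcases eq_or_ne b' K with hbK | hbK
        · exfalso
          apply hne
          subst hbK
          have hi : i = p - 1 := by omega
          rw [hi, hcomm]
        · have hi : 2*p - 1 ≤ i := by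
            have h4 : p * b' + p ≤ p * K := by
              calc p * b' + p = p * (b'+1) := by ring
                _ ≤ p * K := Nat.mul_le_mul_left p (by omega)
            have hc : K * p = p * K := by ring
            omega
          have hz : A.coeff i = 0 := by
            apply coeff_eq_zero_of_natDegree_lt
            omega
          rw [hz, zero_mul]
      · rw [if_neg hdvd, mul_zero]
    · intro hnotmem
      exfalso
      apply hnotmem
      rw [Finset.HasAntidiagonal.mem_antidiagonal]
      dsimp only
      omega
  -- middle term vanishes
  have hmid : ((X^p+1 : ℤ[X])^(2*K+1) * F).coeff n₀ = 0 := by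
    have hu : (X^p+1:ℤ[X])^(2*K+1) = expand ℤ p ((X+1)^(2*K+1)) := by
      rw [map_pow, map_add, expand_X, map_one]
    rw [hu, coeff_mul]
    apply Finset.sum_eq_zero
    rintro ⟨i, j⟩ hb
    rw [Finset.HasAntidiagonal.mem_antidiagonal] at hb
    dsimp only at hb ⊢
    rw [coeff_expand hppos]
    by_cases hdvd : p ∣ i
    · rw [if_pos hdvd]
      obtain ⟨a, rfl⟩ := hdvd
      have ha : a ≤ K := by
        have h3 : p * a < p * (K+1) := by
          have h4 : p * (K+1) = K*p+p := by ring
          omega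
        exact Nat.lt_succ_iff.mp (Nat.lt_of_mul_lt_mul_left h3)
      have hj : p - 2 ≤ j := by
        have h4 : p * a ≤ p * K := Nat.mul_le_mul_left p ha
        have hc : K * p = p * K := by ring
        omega
      rw [hFcoeff j hj, mul_zero]
    · rw [if_neg hdvd, zero_mul]
  -- assemble
  refine ⟨(m * (F^2 * d)).coeff n₀, ?_⟩
  have hS : S (K*p + p) = (P (K*p+p)).coeff n₀ := by
    conv_lhs => rw [hsucc]
    rw [← coeff_P n₀, ← hsucc]
  rw [hS, hcancel]
  rw [coeff_add, coeff_add, hmain]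
  have hcast : ((2*K+2 : ℕ) : ℤ[X]) = C ((2*K+2 : ℕ) : ℤ) := by
    simp
  have hre : (X^p+1:ℤ[X])^(2*K+1) * (C (p:ℤ) * F) = C (p:ℤ) * ((X^p+1)^(2*K+1) * F) := by
    ring
  rw [hcast, hre, coeff_C_mul, coeff_C_mul, hmid, mul_zero, mul_zero, add_zero]
  rw [← map_pow, coeff_C_mul]


lemma S_mul (r : ℕ) : ∃ c : ℤ, S (r*p) = leg3 p * S r + (p:ℤ)^2 * c := by
  cases r with
  | zero => exact ⟨0, by simp [S]⟩
  | succ K =>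
    obtain ⟨c, hc⟩ := main_step p hp hp5 K
    refine ⟨c, ?_⟩
    rw [show (K+1)*p = K*p + p by ring]
    exact hc


end
end
end BSCB


theorem block_sum_central_binom (p r : ℕ) (hp : p.Prime) (hp5 : 5 ≤ p) :
    ∑ k ∈ Finset.Ico (r * p) ((r + 1) * p), ((2 * k).choose k : ℤ) ≡
      leg3 p * ((2 * r).choose r : ℤ) [ZMOD (p : ℤ) ^ 2] := by
  obtain ⟨c1, h1⟩ := BSCB.S_mul p hp hp5 (r+1)
  obtain ⟨c2, h2⟩ := BSCB.S_mul p hp hp5 r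
  have hsum : ∑ k ∈ Finset.Ico (r*p) ((r+1)*p), ((2*k).choose k : ℤ)
      = BSCB.S ((r+1)*p) - BSCB.S (r*p) :=
    Finset.sum_Ico_eq_sub _ (Nat.mul_le_mul_right p (by omega))
  have hS' : BSCB.S (r+1) - BSCB.S r = ((2*r).choose r : ℤ) := by
    rw [BSCB.S, Finset.sum_range_succ, ← BSCB.S]
    ring
  apply Int.ModEq.symm
  rw [Int.modEq_iff_dvd]
  refine ⟨c1 - c2, ?_⟩
  rw [hsum]
  linear_combination h1 - h2 + leg3 p * hS'
end

section
/- Let p ≥ 5 be a prime with p ≡ 1 (mod 3) and let r be a non-negative integer. Then ∑_{k=rp}^{(r+1)p-1} C(2k,k)/(k+1) ≡ C(2r,r)/(r+1) (mod p²), as a congruence of rational numbers (in fact of integers, since both sides are integers). -/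
open Finset

namespace BlockCat

def w (j : ℕ) : ℤ := if j % 3 = 2 then -2 else 1

lemma w_congr {j k : ℕ} (h : j % 3 = k % 3) : w j = w k := by
  unfold w; rw [h]

lemma w_add_three (c k : ℕ) : w (c + 3 * k) = w c := by
  apply w_congr; omega

lemma wsum3 (j : ℕ) : w j + w (j + 1) + w (j + 2) = 0 := by
  unfold w
  have h : j % 3 = 0 ∨ j % 3 = 1 ∨ j % 3 = 2 := by omega
  rcases h with h | h | h <;>
    · have h1 : (j+1) % 3 = (j%3+1) % 3 := by omega
      have h2 : (j+2) % 3 = (j%3+2) % 3 := by omega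
      rw [h1, h2, h]; norm_num

/-- `s m c = ∑_{b=0}^{m} w(c+b) C(m,b)` -/
def s (m c : ℕ) : ℤ := ∑ b ∈ range (m + 1), w (c + b) * (m.choose b : ℤ)

lemma s_one (c : ℕ) : s 1 c = w c + w (c + 1) := by
  simp [s, Finset.sum_range_succ]

lemma s_rec (m c : ℕ) : s (m + 1) c = s m c + s m (c + 1) := by
  unfold s
  have h1 : ∑ b ∈ range (m + 2), w (c + b) * ((m+1).choose b : ℤ)
      = w c + ∑ b ∈ range (m + 1), w (c + (b+1)) * ((m+1).choose (b+1) : ℤ) := by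
    rw [Finset.sum_range_succ' (fun b => w (c + b) * ((m+1).choose b : ℤ)) (m+1)]
    ring_nf
    simp [add_comm]
  rw [h1]
  have h2 : ∀ b, ((m+1).choose (b+1) : ℤ) = (m.choose b : ℤ) + (m.choose (b+1) : ℤ) := by
    intro b; exact_mod_cast congrArg (Nat.cast (R := ℤ)) (Nat.choose_succ_succ m b)
  have h3 : ∑ b ∈ range (m + 1), w (c + (b+1)) * ((m+1).choose (b+1) : ℤ)
      = (∑ b ∈ range (m + 1), w ((c+1) + b) * (m.choose b : ℤ))
        + ∑ b ∈ range (m + 1), w (c + (b+1)) * (m.choose (b+1) : ℤ) := by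
    rw [← Finset.sum_add_distrib]
    apply Finset.sum_congr rfl
    intro b _
    rw [h2 b]
    have : c + 1 + b = c + (b + 1) := by ring
    rw [this]; ring
  rw [h3]
  have h4 : ∑ b ∈ range (m + 1), w (c + (b+1)) * (m.choose (b+1) : ℤ)
      = ∑ b ∈ range (m + 1), w (c + b) * (m.choose b : ℤ) - w c := by
    have := Finset.sum_range_succ' (fun b => w (c + b) * (m.choose b : ℤ)) m
    -- ∑_{range (m+1)} f = ∑_{range m} f(b+1) + f 0
    have htop : w (c + (m+1)) * (m.choose (m+1) : ℤ) = 0 := by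
      rw [Nat.choose_succ_self]; simp
    rw [Finset.sum_range_succ (fun b => w (c + (b+1)) * (m.choose (b+1) : ℤ)) m, htop]
    rw [this]; simp
  rw [h4]; ring

lemma s_shift2 (m : ℕ) : ∀ c, s (m + 2) c = s m (c + 1) := by
  induction m with
  | zero =>
    intro c
    have : s 2 c = w c + 2 * w (c+1) + w (c+2) := by
      simp [s, Finset.sum_range_succ]; ring
    rw [this]
    have h0 := wsum3 c
    simp [s]
    linarith
  | succ m ih =>
    intro c
    have : m + 1 + 2 = (m + 2) + 1 := by ring
    rw [this, s_rec (m+2) c, ih c, ih (c+1), ← s_rec m (c+1)]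

lemma s_iter (t : ℕ) : ∀ c, s (1 + 2 * t) c = s 1 (c + t) := by
  induction t with
  | zero => simp
  | succ t ih =>
    intro c
    have : 1 + 2 * (t + 1) = (1 + 2 * t) + 2 := by ring
    rw [this, s_shift2, ih (c+1)]
    congr 1; ring

/-- Key exact identity: for p ≡ 1 (mod 6), ∑_{b=1}^{p-1} w(c+b) C(p,b) = 0. -/
lemma Vzero {p : ℕ} (hp6 : p % 6 = 1) (hp1 : 1 < p) (c : ℕ) :
    ∑ b ∈ range (p - 1), w (c + (b + 1)) * (p.choose (b + 1) : ℤ) = 0 := by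
  obtain ⟨u, hu⟩ : ∃ u, p = 1 + 2 * (3 * u) := ⟨p / 6, by omega⟩
  have hs : s p c = s 1 c := by
    rw [hu, s_iter (3*u) c]
    have : s 1 (c + 3 * u) = w (c + 3*u) + w (c + 3*u + 1) := s_one _
    rw [this, s_one c, w_add_three c u]
    congr 1
    apply w_congr; omega
  -- s p c = w c + middle + w (c+p)
  have hexp : s p c = w c + (∑ b ∈ range (p - 1), w (c + (b + 1)) * (p.choose (b + 1) : ℤ))
      + w (c + p) := by
    unfold s
    have h1 : p + 1 = (p - 1 + 1) + 1 := by omega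
    rw [h1, Finset.sum_range_succ, Finset.sum_range_succ']
    have h2 : p - 1 + 1 = p := by omega
    simp [h2]
    ring
  have hcp : w (c + p) = w (c + 1) := by apply w_congr; omega
  rw [hexp, hcp, s_one c] at hs
  linarith


/-- catalan n = C(2n,n) - C(2n,n+1) over ℤ -/
lemma catalan_eq (n : ℕ) :
    (catalan n : ℤ) = ((2*n).choose n : ℤ) - ((2*n).choose (n+1) : ℤ) := by
  have h1 : (n + 1) * catalan n = (2*n).choose n := by
    rw [succ_mul_catalan_eq_centralBinom, Nat.centralBinom]
  have h2 : (2*n).choose (n+1) * (n+1) = (2*n).choose n * n := by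
    have := Nat.choose_succ_right_eq (2*n) n
    simpa [two_mul, Nat.add_sub_cancel] using this
  have hcancel : ((n:ℤ) + 1) * (catalan n : ℤ)
      = ((n:ℤ) + 1) * (((2*n).choose n : ℤ) - ((2*n).choose (n+1) : ℤ)) := by
    have h1' : ((n:ℤ) + 1) * (catalan n : ℤ) = ((2*n).choose n : ℤ) := by exact_mod_cast h1
    have h2' : ((2*n).choose (n+1) : ℤ) * ((n:ℤ)+1) = ((2*n).choose n : ℤ) * n := by
      exact_mod_cast h2
    rw [h1']; ring_nf; ring_nf at h2'; linarith
  have hne : ((n:ℤ) + 1) ≠ 0 := by positivity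
  exact mul_left_cancel₀ hne hcancel

/-- A n = ∑_{j=0}^{n-1} w(j+1) C(2n, n+j+1) -/
def A (n : ℕ) : ℤ := ∑ j ∈ range n, w (j+1) * ((2*n).choose (n+j+1) : ℤ)

/-- Pan–Sun identity -/
lemma PS (n : ℕ) : ∑ k ∈ range n, (catalan k : ℤ) = A n := by
  induction n with
  | zero => simp [A]
  | succ n ih =>
    rw [Finset.sum_range_succ, ih]
    -- A (n+1) = A n + catalan n
    have key : A (n+1) = A n + (catalan n : ℤ) := by
      have pasc2 : ∀ j : ℕ, ((2*(n+1)).choose (n+1+j+1) : ℤ)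
          = ((2*n).choose (n+j+2) : ℤ) + 2 * ((2*n).choose (n+j+1) : ℤ)
            + ((2*n).choose (n+j) : ℤ) := by
        intro j
        have e1 : 2*(n+1) = (2*n+1) + 1 := by ring
        have e2 : n+1+j+1 = (n+j+1) + 1 := by ring
        rw [e1, e2, Nat.choose_succ_succ (2*n+1) (n+j+1)]
        rw [show (2*n+1) = (2*n)+1 from rfl]
        rw [Nat.choose_succ_succ (2*n) (n+j), Nat.choose_succ_succ (2*n) (n+j+1)]
        push_cast
        have : n + j + 1 + 1 = n + j + 2 := by ring
        rw [this]; ring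
      have hA1 : A (n+1) = ∑ j ∈ range (n+1),
          (w (j+1) * ((2*n).choose (n+j+2) : ℤ) + 2 * (w (j+1) * ((2*n).choose (n+j+1) : ℤ))
            + w (j+1) * ((2*n).choose (n+j) : ℤ)) := by
        unfold A
        apply Finset.sum_congr rfl
        intro j _
        rw [pasc2 j]; ring
      rw [hA1, Finset.sum_add_distrib, Finset.sum_add_distrib]
      -- S2 : middle = 2 * A n (top term vanishes)
      have hS2 : ∑ j ∈ range (n+1), 2 * (w (j+1) * ((2*n).choose (n+j+1) : ℤ))
          = 2 * A n := by
        rw [Finset.sum_range_succ]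
        have : (2*n).choose (n+n+1) = 0 := by
          apply Nat.choose_eq_zero_of_lt; omega
        rw [this]
        unfold A; rw [Finset.mul_sum]; simp
      -- S1 : first sum = (∑_{j∈range n} w j C(2n,n+j+1)) - C(2n,n+1)
      have hS1 : ∑ j ∈ range (n+1), w (j+1) * ((2*n).choose (n+j+2) : ℤ)
          = (∑ j ∈ range n, w j * ((2*n).choose (n+j+1) : ℤ)) - ((2*n).choose (n+1) : ℤ) := by
        have h := Finset.sum_range_succ' (fun j => w j * ((2*n).choose (n+j+1) : ℤ)) (n+1)
        -- h : ∑_{j ∈ range (n+2)} w j C(2n, n+j+1) = ∑_{j∈range(n+1)} w(j+1) C(2n,n+j+2) + w 0 * C(2n,n+1)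
        have hw0 : w 0 = 1 := rfl
        have htop1 : (fun j => w j * ((2*n).choose (n+j+1) : ℤ)) (n+1) = 0 := by
          simp only []
          have : (2*n).choose (n+(n+1)+1) = 0 := by apply Nat.choose_eq_zero_of_lt; omega
          rw [this]; simp
        have hsplit : ∑ j ∈ range (n+2), w j * ((2*n).choose (n+j+1) : ℤ)
            = ∑ j ∈ range n, w j * ((2*n).choose (n+j+1) : ℤ) := by
          rw [Finset.sum_range_succ, Finset.sum_range_succ]
          have t1 : (2*n).choose (n+(n+1)+1) = 0 := by apply Nat.choose_eq_zero_of_lt; omega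
          have t2 : (2*n).choose (n+n+1) = 0 := by apply Nat.choose_eq_zero_of_lt; omega
          rw [t1, t2]; simp
        rw [hsplit] at h
        have he2 : ∀ j:ℕ, n + (j+1) + 1 = n + j + 2 := by intro j; ring
        simp only [he2, hw0, one_mul] at h
        linarith
      -- S3 : third sum = w 1 * C(2n, n) + ∑_{j∈range n} w(j+2) C(2n,n+j+1)
      have hS3 : ∑ j ∈ range (n+1), w (j+1) * ((2*n).choose (n+j) : ℤ)
          = w 1 * ((2*n).choose n : ℤ) + ∑ j ∈ range n, w (j+2) * ((2*n).choose (n+j+1) : ℤ) := by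
        have h := Finset.sum_range_succ' (fun j => w (j+1) * ((2*n).choose (n+j) : ℤ)) n
        simp only [Nat.add_zero] at h
        rw [h]
        have he : ∀ j:ℕ, n + (j+1) = n + j + 1 := by intro j; ring
        simp only [he]
        have : ∀ j:ℕ, j + 1 + 1 = j + 2 := by intro j; ring
        simp only [this]
        ring
      rw [hS1, hS2, hS3]
      have hzero : (∑ j ∈ range n, w j * ((2*n).choose (n+j+1) : ℤ))
          + (∑ j ∈ range n, w (j+1) * ((2*n).choose (n+j+1) : ℤ))
          + (∑ j ∈ range n, w (j+2) * ((2*n).choose (n+j+1) : ℤ)) = 0 := by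
        rw [← Finset.sum_add_distrib, ← Finset.sum_add_distrib]
        apply Finset.sum_eq_zero
        intro j _
        have := wsum3 j
        have e : w j * ((2*n).choose (n+j+1) : ℤ) + w (j+1) * ((2*n).choose (n+j+1) : ℤ)
            + w (j+2) * ((2*n).choose (n+j+1) : ℤ)
            = (w j + w (j+1) + w (j+2)) * ((2*n).choose (n+j+1) : ℤ) := by ring
        rw [e, this]; simp
      have hw1 : w 1 = 1 := rfl
      have hcat := catalan_eq n
      unfold A
      rw [hw1] at *
      linarith
    rw [key]


variable {p : ℕ}

/-- p ∣ C(n,m) when p ∣ n, ¬p ∣ m -/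
lemma dvd_choose (hp : p.Prime) {n m : ℕ} (hn : p ∣ n) (hm : ¬ p ∣ m) :
    p ∣ n.choose m := by
  rcases Nat.eq_zero_or_pos m with rfl | hm0
  · exact absurd (dvd_zero p) hm
  rcases Nat.lt_or_ge n m with h | h
  · rw [Nat.choose_eq_zero_of_lt h]; exact dvd_zero p
  have hn0 : 0 < n := lt_of_lt_of_le hm0 h
  obtain ⟨n', rfl⟩ : ∃ n', n = n' + 1 := ⟨n - 1, by omega⟩
  obtain ⟨m', rfl⟩ : ∃ m', m = m' + 1 := ⟨m - 1, by omega⟩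
  have key : (n' + 1) * n'.choose m' = (n'+1).choose (m'+1) * (m'+1) :=
    Nat.add_one_mul_choose_eq n' m'
  have hdvd : p ∣ (n'+1).choose (m'+1) * (m'+1) := by
    rw [← key]; exact Dvd.dvd.mul_right hn _
  exact (Nat.Coprime.dvd_of_dvd_mul_right
    ((Nat.Prime.coprime_iff_not_dvd hp).mpr hm) hdvd)

/-- Wolstenholme-type: C(up, vp) ≡ C(u,v) mod p². -/
lemma wol (hp : p.Prime) (u v : ℕ) :
    ((Nat.choose (u*p) (v*p) : ZMod (p^2))) = (Nat.choose u v : ZMod (p^2)) := by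
  induction u generalizing v with
  | zero =>
    rcases Nat.eq_zero_or_pos v with rfl | hv
    · simp
    · rw [Nat.zero_mul]
      have h1 : Nat.choose 0 (v*p) = 0 := by
        apply Nat.choose_eq_zero_of_lt
        have := hp.pos; positivity
      have h2 : Nat.choose 0 v = 0 := Nat.choose_eq_zero_of_lt hv
      rw [h1, h2]
  | succ u ih =>
    rcases Nat.eq_zero_or_pos v with rfl | hv
    · simp
    have hsplit : (u+1)*p = u*p + p := by ring
    rw [hsplit, Nat.add_choose_eq]
    rw [Finset.Nat.sum_antidiagonal_eq_sum_range_succ_mk]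
    have hvp : p ≤ v * p := le_mul_of_one_le_left' hv
    push_cast
    have hsub : ({v*p - p, v*p} : Finset ℕ) ⊆ range (v*p+1) := by
      intro x hx
      simp only [Finset.mem_insert, Finset.mem_singleton] at hx
      rcases hx with rfl | rfl <;> simp [Finset.mem_range] <;> omega
    rw [← Finset.sum_subset hsub]
    · have hne : v*p - p ≠ v*p := by
        have := hp.pos; omega
      rw [Finset.sum_pair hne]
      have e1 : v*p - (v*p - p) = p := by omega
      have e2 : v*p - v*p = 0 := by omega
      rw [e1, e2]
      have e3 : v*p - p = (v-1)*p := by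
        rw [Nat.sub_mul, one_mul]
      rw [e3, Nat.choose_self, Nat.choose_zero_right]
      rw [ih (v-1), ih v]
      obtain ⟨v', rfl⟩ : ∃ v', v = v' + 1 := ⟨v - 1, by omega⟩
      rw [Nat.choose_succ_succ u v']
      push_cast
      ring
    · intro k hk hknot
      simp only [Finset.mem_range] at hk
      simp only [Finset.mem_insert, Finset.mem_singleton, not_or] at hknot
      obtain ⟨hk1, hk2⟩ := hknot
      set j := v*p - k with hj
      have hjle : k + j = v*p := by omega
      rcases Nat.lt_or_ge p j with h | h
      · have : Nat.choose p j = 0 := Nat.choose_eq_zero_of_lt h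
        rw [this]; push_cast; ring
      · have hj0 : 0 < j := by omega
        have hjp : j < p := by omega
        have d1 : p ∣ Nat.choose p j := hp.dvd_choose_self (by omega) hjp
        have d2 : p ∣ Nat.choose (u*p) k := by
          apply dvd_choose hp ⟨u, mul_comm u p⟩
          intro hdvd
          have hd3 : p ∣ v * p := ⟨v, mul_comm v p⟩
          have hpj : p ∣ j := Nat.dvd_sub hd3 hdvd
          have := Nat.le_of_dvd hj0 hpj
          omega
        obtain ⟨a, ha⟩ := d2
        obtain ⟨b, hb⟩ := d1
        rw [ha, hb]
        push_cast
        have hp2 : ((p : ZMod (p^2)))^2 = 0 := by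
          rw [← Nat.cast_pow, ZMod.natCast_self]
        linear_combination ((a : ZMod (p^2)) * b) * hp2


lemma not_dvd_small (hp : p.Prime) {c : ℕ} (h1 : 1 ≤ c) (h2 : c < p) : ¬ p ∣ c := by
  intro h; have := Nat.le_of_dvd (by omega) h; omega

lemma not_dvd_shift (hp : p.Prime) {f c : ℕ} (h1 : 1 ≤ c) (h2 : c < p) :
    ¬ p ∣ (f * p + c) := by
  intro h
  have h' : p ∣ c := (Nat.dvd_add_right ⟨f, mul_comm f p⟩).mp h
  exact not_dvd_small hp h1 h2 h'

lemma cancel_unit (hp : p.Prime) {u : ℕ} (hcop : ¬ p ∣ u) {x y : ZMod (p^2)}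
    (h : x * (u : ZMod (p^2)) = y * (u : ZMod (p^2))) : x = y := by
  haveI : NeZero (p^2) := ⟨pow_ne_zero 2 hp.ne_zero⟩
  have hcop2 : Nat.Coprime u (p^2) :=
    Nat.Coprime.pow_right 2 (Nat.coprime_comm.mp ((hp.coprime_iff_not_dvd).mpr hcop))
  have hu : IsUnit ((u : ℕ) : ZMod (p^2)) := (ZMod.isUnit_iff_coprime u (p^2)).mpr hcop2
  exact hu.mul_right_cancel h

lemma mul_p_eq_zero {m : ℕ} (h : p ∣ m) : ((m : ZMod (p^2))) * (p : ZMod (p^2)) = 0 := by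
  obtain ⟨a, rfl⟩ := h
  push_cast
  have hp2 : ((p : ZMod (p^2)))^2 = 0 := by rw [← Nat.cast_pow, ZMod.natCast_self]
  linear_combination (a : ZMod (p^2)) * hp2

/-- Digit formula: C((e+f)p, fp+b) ≡ e·C(e+f,f)·C(p,b)  (mod p²), 1 ≤ b ≤ p-1, 1 ≤ e. -/
lemma digit (hp : p.Prime) (e f : ℕ) (he : 1 ≤ e) :
    ∀ b, 1 ≤ b → b ≤ p - 1 →
    ((Nat.choose ((e+f)*p) (f*p + b) : ZMod (p^2)))
      = ((e : ZMod (p^2)) * (Nat.choose (e+f) f : ZMod (p^2)) * (Nat.choose p b : ZMod (p^2))) := by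
  have hp1 : 1 < p := hp.one_lt
  intro b
  induction b with
  | zero => intro h; omega
  | succ b ihb =>
    intro _ hble
    rcases Nat.eq_zero_or_pos b with rfl | hb0
    · -- base case b+1 = 1
      simp only [Nat.zero_add]
      have I1 : Nat.choose ((e+f)*p) (f*p + 1) * (f*p + 1)
          = Nat.choose ((e+f)*p) (f*p) * ((e+f)*p - f*p) := by
        simpa using Nat.choose_succ_right_eq ((e+f)*p) (f*p)
      have hsub : (e+f)*p - f*p = e*p := by
        rw [← Nat.sub_mul]; congr 1; omega
      rw [hsub] at I1
      apply cancel_unit hp (u := f*p + 1) (not_dvd_shift hp (by omega) (by omega))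
      have I1' : ((Nat.choose ((e+f)*p) (f*p+1) : ZMod (p^2))) * ((f*p+1 : ℕ) : ZMod (p^2))
          = ((Nat.choose ((e+f)*p) (f*p) : ZMod (p^2))) * ((e*p : ℕ) : ZMod (p^2)) := by
        exact_mod_cast congrArg (Nat.cast (R := ZMod (p^2))) I1
      rw [wol hp (e+f) f] at I1'
      push_cast at I1' ⊢
      rw [I1']
      rw [Nat.choose_one_right]
      have hp2 : ((p : ZMod (p^2)))^2 = 0 := by rw [← Nat.cast_pow, ZMod.natCast_self]
      push_cast
      linear_combination (-((e:ZMod (p^2)) * (Nat.choose (e+f) f) * f)) * hp2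
    · -- inductive step: b ≥ 1, b+1 ≤ p-1
      rw [show f * p + (b + 1) = f * p + b + 1 from by ring]
      have IH := ihb hb0 (by omega)
      set R := ZMod (p^2)
      set C : R := (Nat.choose (e+f) f : R) with hC
      set M : R := (Nat.choose ((e+f)*p) (f*p + b) : R) with hM
      have hdvd : p ∣ Nat.choose ((e+f)*p) (f*p + b) :=
        dvd_choose hp ⟨e+f, mul_comm _ _⟩ (not_dvd_shift hp (by omega) (by omega))
      have hxp : M * (p : R) = 0 := mul_p_eq_zero hdvd
      -- nat identities
      have I1 : Nat.choose ((e+f)*p) (f*p + b + 1) * (f*p + b + 1)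
          = Nat.choose ((e+f)*p) (f*p + b) * (e*p - b) := by
        have := Nat.choose_succ_right_eq ((e+f)*p) (f*p + b)
        have hsub : (e+f)*p - (f*p + b) = e*p - b := by
          have : (e+f)*p = e*p + f*p := by ring
          omega
        rw [hsub] at this
        exact this
      have I2 : Nat.choose p (b+1) * (b+1) = Nat.choose p b * (p - b) :=
        Nat.choose_succ_right_eq p b
      have hble' : b ≤ e * p := by
        have : p ≤ e * p := le_mul_of_one_le_left' he
        omega
      have hbp : b ≤ p := by omega
      -- cast identities
      have I1' : ((Nat.choose ((e+f)*p) (f*p+b+1) : R)) * ((f:R)*p + b + 1)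
          = M * ((e:R)*p - b) := by
        have := congrArg (Nat.cast (R := R)) I1
        push_cast [R, Nat.cast_sub hble'] at this
        convert this using 2 <;> push_cast <;> ring
      have I2' : ((Nat.choose p (b+1) : R)) * ((b:R) + 1) = (Nat.choose p b : R) * ((p:R) - b) := by
        have := congrArg (Nat.cast (R := R)) I2
        push_cast [R, Nat.cast_sub hbp] at this
        exact this
      -- cancellation target
      have hcop : ¬ p ∣ ((f*p + b + 1) * (b+1)) := by
        intro h
        rcases (Nat.Prime.dvd_mul hp).mp h with h | h
        · exact not_dvd_shift hp (c := b+1) (by omega) (by omega) (by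
            have : f*p + b + 1 = f*p + (b+1) := by ring
            rwa [this] at h)
        · exact not_dvd_small hp (by omega) (by omega) h
      apply cancel_unit hp hcop
      push_cast
      calc ((Nat.choose ((e+f)*p) (f*p+b+1) : R)) * (((f:R)*p + b + 1) * ((b:R)+1))
          = (((Nat.choose ((e+f)*p) (f*p+b+1) : R)) * ((f:R)*p + b + 1)) * ((b:R)+1) := by ring
        _ = (M * ((e:R)*p - b)) * ((b:R)+1) := by rw [I1']
        _ = -(M * b * ((b:R)+1)) := by linear_combination ((e:R)*((b:R)+1)) * hxp
        _ = M * ((p:R) - b) * ((f:R)*p + b + 1) := by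
              linear_combination (-(((f:R)*p + (b:R) + 1) - (b:R)*(f:R))) * hxp
        _ = ((e:R) * C * (Nat.choose p b : R)) * ((p:R) - b) * ((f:R)*p + b + 1) := by rw [← IH]
        _ = ((e:R) * C) * ((Nat.choose p b : R) * ((p:R) - b)) * ((f:R)*p + b + 1) := by ring
        _ = ((e:R) * C) * ((Nat.choose p (b+1) : R) * ((b:R)+1)) * ((f:R)*p + b + 1) := by
              rw [I2']
        _ = (e:R) * C * (Nat.choose p (b+1) : R) * (((f:R)*p + b + 1) * ((b:R)+1)) := by ring




lemma w_mul_shift (hp3 : p % 3 = 1) (a b : ℕ) : w (a * p + b) = w (a + b) := by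
  apply w_congr
  have h1 : a * p % 3 = a % 3 := by
    rw [Nat.mul_mod, hp3, mul_one]
    omega
  omega

lemma blocksplit {R : Type*} [AddCommMonoid R] (g : ℕ → R) (M : ℕ) :
    ∑ j ∈ range (M * p), g j = ∑ a ∈ range M, ∑ b ∈ range p, g (a * p + b) := by
  induction M with
  | zero => simp
  | succ M ih =>
    rw [show (M+1)*p = M*p + p from by ring, Finset.sum_range_add, ih,
      Finset.sum_range_succ]

lemma key (hp : p.Prime) (hp3 : p % 3 = 1) (M : ℕ) :
    ((A (M * p) : ℤ) : ZMod (p^2)) = ((A M : ℤ) : ZMod (p^2)) := by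
  have hp1 : 1 < p := hp.one_lt
  set R := ZMod (p^2)
  have hA : ((A (M * p) : ℤ) : R)
      = ∑ j ∈ range (M * p), ((w (j+1) : ℤ) : R) * ((2*(M*p)).choose (M*p+j+1) : R) := by
    unfold A
    push_cast [R]
    rfl
  rw [hA, blocksplit (p := p) (fun j => ((w (j+1) : ℤ) : R) * ((2*(M*p)).choose (M*p+j+1) : R)) M]
  have inner : ∀ a ∈ range M,
      (∑ b ∈ range p, ((w (a*p+b+1) : ℤ) : R) * ((2*(M*p)).choose (M*p+(a*p+b)+1) : R))
      = ((w (a+1) : ℤ) : R) * ((2*M).choose (M+a+1) : R) := by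
    intro a ha
    have haM : a < M := mem_range.mp ha
    have hps : range p = range ((p-1)+1) := by congr 1; omega
    rw [hps, Finset.sum_range_succ]
    -- top term b = p-1
    have htop : ((w (a*p+(p-1)+1) : ℤ) : R) * ((2*(M*p)).choose (M*p+(a*p+(p-1))+1) : R)
        = ((w (a+1) : ℤ) : R) * ((2*M).choose (M+a+1) : R) := by
      have e1 : a*p+(p-1)+1 = (a+1)*p := by
        have := hp.pos; ring_nf; omega
      have e2 : M*p+(a*p+(p-1))+1 = (M+a+1)*p := by
        have := hp.pos; ring_nf; omega
      have e3 : 2*(M*p) = (2*M)*p := by ring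
      rw [e1, e2, e3, wol hp (2*M) (M+a+1)]
      congr 2
      have := w_mul_shift hp3 (a+1) 0
      simpa using this
    rw [htop]
    -- rest vanishes
    have hrest : (∑ b ∈ range (p-1), ((w (a*p+b+1) : ℤ) : R) * ((2*(M*p)).choose (M*p+(a*p+b)+1) : R)) = 0 := by
      have hterm : ∀ b ∈ range (p-1),
          ((w (a*p+b+1) : ℤ) : R) * ((2*(M*p)).choose (M*p+(a*p+b)+1) : R)
          = (((M-a : ℕ) : R) * ((2*M).choose (M+a) : R))
            * (((w (a+(b+1)) : ℤ) : R) * ((p.choose (b+1)) : R)) := by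
        intro b hb
        have hbp : b < p - 1 := mem_range.mp hb
        have e4 : M*p+(a*p+b)+1 = (M+a)*p + (b+1) := by ring
        have e5 : 2*(M*p) = ((M-a) + (M+a))*p := by
          have : (M-a) + (M+a) = 2*M := by omega
          rw [this]; ring
        have e6 : a*p+b+1 = a*p + (b+1) := by ring
        rw [e4, e5, e6, digit hp (M-a) (M+a) (by omega) (b+1) (by omega) (by omega)]
        rw [w_mul_shift hp3 a (b+1)]
        have e7 : (M-a) + (M+a) = 2*M := by omega
        rw [e7]
        ring
      rw [Finset.sum_congr rfl hterm, ← Finset.mul_sum]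
      have : (∑ b ∈ range (p-1), (((w (a+(b+1)) : ℤ) : R) * ((p.choose (b+1)) : R)))
          = (((∑ b ∈ range (p-1), w (a+(b+1)) * (p.choose (b+1) : ℤ)) : ℤ) : R) := by
        push_cast [R]; rfl
      rw [this]
      have hp6 : p % 6 = 1 := by
        have hne2 : p ≠ 2 := by intro h; rw [h] at hp3; omega
        obtain ⟨t, ht⟩ := hp.odd_of_ne_two hne2
        omega
      rw [Vzero hp6 hp1 a]
      simp
    rw [hrest, zero_add]
  rw [Finset.sum_congr rfl inner]
  unfold A
  push_cast
  rfl


lemma main_int {p : ℕ} (hp : p.Prime) (hp3 : p % 3 = 1) (r : ℕ) :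
    ((p : ℤ))^2 ∣ (∑ k ∈ Finset.Ico (r*p) ((r+1)*p), (catalan k : ℤ)) - (catalan r : ℤ) := by
  have hB : (∑ k ∈ Finset.Ico (r*p) ((r+1)*p), (catalan k : ℤ))
      = A ((r+1)*p) - A (r*p) := by
    rw [Finset.sum_Ico_eq_sub _ (by
      apply Nat.mul_le_mul_right; omega), PS, PS]
  have hC : (catalan r : ℤ) = A (r+1) - A r := by
    have h1 := PS (r+1)
    have h2 := PS r
    rw [Finset.sum_range_succ] at h1
    omega
  rw [hB, hC]
  have hz : ((((A ((r+1)*p) - A (r*p)) - (A (r+1) - A r)) : ℤ) : ZMod (p^2)) = 0 := by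
    push_cast
    rw [show (((r:ℕ)+1)*p) = ((r+1) * p) from rfl]
    have k1 := key hp hp3 (r+1)
    have k2 := key hp hp3 r
    push_cast at k1 k2
    rw [k1, k2]
    ring
  have := (ZMod.intCast_zmod_eq_zero_iff_dvd _ (p^2)).mp hz
  have hcast : ((p^2 : ℕ) : ℤ) = (p:ℤ)^2 := by push_cast; ring
  rwa [hcast] at this

theorem block_sum_catalan_one_mod_three (p r : ℕ) (hp : p.Prime) (hp5 : 5 ≤ p)
    (hp3 : p % 3 = 1) :
    ratCongr p 2
      (∑ k ∈ Finset.Ico (r * p) ((r + 1) * p), ((2 * k).choose k : ℚ) / (k + 1))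
      (((2 * r).choose r : ℚ) / (r + 1)) := by
  have hterm : ∀ k : ℕ, ((2 * k).choose k : ℚ) / (k + 1) = (catalan k : ℚ) := by
    intro k
    have h1 : (k + 1) * catalan k = (2*k).choose k := by
      rw [succ_mul_catalan_eq_centralBinom, Nat.centralBinom]
    rw [← h1]
    push_cast
    have : ((k:ℚ) + 1) ≠ 0 := by positivity
    field_simp
  obtain ⟨s, hs⟩ := main_int hp hp3 r
  refine ⟨s, 1, ?_, ?_⟩
  · intro h
    have := Int.le_of_dvd one_pos h
    have : (5:ℤ) ≤ p := by exact_mod_cast hp5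
    omega
  · simp only [hterm]
    have hs' := congrArg (fun z : ℤ => (z : ℚ)) hs
    push_cast at hs' ⊢
    rw [mul_one]
    exact hs'


end BlockCat

theorem block_sum_catalan_one_mod_three (p r : ℕ) (hp : p.Prime) (hp5 : 5 ≤ p)
    (hp3 : p % 3 = 1) :
    ratCongr p 2
      (∑ k ∈ Finset.Ico (r * p) ((r + 1) * p), ((2 * k).choose k : ℚ) / (k + 1))
      (((2 * r).choose r : ℚ) / (r + 1)) := by
  exact BlockCat.block_sum_catalan_one_mod_three p r hp hp5 hp3
end

section
/- Let p ≥ 5 be a prime. Then C(2p-2,p-1) ≡ -p - 2p² (mod p³); equivalently, the Catalan number C(2p-2,p-1)/p satisfies C(2p-2,p-1)/p ≡ -1 - 2p (mod p²). -/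
open Finset Nat

-- in a ring where π^2 = 0, products of (1 + π a) telescope
lemma prod_one_add_mul {R : Type*} [CommRing R] (π : R) (hπ : π ^ 2 = 0)
    (s : Finset ℕ) (a : ℕ → R) :
    ∏ i ∈ s, (1 + π * a i) = 1 + π * ∑ i ∈ s, a i := by
  induction s using Finset.induction with
  | empty => simp
  | @insert x s hx ih =>
    rw [Finset.prod_insert hx, ih, Finset.sum_insert hx]
    have : π * π = 0 := by rw [← sq]; exact hπ
    ring_nf
    linear_combination (a x * ∑ i ∈ s, a i) * hπ

lemma fact_prod (q : ℕ) : ∀ m, q ! * (∏ i ∈ range m, (q + 1 + i)) = (q + m)! := by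
  intro m
  induction m with
  | zero => simp
  | succ m ih =>
    rw [prod_range_succ, ← mul_assoc, ih, ← add_assoc]
    rw [Nat.factorial_succ]
    ring

lemma sum_inv_zmod (r : ℕ) (hp : (r + 2).Prime) (hr : 3 ≤ r) :
    ∑ i ∈ range r, (((i + 1 : ℕ)) : ZMod (r + 2))⁻¹ = 1 := by
  haveI : Fact (r + 2).Prime := ⟨hp⟩
  have hpdef : r + 2 = r + 2 := rfl
  have hT : ∑ i ∈ range (r + 2), ((i : ℕ) : ZMod (r + 2))⁻¹ = ∑ x : ZMod (r + 2), x⁻¹ := by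
    apply Finset.sum_nbij' (fun i => ((i : ℕ) : ZMod (r + 2))) (fun x => x.val)
    · intro a _; exact mem_univ _
    · intro x _; exact mem_range.mpr (ZMod.val_lt x)
    · intro a ha; exact ZMod.val_cast_of_lt (mem_range.mp ha)
    · intro x _; exact ZMod.natCast_rightInverse x
    · intro a _; rfl
  have hinv : ∑ x : ZMod (r + 2), x⁻¹ = ∑ x : ZMod (r + 2), x :=
    Fintype.sum_bijective _ inv_involutive.bijective _ _ (fun x => rfl)
  have hneg : ∑ x : ZMod (r + 2), -x = ∑ x : ZMod (r + 2), x :=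
    Fintype.sum_bijective _ neg_involutive.bijective _ _ (fun x => rfl)
  have hzero : ∑ x : ZMod (r + 2), x = 0 := by
    have h2 : (2 : ZMod (r + 2)) * ∑ x : ZMod (r + 2), x = 0 := by
      rw [two_mul]
      nth_rewrite 1 [← hneg]
      rw [← Finset.sum_add_distrib]
      simp
    have h2ne : (2 : ZMod (r + 2)) ≠ 0 := by
      intro h
      rw [show (2 : ZMod (r + 2)) = ((2 : ℕ) : ZMod (r + 2)) by push_cast; ring,
        ZMod.natCast_eq_zero_iff] at h
      have := Nat.le_of_dvd (by norm_num) h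
      omega
    rcases mul_eq_zero.mp h2 with h | h
    · exact absurd h h2ne
    · exact h
  have hsplit : ∑ i ∈ range (r + 2), ((i : ℕ) : ZMod (r + 2))⁻¹
      = (∑ i ∈ range (r + 1), (((i + 1 : ℕ)) : ZMod (r + 2))⁻¹) + ((0 : ℕ) : ZMod (r + 2))⁻¹ := by
    rw [Finset.sum_range_succ']
  have hlast : ∑ i ∈ range (r + 1), (((i + 1 : ℕ)) : ZMod (r + 2))⁻¹
      = (∑ i ∈ range r, (((i + 1 : ℕ)) : ZMod (r + 2))⁻¹) + (((r + 1 : ℕ)) : ZMod (r + 2))⁻¹ := by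
    rw [Finset.sum_range_succ]
  have hm1 : (((r + 1 : ℕ)) : ZMod (r + 2))⁻¹ = -1 := by
    have : ((r + 1 : ℕ) : ZMod (r + 2)) = -1 := by
      have : (((r+2) : ℕ) : ZMod (r + 2)) = 0 := ZMod.natCast_self (r+2)
      push_cast at this ⊢
      linear_combination this
    rw [this, inv_neg, inv_one]
  rw [hT, hinv] at hsplit
  rw [hzero] at hsplit
  rw [hlast, hm1] at hsplit
  simp only [Nat.cast_zero, inv_zero, add_zero] at hsplit
  linear_combination -hsplit

lemma mul_p_eq (n : ℕ) (hn : 0 < n) (x y : ZMod (n ^ 2))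
    (h : (ZMod.castHom (dvd_pow_self n two_ne_zero) (ZMod n)) x
       = (ZMod.castHom (dvd_pow_self n two_ne_zero) (ZMod n)) y) :
    (n : ZMod (n ^ 2)) * x = (n : ZMod (n ^ 2)) * y := by
  haveI : NeZero (n ^ 2) := ⟨by positivity⟩
  haveI : NeZero n := ⟨hn.ne'⟩
  set d := x - y with hd
  have hmap : (ZMod.castHom (dvd_pow_self n two_ne_zero) (ZMod n)) d = 0 := by
    rw [hd, map_sub, h, sub_self]
  have hval : ((d.val : ℕ) : ZMod n) = 0 := by
    rwa [ZMod.castHom_apply, ← ZMod.natCast_val] at hmap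
  obtain ⟨k, hk⟩ := (ZMod.natCast_eq_zero_iff _ _).mp hval
  have hdval : ((d.val : ℕ) : ZMod (n ^ 2)) = d := by
    rw [ZMod.natCast_val, ZMod.cast_id]
  have : (n : ZMod (n ^ 2)) * d = 0 := by
    rw [← hdval, ← Nat.cast_mul, hk, ← mul_assoc, ← sq, Nat.cast_mul, ZMod.natCast_self,
      zero_mul]
  exact sub_eq_zero.mp (by rw [← mul_sub, ← hd]; exact this)

lemma prod_zmod_sq (r : ℕ) (hp : (r + 2).Prime) (hr : 3 ≤ r) :
    ((∏ i ∈ range r, (r + 3 + i) : ℕ) : ZMod ((r + 2) ^ 2))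
      = ((r ! : ℕ) : ZMod ((r + 2) ^ 2)) * (1 + ((r + 2 : ℕ) : ZMod ((r + 2) ^ 2))) := by
  haveI : Fact (r + 2).Prime := ⟨hp⟩
  set R := ZMod ((r + 2) ^ 2) with hR
  set π : R := ((r + 2 : ℕ) : R) with hπ
  have hπ2 : π ^ 2 = 0 := by
    rw [hπ, ← Nat.cast_pow, ZMod.natCast_self]
  have hco : ∀ i, i ∈ range r → Nat.Coprime (i + 1) ((r + 2) ^ 2) := by
    intro i hi
    rw [mem_range] at hi
    apply Nat.Coprime.pow_right
    rw [Nat.coprime_comm]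
    rw [hp.coprime_iff_not_dvd]
    intro hdvd
    have := Nat.le_of_dvd (by omega) hdvd
    omega
  set a : ℕ → R := fun i => Ring.inverse ((i + 1 : ℕ) : R) with haf
  have hunit : ∀ i ∈ range r, IsUnit ((i + 1 : ℕ) : R) := fun i hi =>
    (ZMod.isUnit_iff_coprime (i + 1) ((r + 2) ^ 2)).mpr (hco i hi)
  have hainv : ∀ i ∈ range r, ((i + 1 : ℕ) : R) * a i = 1 := fun i hi =>
    Ring.mul_inverse_cancel _ (hunit i hi)
  have ha : ∀ i ∈ range r, ((r + 3 + i : ℕ) : R) = ((i + 1 : ℕ) : R) * (1 + π * a i) := by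
    intro i hi
    rw [mul_add, mul_one, ← mul_assoc, mul_comm ((i + 1 : ℕ) : R) π, mul_assoc, hainv i hi,
      mul_one, hπ]
    push_cast
    ring
  have hsum : π * (∑ i ∈ range r, a i) = π * 1 := by
    apply mul_p_eq (r + 2) (by omega)
    rw [map_sum, map_one]
    have : ∀ i ∈ range r,
        (ZMod.castHom (dvd_pow_self (r + 2) two_ne_zero) (ZMod (r + 2))) (a i)
          = (((i + 1 : ℕ)) : ZMod (r + 2))⁻¹ := by
      intro i hi
      have := congrArg (ZMod.castHom (dvd_pow_self (r + 2) two_ne_zero) (ZMod (r + 2)))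
        (hainv i hi)
      rw [map_mul, map_one, map_natCast] at this
      exact eq_inv_of_mul_eq_one_right this
    rw [Finset.sum_congr rfl this]
    exact sum_inv_zmod r hp hr
  calc ((∏ i ∈ range r, (r + 3 + i) : ℕ) : R)
      = ∏ i ∈ range r, ((r + 3 + i : ℕ) : R) := Nat.cast_prod _ _
    _ = ∏ i ∈ range r, (((i + 1 : ℕ) : R) * (1 + π * a i)) := Finset.prod_congr rfl ha
    _ = (∏ i ∈ range r, ((i + 1 : ℕ) : R)) * ∏ i ∈ range r, (1 + π * a i) :=
        Finset.prod_mul_distrib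
    _ = ((r ! : ℕ) : R) * (1 + π) := by
        rw [prod_one_add_mul π hπ2, hsum, mul_one, ← Nat.cast_prod,
          Finset.prod_range_add_one_eq_factorial]

theorem central_binom_pred_congruence (p : ℕ) (hp : p.Prime) (hp5 : 5 ≤ p) :
    (((2 * p - 2).choose (p - 1) : ℤ) ≡ -(p : ℤ) - 2 * (p : ℤ) ^ 2 [ZMOD (p : ℤ) ^ 3]) ∧
      ((catalan (p - 1) : ℤ) ≡ -1 - 2 * (p : ℤ) [ZMOD (p : ℤ) ^ 2]) := by
  obtain ⟨r, rfl⟩ : ∃ r, p = r + 2 := ⟨p - 2, by omega⟩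
  have hr : 3 ≤ r := by omega
  haveI : Fact (r + 2).Prime := ⟨hp⟩
  have e1 : 2 * (r + 2) - 2 = 2 * r + 2 := by omega
  have e2 : (r + 2) - 1 = r + 1 := by omega
  rw [e1, e2]
  -- the basic factorial identity
  have hnat : (2 * r + 2).choose (r + 1) * (r + 1)! = (r + 2) * ∏ i ∈ range r, (r + 3 + i) := by
    apply Nat.eq_of_mul_eq_mul_right (Nat.factorial_pos (r + 1))
    have h1 := Nat.choose_mul_factorial_mul_factorial (show r + 1 ≤ 2 * r + 2 by omega)
    have e : 2 * r + 2 - (r + 1) = r + 1 := by omega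
    rw [e] at h1
    have h2 := fact_prod (r + 1) (r + 1)
    have e2' : r + 1 + (r + 1) = 2 * r + 2 := by omega
    rw [e2'] at h2
    have h3 : ∏ i ∈ range (r + 1), (r + 1 + 1 + i)
        = (∏ i ∈ range r, (r + 3 + i)) * (r + 2) := by
      rw [Finset.prod_range_succ']
      congr 1
      exact Finset.prod_congr rfl (fun i _ => by omega)
    calc (2 * r + 2).choose (r + 1) * (r + 1)! * (r + 1)! = (2 * r + 2)! := h1
      _ = (r + 1)! * ∏ i ∈ range (r + 1), (r + 1 + 1 + i) := h2.symm
      _ = ((r + 2) * ∏ i ∈ range r, (r + 3 + i)) * (r + 1)! := by rw [h3]; ring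
  rw [Nat.factorial_succ] at hnat
  -- the product modulo (r+2)^2
  have hmodn : (∏ i ∈ range r, (r + 3 + i)) ≡ (r ! * (r + 3)) [MOD (r + 2) ^ 2] := by
    rw [← ZMod.natCast_eq_natCast_iff, prod_zmod_sq r hp hr]
    push_cast
    ring
  obtain ⟨k, hk⟩ : ∃ k : ℤ, ((∏ i ∈ range r, (r + 3 + i) : ℕ) : ℤ)
      = (r ! : ℤ) * ((r : ℤ) + 3) + ((r : ℤ) + 2) ^ 2 * k := by
    obtain ⟨k, hk'⟩ := hmodn.dvd
    refine ⟨-k, ?_⟩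
    push_cast at hk' ⊢
    linarith
  -- part 1
  have h1 : (((2 * r + 2).choose (r + 1) : ℤ)
      ≡ -((r + 2 : ℕ) : ℤ) - 2 * ((r + 2 : ℕ) : ℤ) ^ 2 [ZMOD ((r + 2 : ℕ) : ℤ) ^ 3]) := by
    rw [show (((r + 2 : ℕ) : ℤ)) ^ 3 = (((r + 2) ^ 3 : ℕ) : ℤ) by push_cast; ring,
      ← ZMod.intCast_eq_intCast_iff]
    set X := ZMod ((r + 2) ^ 3) with hXdef
    have hcop : Nat.Coprime ((r + 1)!) ((r + 2) ^ 3) := by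
      apply Nat.Coprime.pow_right
      have hnd : ¬ (r + 2) ∣ (r + 1)! := by
        rw [hp.dvd_factorial]
        omega
      exact Nat.coprime_comm.mp (hp.coprime_iff_not_dvd.mpr hnd)
    have hu : IsUnit (((r + 1)! : ℕ) : X) := (ZMod.isUnit_iff_coprime _ _).mpr hcop
    refine hu.mul_right_cancel ?_
    have hZX : (((2 * r + 2).choose (r + 1) * ((r + 1) * r !) : ℕ) : X)
        = (((r + 2) * ∏ i ∈ range r, (r + 3 + i) : ℕ) : X) := by
      exact_mod_cast congrArg (fun n : ℕ => (n : X)) hnat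
    have hkX := congrArg (fun z : ℤ => (z : X)) hk
    have hcube : (((r + 2 : ℕ)) : X) ^ 3 = 0 := by
      rw [← Nat.cast_pow]; exact ZMod.natCast_self _
    rw [Nat.factorial_succ]
    simp only [X] at hZX hkX hcube ⊢
    push_cast at hZX hkX hcube ⊢
    linear_combination hZX + ((r : X) + 2) * hkX + (2 * (r ! : X) + (k : X)) * hcube
  refine ⟨h1, ?_⟩
  have hcat : (r + 2) * catalan (r + 1) = (2 * r + 2).choose (r + 1) := by
    have hc := succ_mul_catalan_eq_centralBinom (r + 1)
    rw [Nat.centralBinom_eq_two_mul_choose] at hc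
    have e : 2 * (r + 1) = 2 * r + 2 := by ring
    have e' : r + 1 + 1 = r + 2 := by omega
    rw [e, e'] at hc
    exact hc
  rw [Int.modEq_iff_dvd]
  have hd := h1.dvd
  have hcZ : ((2 * r + 2).choose (r + 1) : ℤ) = ((r + 2 : ℕ) : ℤ) * (catalan (r + 1) : ℤ) := by
    exact_mod_cast (congrArg (fun n : ℕ => (n : ℤ)) hcat).symm
  rw [hcZ] at hd
  have hu0 : ((r + 2 : ℕ) : ℤ) ≠ 0 := by positivity
  rw [show (((r + 2 : ℕ) : ℤ)) ^ 3 = ((r + 2 : ℕ) : ℤ) * ((r + 2 : ℕ) : ℤ) ^ 2 by ring,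
    show -((r + 2 : ℕ) : ℤ) - 2 * ((r + 2 : ℕ) : ℤ) ^ 2
        - ((r + 2 : ℕ) : ℤ) * (catalan (r + 1) : ℤ)
      = ((r + 2 : ℕ) : ℤ) * ((-1 - 2 * ((r + 2 : ℕ) : ℤ)) - (catalan (r + 1) : ℤ)) by ring] at hd
  exact (mul_dvd_mul_iff_left hu0).mp hd
end

section
/- Let p ≥ 5 be a prime. Then ∑_{k=0}^{p-2} C(2k,k)/(k+1)² ≡ 1 + 3·(p/3) (mod p), as a congruence of rational numbers, where (p/3) denotes the Legendre symbol of p modulo 3. -/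
open Finset

set_option linter.unusedSectionVars false
set_option linter.unusedTactic false
set_option linter.unnecessarySeqFocus false



def Ev (y : ℤ) (n : ℕ) : ℤ := ∑ i ∈ Finset.range (n+1), (n.choose (2*i) : ℤ) * y^i
def Od (y : ℤ) (n : ℕ) : ℤ := ∑ i ∈ Finset.range (n+1), (n.choose (2*i+1) : ℤ) * y^i

lemma Od_succ (y : ℤ) (n : ℕ) : Od y (n+1) = Ev y n + Od y n := by
  unfold Od Ev
  rw [Finset.sum_range_succ]
  have h0 : ((n+1).choose (2*(n+1)+1) : ℤ) = 0 := by
    norm_cast; exact Nat.choose_eq_zero_of_lt (by omega)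
  rw [h0, zero_mul, add_zero, ← Finset.sum_add_distrib]
  apply Finset.sum_congr rfl
  intro i _
  have h : (n+1).choose (2*i+1) = n.choose (2*i) + n.choose (2*i+1) :=
    Nat.choose_succ_succ _ _
  push_cast [h]; ring

lemma Ev_succ (y : ℤ) (n : ℕ) : Ev y (n+1) = Ev y n + y * Od y n := by
  have expand : Ev y (n+1) = (∑ i ∈ Finset.range (n+1),
      ((n+1).choose (2*(i+1)) : ℤ) * y^(i+1)) + ((n+1).choose (2*0) : ℤ) * y^0 := by
    unfold Ev; rw [Finset.sum_range_succ' _ (n+1)]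
  have key : ∀ i ∈ Finset.range (n+1),
      ((n+1).choose (2*(i+1)) : ℤ) * y^(i+1)
      = (n.choose (2*i+1) : ℤ) * y^(i+1) + (n.choose (2*(i+1)) : ℤ) * y^(i+1) := by
    intro i _
    have h : (n+1).choose (2*i+2) = n.choose (2*i+1) + n.choose (2*i+2) :=
      Nat.choose_succ_succ _ _
    have h2 : 2*(i+1) = 2*i+2 := by ring
    rw [h2, h]; push_cast; ring
  have e1 : ∑ i ∈ Finset.range (n+1), (n.choose (2*i+1) : ℤ) * y^(i+1)
      = y * Od y n := by
    unfold Od; rw [Finset.mul_sum]; apply Finset.sum_congr rfl; intro i _; ring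
  have e2 : ∑ i ∈ Finset.range (n+1), (n.choose (2*(i+1)) : ℤ) * y^(i+1)
      = Ev y n - 1 := by
    have top : (n.choose (2*(n+1)) : ℤ) * y^(n+1) = 0 := by
      have : n.choose (2*(n+1)) = 0 := Nat.choose_eq_zero_of_lt (by omega)
      rw [this]; push_cast; ring
    have : Ev y n = ∑ i ∈ Finset.range n, (n.choose (2*(i+1)) : ℤ) * y^(i+1)
        + (n.choose (2*0) : ℤ) * y^0 := by
      unfold Ev; rw [Finset.sum_range_succ' _ n]
    rw [Finset.sum_range_succ, top, add_zero, this]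
    simp
  rw [expand, Finset.sum_congr rfl key, Finset.sum_add_distrib, e1, e2]
  simp only [mul_zero, Nat.choose_zero_right, Nat.cast_one, pow_zero, mul_one]
  ring


lemma EvOd_three (m : ℕ) :
    Ev (-3) (m+1+1+1) = -8 * Ev (-3) m ∧ Od (-3) (m+1+1+1) = -8 * Od (-3) m := by
  simp only [Ev_succ, Od_succ]
  constructor <;> ring

lemma Ev_add_six (n : ℕ) : Ev (-3) (n+6) = 64 * Ev (-3) n := by
  have h1 := EvOd_three n
  have h2 := EvOd_three (n+1+1+1)
  have e : n+6 = n+1+1+1+1+1+1 := by ring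
  rw [e, h2.1, h1.1]
  ring

lemma Ev_one_val : Ev (-3) 1 = 1 := by
  norm_num [Ev, Finset.sum_range_succ]

lemma Ev_five_val : Ev (-3) 5 = 16 := by
  norm_num [Ev, Finset.sum_range_succ, Nat.choose]

lemma Ev_six_one (j : ℕ) : Ev (-3) (6*j+1) = 2^(6*j) := by
  induction j with
  | zero => simpa using Ev_one_val
  | succ k ih =>
    have e : 6*(k+1)+1 = (6*k+1)+6 := by ring
    rw [e, Ev_add_six, ih]
    have e2 : 6*(k+1) = 6*k + 6 := by ring
    rw [e2, pow_add]
    ring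

lemma Ev_six_five (j : ℕ) : Ev (-3) (6*j+5) = 2^(6*j+4) := by
  induction j with
  | zero => simpa using Ev_five_val
  | succ k ih =>
    have e : 6*(k+1)+5 = (6*k+5)+6 := by ring
    rw [e, Ev_add_six, ih]
    have e2 : 6*(k+1)+4 = (6*k+4) + 6 := by ring
    rw [e2, pow_add]
    ring

lemma Ev_prime {q : ℕ} (h2 : q % 2 = 1) (h3 : q % 3 ≠ 0) (h1 : 1 ≤ q) :
    Ev (-3) q = 2^(q-1) := by
  have h6 : q % 6 = 1 ∨ q % 6 = 5 := by omega
  rcases h6 with h | h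
  · obtain ⟨j, hj⟩ : ∃ j, q = 6*j+1 := ⟨q/6, by omega⟩
    rw [hj]; simpa using Ev_six_one j
  · obtain ⟨j, hj⟩ : ∃ j, q = 6*j+5 := ⟨q/6, by omega⟩
    rw [hj]; simpa using Ev_six_five j

lemma Ev_one_pow (n : ℕ) : Ev 1 (n+1) = 2^n := by
  induction n with
  | zero => norm_num [Ev, Finset.sum_range_succ]
  | succ k ih =>
    have hp : (2:ℤ)^(k+1) = 2 * 2^k := by ring
    have h1 := Ev_succ 1 (k+1)
    have h2 := Od_succ 1 (k+1)
    have h3 := Ev_succ 1 k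
    have h4 := Od_succ 1 k
    -- Ev 1 (k+2) = Ev 1 (k+1) + Od 1 (k+1) ; Od 1 (k+1) = Ev 1 k + Od 1 k = Ev 1 (k+1)
    rw [hp, ← ih]
    rw [h1, h4, h3]
    ring


section ZModFacts
variable {p : ℕ} [hpf : Fact p.Prime]

lemma cast_ne_zero' {j : ℕ} (h1 : j ≠ 0) (h2 : j < p) : (j : ZMod p) ≠ 0 := by
  intro h
  rw [ZMod.natCast_eq_zero_iff] at h
  exact absurd (Nat.le_of_dvd (Nat.pos_of_ne_zero h1) h) (by omega)

lemma choose_p_sub_one {j : ℕ} (hj : j ≤ p - 1) : (((p-1).choose j : ℕ) : ZMod p) = (-1)^j := by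
  induction j with
  | zero => simp
  | succ k ih =>
    have hp2 := hpf.out.two_le
    have hd : p ∣ p.choose (k+1) := hpf.out.dvd_choose_self (by omega) (by omega)
    have hsum : (p-1).choose k + (p-1).choose (k+1) = p.choose (k+1) := by
      conv_rhs => rw [show p = (p-1)+1 by omega]
      rw [Nat.choose_succ_succ]
    have hcast : (((p-1).choose k : ℕ) : ZMod p) + (((p-1).choose (k+1) : ℕ) : ZMod p) = 0 := by
      rw [← Nat.cast_add, hsum]
      exact (ZMod.natCast_eq_zero_iff _ _).mpr hd
    rw [ih (by omega)] at hcast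
    have h5 : (((p-1).choose (k+1) : ℕ) : ZMod p) = -(-1)^k := by linear_combination hcast
    rw [h5, pow_succ]
    ring

lemma central_cast {m : ℕ} (hm : 2*m+1 = p) {k : ℕ} (hk : k ≤ p - 1) :
    (((2*k).choose k : ℕ) : ZMod p) = (-4)^k * ((m.choose k : ℕ) : ZMod p) := by
  induction k with
  | zero => simp
  | succ k ih =>
    have ihh := ih (by omega)
    have hkp : ((k+1 : ℕ) : ZMod p) ≠ 0 := cast_ne_zero' (by omega) (by omega)
    have hkp' : ((k : ZMod p)+1) ≠ 0 := by push_cast at hkp; exact hkp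
    have h1 : (k+1) * ((2*(k+1)).choose (k+1)) = 2*(2*k+1) * ((2*k).choose k) := by
      have h := Nat.succ_mul_centralBinom_succ k
      simp only [Nat.centralBinom] at h
      omega
    have c1 : ((k:ZMod p)+1) * (((2*(k+1)).choose (k+1) : ℕ) : ZMod p)
        = (2*(2*(k:ZMod p)+1)) * (((2*k).choose k : ℕ) : ZMod p) := by
      have h := congrArg (fun n : ℕ => (n : ZMod p)) h1
      push_cast at h
      linear_combination h
    have h2 : m.choose (k+1) * (k+1) = m.choose k * (m - k) := Nat.choose_succ_right_eq m k
    have c2 : ((m.choose (k+1) : ℕ) : ZMod p) * ((k:ZMod p)+1)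
        = ((m.choose k : ℕ) : ZMod p) * ((m - k : ℕ) : ZMod p) := by
      have h := congrArg (fun n : ℕ => (n : ZMod p)) h2
      push_cast at h
      push_cast
      linear_combination h
    rcases le_or_gt k m with hkm | hkm
    · have hnat : 2*(m-k) + (2*k+1) = p := by omega
      have hzero : 2*((m - k : ℕ) : ZMod p) + (2*(k:ZMod p)+1) = 0 := by
        have h : ((2*(m-k) + (2*k+1) : ℕ) : ZMod p) = 0 := by
          rw [hnat]; exact ZMod.natCast_self p
        push_cast at h
        linear_combination h
      apply mul_left_cancel₀ hkp'
      push_cast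
      rw [show ((k:ZMod p)+1) * (((2*(k+1)).choose (k+1) : ℕ) : ZMod p) = _ from c1, ihh]
      linear_combination (-(-4:ZMod p)^(k+1)) * c2
        + (2*(-4:ZMod p)^k * ((m.choose k : ℕ) : ZMod p)) * hzero
    · have hz : m.choose k = 0 := Nat.choose_eq_zero_of_lt hkm
      have hz1 : m.choose (k+1) = 0 := Nat.choose_eq_zero_of_lt (by omega)
      rw [hz1]
      apply mul_left_cancel₀ hkp'
      push_cast
      rw [show ((k:ZMod p)+1) * (((2*(k+1)).choose (k+1) : ℕ) : ZMod p) = _ from c1, ihh, hz]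
      push_cast
      ring

end ZModFacts


section Swap
variable {p : ℕ} [hpf : Fact p.Prime]


lemma swap_id (N : ℕ) (hN : N + 1 ≤ p - 1) (x : ZMod p) :
    ((N+1 : ℕ) : ZMod p) * ∑ k ∈ Finset.range (N+1),
        (N.choose k : ZMod p) * x^k * (((k+1 : ℕ) : ZMod p)⁻¹)^2
    = ∑ i ∈ Finset.Icc 1 (N+1), ((i : ℕ) : ZMod p)⁻¹
        * ∑ j ∈ Finset.Icc 1 i, (i.choose j : ZMod p) * x^(j-1) := by
  have hp2 := hpf.out.two_le
  have hinv : ∀ i : ℕ, i ≠ 0 → i ≤ N+1 → ((i : ZMod p)⁻¹ * (i : ZMod p)) = 1 := fun i h1 h2 =>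
    inv_mul_cancel₀ (cast_ne_zero' h1 (by omega))
  -- Step 1: RHS as double sum over Ico
  have step1 : (∑ i ∈ Finset.Icc 1 (N+1), ((i : ℕ) : ZMod p)⁻¹
        * ∑ j ∈ Finset.Icc 1 i, (i.choose j : ZMod p) * x^(j-1))
      = ∑ i ∈ Finset.Ico 1 (N+2), ∑ j ∈ Finset.Ico 1 (i+1),
          ((i : ℕ) : ZMod p)⁻¹ * (i.choose j : ZMod p) * x^(j-1) := by
    rw [← Finset.Ico_add_one_right_eq_Icc 1 (N+1)]
    apply Finset.sum_congr rfl
    intro i _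
    rw [← Finset.Ico_add_one_right_eq_Icc 1 i, Finset.mul_sum]
    apply Finset.sum_congr rfl
    intro j _
    ring
  -- Step 2: swap
  have step2 : (∑ i ∈ Finset.Ico 1 (N+2), ∑ j ∈ Finset.Ico 1 (i+1),
          ((i : ℕ) : ZMod p)⁻¹ * (i.choose j : ZMod p) * x^(j-1))
      = ∑ t ∈ Finset.Ico 1 (N+2), ∑ i ∈ Finset.Ico t (N+2),
          ((i : ℕ) : ZMod p)⁻¹ * (i.choose t : ZMod p) * x^(t-1) :=
    (Finset.sum_Ico_Ico_comm 1 (N+2)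
      (fun t i => ((i : ℕ) : ZMod p)⁻¹ * (i.choose t : ZMod p) * x^(t-1))).symm
  -- Step 3: inner sum evaluation
  have step3 : ∀ t ∈ Finset.Ico 1 (N+2),
      (∑ i ∈ Finset.Ico t (N+2), ((i : ℕ) : ZMod p)⁻¹ * (i.choose t : ZMod p) * x^(t-1))
      = ((t : ℕ) : ZMod p)⁻¹ * ((N+1).choose t : ZMod p) * x^(t-1) := by
    intro t ht
    rw [Finset.mem_Ico] at ht
    have e1 : ∀ i ∈ Finset.Ico t (N+2),
        ((i : ℕ) : ZMod p)⁻¹ * (i.choose t : ZMod p) * x^(t-1)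
        = ((t : ℕ) : ZMod p)⁻¹ * ((i-1).choose (t-1) : ZMod p) * x^(t-1) := by
      intro i hi
      rw [Finset.mem_Ico] at hi
      have hi1 : 1 ≤ i := le_trans ht.1 hi.1
      have hnat : i * ((i-1).choose (t-1)) = i.choose t * t := by
        have h := Nat.add_one_mul_choose_eq (i-1) (t-1)
        rw [show i - 1 + 1 = i by omega, show t - 1 + 1 = t by omega] at h
        exact h
      have hcast : (i : ZMod p) * ((i-1).choose (t-1) : ZMod p)
          = (i.choose t : ZMod p) * (t : ZMod p) := by
        have h : ((i * ((i-1).choose (t-1)) : ℕ) : ZMod p) = ((i.choose t * t : ℕ) : ZMod p) := by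
          rw [hnat]
        push_cast at h
        exact h
      have hii := hinv i (by omega) (by omega)
      have htt := hinv t (by omega) (by omega)
      have : ((i : ℕ) : ZMod p)⁻¹ * (i.choose t : ZMod p)
          = ((t : ℕ) : ZMod p)⁻¹ * ((i-1).choose (t-1) : ZMod p) := by
        have := congrArg (fun z => ((i : ZMod p)⁻¹ * ((t : ZMod p)⁻¹ * z))) hcast
        calc ((i : ℕ) : ZMod p)⁻¹ * (i.choose t : ZMod p)
            = (i : ZMod p)⁻¹ * ((t : ZMod p)⁻¹ * ((i.choose t : ZMod p) * (t : ZMod p))) := by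
              rw [show (t : ZMod p)⁻¹ * ((i.choose t : ZMod p) * (t : ZMod p))
                  = ((t : ZMod p)⁻¹ * (t : ZMod p)) * (i.choose t : ZMod p) by ring, htt]
              ring
          _ = (i : ZMod p)⁻¹ * ((t : ZMod p)⁻¹ * ((i : ZMod p) * ((i-1).choose (t-1) : ZMod p))) := by
              rw [hcast]
          _ = ((t : ℕ) : ZMod p)⁻¹ * ((i-1).choose (t-1) : ZMod p) := by
              rw [show (i : ZMod p)⁻¹ * ((t : ZMod p)⁻¹ * ((i : ZMod p) * ((i-1).choose (t-1) : ZMod p)))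
                  = ((i : ZMod p)⁻¹ * (i : ZMod p)) * ((t : ZMod p)⁻¹ * ((i-1).choose (t-1) : ZMod p)) by ring, hii]
              ring
      rw [mul_assoc, mul_assoc] at *
      rw [show ((i : ℕ) : ZMod p)⁻¹ * ((i.choose t : ZMod p) * x^(t-1))
          = (((i : ℕ) : ZMod p)⁻¹ * (i.choose t : ZMod p)) * x^(t-1) by ring, this]
      ring
    rw [Finset.sum_congr rfl e1]
    rw [← Finset.sum_mul, ← Finset.mul_sum]
    congr 1
    -- ∑ i in Ico t (N+2), choose (i-1) (t-1) = choose (N+1) t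
    have hmap : Finset.Ico t (N+2) = (Finset.Ico (t-1) (N+1)).map (addRightEmbedding 1) := by
      rw [Finset.map_add_right_Ico]
      congr 1 <;> omega
    rw [hmap, Finset.sum_map]
    have e2 : ∀ i' ∈ Finset.Ico (t-1) (N+1),
        (((addRightEmbedding 1 i' : ℕ) - 1).choose (t-1) : ZMod p)
        = (i'.choose (t-1) : ZMod p) := by
      intro i' _
      simp [addRightEmbedding_apply]
    rw [Finset.sum_congr rfl e2]
    congr 1
    rw [← Nat.cast_sum, Finset.Ico_add_one_right_eq_Icc, Nat.sum_Icc_choose,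
      show t - 1 + 1 = t by omega]
  -- assemble
  rw [step1, step2, Finset.sum_congr rfl step3]
  have hmap2 : Finset.Ico 1 (N+2) = (Finset.range (N+1)).map (addRightEmbedding 1) := by
    rw [Finset.range_eq_Ico, Finset.map_add_right_Ico]
  rw [hmap2, Finset.sum_map, Finset.mul_sum]
  apply Finset.sum_congr rfl
  intro k hk
  rw [Finset.mem_range] at hk
  simp only [addRightEmbedding_apply]
  rw [show k + 1 - 1 = k by omega]
  have hk1 := hinv (k+1) (by omega) (by omega)
  have c : (((N+1).choose (k+1) : ℕ) : ZMod p) * ((k+1 : ℕ) : ZMod p)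
      = ((N+1 : ℕ) : ZMod p) * (N.choose k : ZMod p) := by
    have h := (Nat.add_one_mul_choose_eq N k).symm
    have h2 : (((N+1).choose (k+1) * (k+1) : ℕ) : ZMod p) = (((N+1) * N.choose k : ℕ) : ZMod p) := by
      rw [h]
    push_cast at h2 ⊢
    linear_combination h2
  push_cast at c hk1 ⊢
  linear_combination (-(x^k) * (((k:ZMod p)+1)⁻¹)^2) * c
    + (x^k * (((N+1).choose (k+1) : ℕ) : ZMod p) * ((k:ZMod p)+1)⁻¹) * hk1

end Swap




section S5
variable {p : ℕ} [hpf : Fact p.Prime]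


-- Range extension: Ev y p as 1 + sum over Icc 1 m
lemma Ev_eq_one_add {m : ℕ} (hm : 2*m+1 = p) (y : ℤ) :
    Ev y p = 1 + ∑ i ∈ Finset.Icc 1 m, (p.choose (2*i) : ℤ) * y^i := by
  unfold Ev
  have hsub : Finset.range (m+1) ⊆ Finset.range (p+1) := by
    apply Finset.range_subset_range.mpr; omega
  rw [← Finset.sum_subset hsub]
  · rw [Finset.range_eq_Ico, Finset.sum_eq_sum_Ico_succ_bot (by omega : 0 < m+1)]
    rw [Finset.Ico_add_one_right_eq_Icc]
    simp
  · intro i _ hi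
    rw [Finset.mem_range, not_lt] at hi
    have : p.choose (2*i) = 0 := Nat.choose_eq_zero_of_lt (by omega)
    rw [this]
    push_cast; ring

lemma Z_zero {m : ℕ} (hm : 2*m+1 = p) (hp5 : 5 ≤ p) :
    ∑ i ∈ Finset.Icc 1 m, ((i : ℕ) : ZMod p)⁻¹ * ((-3 : ZMod p)^i - 1) = 0 := by
  classical
  -- b i = choose p (2i) / p
  set b : ℕ → ℕ := fun i => p.choose (2*i) / p with hbdef
  have hb : ∀ i ∈ Finset.Icc 1 m, p * b i = p.choose (2*i) := by
    intro i hi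
    rw [Finset.mem_Icc] at hi
    have hdvd : p ∣ p.choose (2*i) := hpf.out.dvd_choose_self (by omega) (by omega)
    exact Nat.mul_div_cancel' hdvd
  -- in ZMod p : i⁻¹ = -2 * b i
  have hinv : ∀ i ∈ Finset.Icc 1 m, ((i : ℕ) : ZMod p)⁻¹ = -2 * ((b i : ℕ) : ZMod p) := by
    intro i hi
    rw [Finset.mem_Icc] at hi
    have hnat : p * ((p-1).choose (2*i-1)) = p.choose (2*i) * (2*i) := by
      have h := Nat.add_one_mul_choose_eq (p-1) (2*i-1)
      rw [show p - 1 + 1 = p by omega, show 2*i - 1 + 1 = 2*i by omega] at h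
      exact h
    have hnat2 : (p-1).choose (2*i-1) = b i * (2*i) := by
      have h2 : p * ((p-1).choose (2*i-1)) = p * (b i * (2*i)) := by
        rw [hnat, ← hb i (Finset.mem_Icc.mpr hi), mul_assoc]
      exact Nat.eq_of_mul_eq_mul_left (by omega) h2
    have hcast : ((-1 : ZMod p))^(2*i-1) = ((b i : ℕ) : ZMod p) * ((2*i : ℕ) : ZMod p) := by
      rw [← choose_p_sub_one (by omega : 2*i-1 ≤ p - 1), hnat2]
      push_cast; ring
    have hodd : ((-1 : ZMod p))^(2*i-1) = -1 := Odd.neg_one_pow ⟨i-1, by omega⟩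
    apply inv_eq_of_mul_eq_one_right
    rw [hodd] at hcast
    push_cast at hcast ⊢
    linear_combination hcast
  rw [Finset.sum_congr rfl (fun i hi => by rw [hinv i hi])]
  -- convert to integer sum
  have key : ∑ i ∈ Finset.Icc 1 m, (b i : ℤ) * ((-3 : ℤ)^i - 1) = 0 := by
    have hmul : (p : ℤ) * (∑ i ∈ Finset.Icc 1 m, (b i : ℤ) * ((-3 : ℤ)^i - 1))
        = Ev (-3) p - Ev 1 p := by
      rw [Ev_eq_one_add hm (-3), Ev_eq_one_add hm 1]
      have expand : ∀ SA SB : ℤ, (1+SA) - (1+SB) = SA - SB := fun _ _ => by ring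
      rw [expand, ← Finset.sum_sub_distrib, Finset.mul_sum]
      apply Finset.sum_congr rfl
      intro i hi
      have h := hb i hi
      have hc : ((p * b i : ℕ) : ℤ) = ((p.choose (2*i) : ℕ) : ℤ) := by rw [h]
      push_cast at hc
      push_cast
      linear_combination ((-3:ℤ)^i - 1) * hc
    have hEv : Ev (-3) p - Ev 1 p = 0 := by
      have h2 : p % 2 = 1 := Nat.odd_iff.mp (hpf.out.odd_of_ne_two (by omega))
      have h3 : p % 3 ≠ 0 := by
        intro h
        rcases hpf.out.eq_one_or_self_of_dvd 3 (Nat.dvd_of_mod_eq_zero h) with h' | h' <;> omega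
      have e1 : Ev 1 p = 2^(p-1) := by
        have h := Ev_one_pow (p-1)
        rwa [show p-1+1 = p by omega] at h
      rw [Ev_prime h2 h3 (by omega), e1, sub_self]
    rw [hEv] at hmul
    have hp0 : (p : ℤ) ≠ 0 := by have := hpf.out.two_le; positivity
    exact (mul_eq_zero.mp hmul).resolve_left hp0
  have : ((∑ i ∈ Finset.Icc 1 m, (b i : ℤ) * ((-3 : ℤ)^i - 1) : ℤ) : ZMod p) = 0 := by
    rw [key]; simp
  push_cast at this
  calc ∑ i ∈ Finset.Icc 1 m, (-2 * ((b i : ℕ) : ZMod p)) * ((-3 : ZMod p)^i - 1)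
      = -2 * ∑ i ∈ Finset.Icc 1 m, ((b i : ℕ) : ZMod p) * ((-3 : ZMod p)^i - 1) := by
        rw [Finset.mul_sum]; apply Finset.sum_congr rfl; intro i _; ring
    _ = 0 := by rw [this]; ring

end S5



instance fact_prime_three : Fact (Nat.Prime 3) := ⟨by norm_num⟩

lemma neg_three_pow {p : ℕ} [hpf : Fact p.Prime] (hp5 : 5 ≤ p) :
    ((-3 : ZMod p))^((p-1)/2) = ((leg3 p : ℤ) : ZMod p) := by
  have hp2 : p ≠ 2 := by omega
  have hp3 : p ≠ 3 := by omega
  have hodd : p % 2 = 1 := Nat.odd_iff.mp (hpf.out.odd_of_ne_two hp2)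
  have hmod3 : p % 3 = 1 ∨ p % 3 = 2 := by
    have : p % 3 ≠ 0 := by
      intro h
      rcases hpf.out.eq_one_or_self_of_dvd 3 (Nat.dvd_of_mod_eq_zero h) with h' | h' <;> omega
    omega
  -- Step 1: legendreSym p (-3) = legendreSym 3 p
  have hq : legendreSym 3 (p : ℤ) * legendreSym p 3 = (-1)^(p/2) := by
    have h := legendreSym.quadratic_reciprocity (p := p) (q := 3) hp2 (by norm_num) hp3
    simpa using h
  have hsq : legendreSym 3 (p : ℤ) * legendreSym 3 (p : ℤ) = 1 := by
    have hne : ((p : ℤ) : ZMod 3) ≠ 0 := by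
      intro h
      rw [ZMod.intCast_zmod_eq_zero_iff_dvd] at h
      have h' : (3:ℕ) ∣ p := by exact_mod_cast h
      rcases hpf.out.eq_one_or_self_of_dvd 3 h' with h'' | h'' <;> omega
    have hs := legendreSym.sq_one (p := 3) hne
    rw [sq] at hs
    exact hs
  have hp3leg : legendreSym p 3 = (-1)^(p/2) * legendreSym 3 (p : ℤ) := by
    linear_combination legendreSym 3 (p:ℤ) * hq - legendreSym p 3 * hsq
  have hneg1 : legendreSym p (-1) = (-1)^(p/2) := by
    rw [legendreSym.at_neg_one hp2, ZMod.χ₄_eq_neg_one_pow hodd]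
  have hmain : legendreSym p (-3) = legendreSym 3 (p : ℤ) := by
    have hmul : legendreSym p (-3) = legendreSym p (-1) * legendreSym p 3 := by
      rw [← legendreSym.mul]; norm_num
    rw [hmul, hneg1, hp3leg]
    have : ((-1 : ℤ))^(p/2) * ((-1 : ℤ))^(p/2) = 1 := by
      rw [← pow_add]
      exact Even.neg_one_pow ⟨p/2, rfl⟩
    linear_combination legendreSym 3 (p:ℤ) * this
  -- Step 2: legendreSym 3 p = leg3 p
  have hleg : legendreSym 3 (p : ℤ) = leg3 p := by
    have hmod : legendreSym 3 (p : ℤ) = legendreSym 3 ((p : ℤ) % 3) := legendreSym.mod 3 _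
    rcases hmod3 with h | h
    · have : (p : ℤ) % 3 = 1 := by omega
      rw [hmod, this, leg3, if_pos h]
      decide
    · have : (p : ℤ) % 3 = 2 := by omega
      rw [hmod, this, leg3, if_neg (by omega)]
      decide
  -- Step 3: Euler
  have heuler := legendreSym.eq_pow p (-3)
  rw [hmain, hleg] at heuler
  push_cast at heuler
  rw [show (p-1)/2 = p/2 by omega]
  exact heuler.symm



section S7
variable {p : ℕ} [hpf : Fact p.Prime]


theorem main_zmod (hp5 : 5 ≤ p) :
    ∑ k ∈ Finset.range (p-1), (((2*k).choose k : ℕ) : ZMod p) * (((k+1 : ℕ) : ZMod p)⁻¹)^2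
    = 1 + 3 * ((leg3 p : ℤ) : ZMod p) := by
  have hodd : p % 2 = 1 := Nat.odd_iff.mp (hpf.out.odd_of_ne_two (by omega))
  set m := (p-1)/2 with hmdef
  have hm : 2*m+1 = p := by omega
  set S := ∑ k ∈ Finset.range (m+1),
      ((m.choose k : ℕ) : ZMod p) * (-4 : ZMod p)^k * (((k+1 : ℕ) : ZMod p)⁻¹)^2 with hS
  -- Step AB
  have hAB : ∑ k ∈ Finset.range (p-1), (((2*k).choose k : ℕ) : ZMod p)
        * (((k+1 : ℕ) : ZMod p)⁻¹)^2 = S := by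
    have e1 : ∀ k ∈ Finset.range (p-1),
        (((2*k).choose k : ℕ) : ZMod p) * (((k+1 : ℕ) : ZMod p)⁻¹)^2
        = ((m.choose k : ℕ) : ZMod p) * (-4 : ZMod p)^k * (((k+1 : ℕ) : ZMod p)⁻¹)^2 := by
      intro k hk
      rw [Finset.mem_range] at hk
      rw [central_cast hm (by omega)]
      ring
    rw [Finset.sum_congr rfl e1, hS]
    refine (Finset.sum_subset (Finset.range_subset_range.mpr (by omega)) ?_).symm
    intro k hk hk2
    rw [Finset.mem_range] at hk
    rw [Finset.mem_range, not_lt] at hk2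
    rw [Nat.choose_eq_zero_of_lt (by omega)]
    push_cast; ring
  rw [hAB]
  -- swap identity
  have hswap := swap_id (p := p) m (by omega) (-4)
  -- inner sums
  have hinner : ∀ i ∈ Finset.Icc 1 (m+1),
      (-4 : ZMod p) * ∑ j ∈ Finset.Icc 1 i, (i.choose j : ZMod p) * (-4 : ZMod p)^(j-1)
      = (-3 : ZMod p)^i - 1 := by
    intro i hi
    rw [Finset.mem_Icc] at hi
    have hpow : ((-4 : ZMod p) + 1)^i
        = ∑ j ∈ Finset.range (i+1), (-4 : ZMod p)^j * 1^(i-j) * (i.choose j) := add_pow _ _ _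
    simp only [one_pow, mul_one] at hpow
    rw [Finset.range_eq_Ico, Finset.sum_eq_sum_Ico_succ_bot (by omega : 0 < i+1)] at hpow
    rw [Finset.Ico_add_one_right_eq_Icc] at hpow
    have e2 : ∀ j ∈ Finset.Icc 1 i,
        (-4 : ZMod p)^j * ((i.choose j : ℕ) : ZMod p)
        = (-4 : ZMod p) * (((i.choose j : ℕ) : ZMod p) * (-4 : ZMod p)^(j-1)) := by
      intro j hj
      rw [Finset.mem_Icc] at hj
      rw [show j = j - 1 + 1 by omega, pow_succ]
      rw [show j - 1 + 1 - 1 = j - 1 by omega]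
      ring
    rw [Finset.sum_congr rfl e2] at hpow
    have h43 : ((-4 : ZMod p) + 1) = -3 := by norm_num
    rw [h43] at hpow
    have hsimp : (-4:ZMod p)^0 * ((i.choose 0 : ℕ) : ZMod p) = 1 := by
      simp
    rw [hsimp] at hpow
    rw [Finset.mul_sum]
    linear_combination -hpow
  -- assemble sum over Icc 1 (m+1)
  have key : (-4 : ZMod p) * (((m+1 : ℕ) : ZMod p) * S)
      = ∑ i ∈ Finset.Icc 1 (m+1), ((i : ℕ) : ZMod p)⁻¹ * ((-3 : ZMod p)^i - 1) := by
    rw [hswap, Finset.mul_sum]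
    apply Finset.sum_congr rfl
    intro i hi
    rw [← hinner i hi]
    ring
  -- split top
  rw [Finset.sum_Icc_succ_top (by omega : 1 ≤ m+1), Z_zero hm hp5, zero_add] at key
  -- arithmetic
  have hc2 : (2 : ZMod p) * ((m+1 : ℕ) : ZMod p) = 1 := by
    have hnat : ((2*(m+1) : ℕ) : ZMod p) = ((p+1 : ℕ) : ZMod p) := by
      congr 1; omega
    push_cast [ZMod.natCast_self] at hnat
    push_cast
    linear_combination hnat
  have hcinv : (((m+1 : ℕ) : ZMod p))⁻¹ = 2 := by
    apply inv_eq_of_mul_eq_one_right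
    linear_combination hc2
  rw [hcinv] at key
  have h4 : (-4 : ZMod p) ≠ 0 := by
    have : ((4:ℕ) : ZMod p) ≠ 0 := cast_ne_zero' (by omega) (by omega)
    push_cast at this
    intro h
    apply this
    linear_combination -h
  have hSval : S = 1 - (-3 : ZMod p)^(m+1) := by
    apply mul_left_cancel₀ h4
    have hc2' : (2 : ZMod p) * ((m+1 : ℕ) : ZMod p) = 1 := hc2
    linear_combination 2 * key + 4 * S * hc2'
  rw [hSval, pow_succ, hmdef, neg_three_pow hp5]
  ring
end S7






theorem sum_central_binom_div_sq (p : ℕ) (hp : p.Prime) (hp5 : 5 ≤ p) :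
    ratCongr p 1
      (∑ k ∈ Finset.range (p - 1), ((2 * k).choose k : ℚ) / (k + 1) ^ 2)
      (1 + 3 * (leg3 p : ℚ)) := by
  haveI hpf : Fact p.Prime := ⟨hp⟩
  set w : ℕ := (p-1).factorial with hw
  set c : ℕ → ℕ := fun k => w / (k+1) with hc
  have hck : ∀ k, k < p - 1 → (k+1) * c k = w := by
    intro k hk
    exact Nat.mul_div_cancel' (Nat.dvd_factorial (by omega) (by omega))
  set N : ℤ := (∑ k ∈ Finset.range (p-1), ((2*k).choose k : ℤ) * (c k : ℤ)^2)
      - (1 + 3 * leg3 p) * (w:ℤ)^2 with hN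
  have hpw : ¬ ((p:ℤ) ∣ ((w:ℤ))^2) := by
    intro h
    have h1 : (p:ℤ) ∣ ((w^2 : ℕ) : ℤ) := by push_cast; exact h
    have h2 : p ∣ w^2 := Int.natCast_dvd_natCast.mp h1
    have h3 : p ∣ w := hp.dvd_of_dvd_pow h2
    have h4 : p ≤ p - 1 := (Nat.Prime.dvd_factorial hp).mp h3
    omega
  -- rational identity
  have hqid : ((∑ k ∈ Finset.range (p - 1), ((2 * k).choose k : ℚ) / (k + 1) ^ 2)
      - (1 + 3 * (leg3 p : ℚ))) * (((w:ℤ)^2 : ℤ) : ℚ) = (N : ℚ) := by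
    rw [hN, sub_mul, Finset.sum_mul]
    push_cast
    congr 1
    apply Finset.sum_congr rfl
    intro k hk
    rw [Finset.mem_range] at hk
    have hk1 : ((k:ℚ)+1) ≠ 0 := by positivity
    have hcast : ((k:ℚ)+1) * (c k : ℚ) = (w : ℚ) := by
      exact_mod_cast hck k hk
    have hdiv : (w:ℚ)/((k:ℚ)+1) = (c k : ℚ) := by
      rw [div_eq_iff hk1]
      linear_combination -hcast
    rw [← hdiv, div_pow]
    ring
  -- divisibility
  have hdvd : (p:ℤ) ∣ N := by
    rw [← ZMod.intCast_zmod_eq_zero_iff_dvd]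
    have SN : ∑ k ∈ Finset.range (p-1),
          (((2*k).choose k : ℕ) : ZMod p) * ((c k : ℕ) : ZMod p)^2
        = (1 + 3 * ((leg3 p : ℤ) : ZMod p)) * ((w : ℕ) : ZMod p)^2 := by
      rw [← main_zmod hp5, Finset.sum_mul]
      apply Finset.sum_congr rfl
      intro k hk
      rw [Finset.mem_range] at hk
      have hne : ((k+1 : ℕ) : ZMod p) ≠ 0 := cast_ne_zero' (by omega) (by omega)
      have hinv : ((k+1 : ℕ) : ZMod p) * ((c k : ℕ) : ZMod p) = ((w : ℕ) : ZMod p) := by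
        have h : (((k+1) * c k : ℕ) : ZMod p) = ((w : ℕ) : ZMod p) := by rw [hck k hk]
        push_cast at h ⊢
        linear_combination h
      have hck2 : ((c k : ℕ) : ZMod p) = (((k+1 : ℕ) : ZMod p))⁻¹ * ((w : ℕ) : ZMod p) := by
        rw [eq_inv_mul_iff_mul_eq₀ hne]
        exact hinv
      rw [hck2]
      ring
    rw [hN]
    push_cast
    push_cast at SN
    linear_combination SN
  obtain ⟨s, hs⟩ := hdvd
  refine ⟨s, (w:ℤ)^2, hpw, ?_⟩
  rw [hqid, hs]
  push_cast
  ring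
end

section
/- Let p ≥ 5 be a prime and let k be an integer with 0 ≤ k ≤ p-1. Then (-1)^k·C(2k,k)·C(p-1,k) ≡ C(2k,k)·(1 - p·H_k) (mod p²), as a congruence of rational numbers. -/
/-- Sum of `k!/(j+1)` over `j < k`, as an integer. -/
def Saux (k : ℕ) : ℤ := ∑ j ∈ Finset.range k, ((k.factorial / (j + 1) : ℕ) : ℤ)

lemma Saux_succ (k : ℕ) : Saux (k + 1) = (k + 1) * Saux k + k.factorial := by
  unfold Saux
  rw [Finset.sum_range_succ]
  have hlast : ((k + 1).factorial / (k + 1) : ℕ) = k.factorial := by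
    rw [Nat.factorial_succ, Nat.mul_div_cancel_left _ (Nat.succ_pos k)]
  rw [hlast]
  congr 1
  rw [Finset.mul_sum]
  apply Finset.sum_congr rfl
  intro j hj
  have hj' := Finset.mem_range.mp hj
  have hdvd : (j + 1) ∣ k.factorial := Nat.dvd_factorial (Nat.succ_pos j) (by omega)
  have : (k + 1).factorial / (j + 1) = (k + 1) * (k.factorial / (j + 1)) := by
    rw [Nat.factorial_succ, Nat.mul_div_assoc _ hdvd]
  rw [this]
  push_cast
  ring

lemma key_dvd (p k : ℕ) :
    ((p : ℤ) ^ 2) ∣ (∏ j ∈ Finset.range k, ((j : ℤ) + 1 - p)) -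
      ((k.factorial : ℤ) - p * Saux k) := by
  induction k with
  | zero => simp [Saux]
  | succ k ih =>
    obtain ⟨d, hd⟩ := ih
    refine ⟨Saux k + d * ((k : ℤ) + 1 - p), ?_⟩
    rw [Finset.prod_range_succ, Saux_succ]
    have hprod : (∏ j ∈ Finset.range k, ((j : ℤ) + 1 - p)) =
        ((k.factorial : ℤ) - p * Saux k) + (p : ℤ) ^ 2 * d := by linarith
    rw [hprod, Nat.factorial_succ]
    push_cast
    ring

theorem central_binom_mul_choose_pred (p k : ℕ) (hp : p.Prime) (hp5 : 5 ≤ p)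
    (hk : k ≤ p - 1) :
    ratCongr p 2
      ((-1 : ℚ) ^ k * ((2 * k).choose k : ℚ) * ((p - 1).choose k : ℚ))
      (((2 * k).choose k : ℚ) * (1 - p * H k)) := by
  obtain ⟨d, hd⟩ := key_dvd p k
  refine ⟨((2 * k).choose k : ℤ) * d, (k.factorial : ℤ), ?_, ?_⟩
  · intro hdvd
    rw [Int.natCast_dvd_natCast] at hdvd
    have := (Nat.Prime.dvd_factorial hp).mp hdvd
    omega
  · -- Q1 : (-1)^k * C(p-1,k) * k! = ∏ (j+1-p) in ℚ
    have hQ1 : (-1 : ℚ) ^ k * ((p - 1).choose k : ℚ) * (k.factorial : ℚ) =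
        ∏ j ∈ Finset.range k, ((j : ℚ) + 1 - p) := by
      have hnat : (p - 1).descFactorial k = k.factorial * (p - 1).choose k :=
        Nat.descFactorial_eq_factorial_mul_choose _ _
      rw [Nat.descFactorial_eq_prod_range] at hnat
      have hcast : (∏ i ∈ Finset.range k, ((p - 1 - i : ℕ) : ℚ)) =
          ∏ i ∈ Finset.range k, ((p : ℚ) - 1 - i) := by
        apply Finset.prod_congr rfl
        intro i hi
        have hi' := Finset.mem_range.mp hi
        have : (p - 1 - i : ℕ) = p - (1 + i) := by omega
        rw [this, Nat.cast_sub (by omega)]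
        push_cast
        ring
      have hcast2 : ((∏ i ∈ Finset.range k, (p - 1 - i) : ℕ) : ℚ) =
          ∏ i ∈ Finset.range k, ((p : ℚ) - 1 - i) := by
        rw [Nat.cast_prod]; exact hcast
      have h3 : (∏ j ∈ Finset.range k, ((j : ℚ) + 1 - p)) =
          (-1 : ℚ) ^ k * ∏ i ∈ Finset.range k, ((p : ℚ) - 1 - i) := by
        calc (∏ j ∈ Finset.range k, ((j : ℚ) + 1 - p))
            = ∏ j ∈ Finset.range k, ((-1 : ℚ) * ((p : ℚ) - 1 - j)) := by
              exact Finset.prod_congr rfl fun i _ => by ring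
          _ = (∏ _j ∈ Finset.range k, (-1 : ℚ)) *
                ∏ i ∈ Finset.range k, ((p : ℚ) - 1 - i) := Finset.prod_mul_distrib
          _ = (-1 : ℚ) ^ k * ∏ i ∈ Finset.range k, ((p : ℚ) - 1 - i) := by
              rw [Finset.prod_const, Finset.card_range]
      rw [h3, ← hcast2, hnat]
      push_cast
      ring
    -- Q2 : H k * k! = Saux k in ℚ
    have hQ2 : H k * (k.factorial : ℚ) = ((Saux k : ℤ) : ℚ) := by
      unfold H Saux
      rw [Finset.sum_mul, Int.cast_sum]
      apply Finset.sum_congr rfl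
      intro j hj
      have hj' := Finset.mem_range.mp hj
      have hdvd : (j + 1) ∣ k.factorial := Nat.dvd_factorial (Nat.succ_pos j) (by omega)
      rw [Int.cast_natCast, Nat.cast_div hdvd (by positivity)]
      push_cast
      ring
    -- Q3 : the integer identity cast to ℚ
    have hQ3 : (∏ j ∈ Finset.range k, ((j : ℚ) + 1 - p)) -
        ((k.factorial : ℚ) - p * ((Saux k : ℤ) : ℚ)) = (p : ℚ) ^ 2 * ((d : ℤ) : ℚ) := by
      have := congrArg (fun x : ℤ => (x : ℚ)) hd
      push_cast at this ⊢
      linarith [this]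
    push_cast
    push_cast at hQ1 hQ2 hQ3
    linear_combination ((2 * k).choose k : ℚ) * hQ3 + ((2 * k).choose k : ℚ) * hQ1 +
      (p : ℚ) * ((2 * k).choose k : ℚ) * hQ2
end

section
/- Let p ≥ 5 be a prime and let k be an integer with 0 ≤ k ≤ p-1. Then C(2k,k)·C(p-1,2k) ≡ C(2k,k)·(1 - p·H_{2k}) (mod p²), as a congruence of rational numbers. -/
/-- Rationals that are `p`-integral. -/
def noP (p : ℕ) (q : ℚ) : Prop := ∃ s t : ℤ, ¬ ((p : ℤ) ∣ t) ∧ q * (t : ℚ) = (s : ℚ)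

lemma noP_int (p : ℕ) (hp : p.Prime) (n : ℤ) : noP p n := by
  refine ⟨n, 1, ?_, by simp⟩
  intro h
  have := Int.eq_one_of_dvd_one (by positivity) h
  have : p = 1 := by exact_mod_cast this
  exact hp.one_lt.ne' this

lemma noP_mul {p : ℕ} (hp : p.Prime) {a b : ℚ} (ha : noP p a) (hb : noP p b) :
    noP p (a * b) := by
  obtain ⟨s1, t1, h1, e1⟩ := ha
  obtain ⟨s2, t2, h2, e2⟩ := hb
  refine ⟨s1 * s2, t1 * t2, ?_, ?_⟩
  · intro h
    rcases ((Nat.prime_iff_prime_int.mp hp).dvd_mul).1 h with h | h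
    · exact h1 h
    · exact h2 h
  · push_cast
    linear_combination ((t2 : ℚ) * b) * e1 + (s1 : ℚ) * e2

lemma noP_add {p : ℕ} (hp : p.Prime) {a b : ℚ} (ha : noP p a) (hb : noP p b) :
    noP p (a + b) := by
  obtain ⟨s1, t1, h1, e1⟩ := ha
  obtain ⟨s2, t2, h2, e2⟩ := hb
  refine ⟨s1 * t2 + s2 * t1, t1 * t2, ?_, ?_⟩
  · intro h
    rcases ((Nat.prime_iff_prime_int.mp hp).dvd_mul).1 h with h | h
    · exact h1 h
    · exact h2 h
  · push_cast
    linear_combination (t2 : ℚ) * e1 + (t1 : ℚ) * e2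

lemma noP_one_div {p : ℕ} (hp : p.Prime) (j : ℕ) (hj : ¬ (p ∣ j)) :
    noP p (1 / (j : ℚ)) := by
  have hj0 : j ≠ 0 := by rintro rfl; exact hj (dvd_zero p)
  refine ⟨1, j, ?_, ?_⟩
  · intro h
    exact hj (by exact_mod_cast h)
  · field_simp
    simp

lemma ratCongr_of_noP {p : ℕ} (hp : p.Prime) {a b : ℚ} {c : ℚ} (hc : noP p c)
    (h : a - b = (p : ℚ) ^ 2 * c) : ratCongr p 2 a b := by
  obtain ⟨s, t, ht, e⟩ := hc
  exact ⟨s, t, ht, by rw [h]; linear_combination ((p : ℚ)) ^ 2 * e⟩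

lemma noP_H {p : ℕ} (hp : p.Prime) (n : ℕ) (hn : n < p) : noP p (H n) := by
  unfold H
  refine Finset.sum_induction _ (noP p) (fun a b => noP_add hp) ?_ ?_
  · have := noP_int p hp 0; simpa using this
  · intro j hj
    have hjn : j < n := Finset.mem_range.1 hj
    have : ((j : ℚ) + 1) = ((j + 1 : ℕ) : ℚ) := by push_cast; ring
    rw [this]
    refine noP_one_div hp (j + 1) ?_
    intro hd
    have := Nat.le_of_dvd (Nat.succ_pos j) hd
    omega

/-- Key induction: `C(p-1,n) = (-1)^n (1 - p H_n) + p² c` with `c` `p`-integral. -/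
lemma key {p : ℕ} (hp : p.Prime) : ∀ n : ℕ, n ≤ p - 1 →
    ∃ c : ℚ, noP p c ∧ (((p - 1).choose n : ℕ) : ℚ) = (-1) ^ n * (1 - p * H n) + (p : ℚ) ^ 2 * c := by
  intro n
  induction n with
  | zero =>
    intro _
    exact ⟨0, (by simpa using noP_int p hp 0), by simp [H]⟩
  | succ n ih =>
    intro hn1
    have hp1 : 1 ≤ p := hp.one_lt.le
    have hn : n ≤ p - 1 := by omega
    obtain ⟨c, hc, e⟩ := ih hn
    have hchoose : (((p - 1).choose (n + 1) : ℕ) : ℚ) * ((n : ℚ) + 1) =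
        (((p - 1).choose n : ℕ) : ℚ) * ((p : ℚ) - 1 - n) := by
      have h := Nat.choose_succ_right_eq (p - 1) n
      have hcast : (((p - 1) - n : ℕ) : ℚ) = (p : ℚ) - 1 - n := by
        rw [Nat.cast_sub hn, Nat.cast_sub hp1]; push_cast; ring
      have := congrArg (fun m : ℕ => (m : ℚ)) h
      push_cast at this
      rw [Nat.cast_sub hn, Nat.cast_sub hp1] at this
      push_cast at this
      linarith [this]
    have hne : ((n : ℚ) + 1) ≠ 0 := by positivity
    have hHsucc : H (n + 1) = H n + 1 / ((n : ℚ) + 1) := by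
      simp [H, Finset.sum_range_succ]
    refine ⟨(-1) ^ (n + 1) * H n * (1 / ((n : ℚ) + 1)) +
        c * ((p : ℚ) - 1 - n) * (1 / ((n : ℚ) + 1)), ?_, ?_⟩
    · have hHn : noP p (H n) := noP_H hp n (by omega)
      have hinv : noP p (1 / ((n : ℚ) + 1)) := by
        have : ((n : ℚ) + 1) = ((n + 1 : ℕ) : ℚ) := by push_cast; ring
        rw [this]
        refine noP_one_div hp (n + 1) ?_
        intro hd
        have := Nat.le_of_dvd (Nat.succ_pos n) hd
        omega
      have hpm : noP p ((p : ℚ) - 1 - n) := by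
        have : ((p : ℚ) - 1 - n) = (((p : ℤ) - 1 - n : ℤ) : ℚ) := by push_cast; ring
        rw [this]; exact noP_int p hp _
      exact noP_add hp
        (noP_mul hp (noP_mul hp (by
          have : ((-1 : ℚ)) ^ (n + 1) = (((-1 : ℤ)) ^ (n + 1) : ℤ) := by push_cast; ring
          rw [this]; exact noP_int p hp _) hHn) hinv)
        (noP_mul hp (noP_mul hp hc hpm) hinv)
    · have h2 : (((p - 1).choose (n + 1) : ℕ) : ℚ) * ((n : ℚ) + 1) =
          ((-1) ^ (n + 1) * (1 - p * H (n + 1)) + (p : ℚ) ^ 2 *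
            ((-1) ^ (n + 1) * H n * (1 / ((n : ℚ) + 1)) +
             c * ((p : ℚ) - 1 - n) * (1 / ((n : ℚ) + 1)))) * ((n : ℚ) + 1) := by
        rw [hchoose, e, hHsucc]
        field_simp
        ring
      exact mul_right_cancel₀ hne h2

theorem central_binom_mul_choose_pred_two (p k : ℕ) (hp : p.Prime) (hp5 : 5 ≤ p)
    (hk : k ≤ p - 1) :
    ratCongr p 2
      (((2 * k).choose k : ℚ) * ((p - 1).choose (2 * k) : ℚ))
      (((2 * k).choose k : ℚ) * (1 - p * H (2 * k))) := by
  have hp1 : 1 ≤ p := hp.one_lt.le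
  by_cases h2k : 2 * k ≤ p - 1
  · obtain ⟨c, hc, e⟩ := key hp (2 * k) h2k
    have hC : noP p (((2 * k).choose k : ℕ) : ℚ) := by
      have h2 : (((2 * k).choose k : ℕ) : ℚ) = (((2 * k).choose k : ℤ) : ℚ) := by push_cast; ring
      rw [h2]; exact noP_int p hp _
    refine ratCongr_of_noP hp (noP_mul hp hC hc) ?_
    have hneg : ((-1 : ℚ)) ^ (2 * k) = 1 := by
      rw [pow_mul]; norm_num
    rw [e, hneg]
    ring
  · -- here p ≤ 2k ≤ 2p - 2, both sides divisible by p²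
    push_neg at h2k
    have hkp : k < p := by omega
    have hp2k : p ≤ 2 * k := by omega
    have hch0 : (p - 1).choose (2 * k) = 0 := Nat.choose_eq_zero_of_lt (by omega)
    have hdvd : p ∣ (2 * k).choose k := by
      have := hp.dvd_choose_add (a := k) (b := k) hkp hkp (by omega)
      simpa [two_mul] using this
    obtain ⟨m, hm⟩ := hdvd
    -- 1 - p H(2k) = -p * d with d p-integral
    have hmem : p - 1 ∈ Finset.range (2 * k) := Finset.mem_range.2 (by omega)
    set d := ∑ j ∈ (Finset.range (2 * k)).erase (p - 1), 1 / ((j : ℚ) + 1) with hd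
    have hH : H (2 * k) = 1 / (p : ℚ) + d := by
      rw [hd, H, ← Finset.add_sum_erase _ _ hmem]
      congr 1
      rw [Nat.cast_sub hp1]
      norm_num
    have hpne : (p : ℚ) ≠ 0 := by positivity
    have hnoPd : noP p d := by
      rw [hd]
      refine Finset.sum_induction _ (noP p) (fun a b => noP_add hp) ?_ ?_
      · have := noP_int p hp 0; simpa using this
      · intro j hj
        rw [Finset.mem_erase, Finset.mem_range] at hj
        have : ((j : ℚ) + 1) = ((j + 1 : ℕ) : ℚ) := by push_cast; ring
        rw [this]
        refine noP_one_div hp (j + 1) ?_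
        intro hdv
        obtain ⟨u, hu⟩ := hdv
        have : u = 1 ∨ 2 ≤ u ∨ u = 0 := by omega
        rcases this with rfl | hu2 | rfl
        · omega
        · nlinarith [hj.2, hk, hu, hu2]
        · omega
    have hM : noP p ((m : ℕ) : ℚ) := by
      have h2 : ((m : ℕ) : ℚ) = ((m : ℤ) : ℚ) := by push_cast; ring
      rw [h2]; exact noP_int p hp _
    refine ratCongr_of_noP hp (noP_mul hp hM hnoPd) ?_
    have hcast : (((2 * k).choose k : ℕ) : ℚ) = (p : ℚ) * m := by
      rw [hm]; push_cast; ring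
    rw [hch0, hcast, hH]
    field_simp
    ring
end
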